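/- arXiv:0712.3442 — 8 statements merged into one kernel-verified Lean document; each statement's English description precedes it below -/
import Mathlib

section
/- Let X ≥ 0 be a random variable with distribution function F and tail F̄(x) = P[X > x]. Suppose there exists a nondecreasing sequence b_n → ∞ such that for every x > 0, n·F̄(b_n x) → x^{-α} as n → ∞, where α > 0. Then F̄ is regularly varying with index −α, i.e., for every s > 0, lim_{t→∞} F̄(ts)/F̄(t) = s^{-α}. -/
open MeasureTheory ProbabilityTheory Filter

/-- If `X ≥ 0` has distribution tail `F̄` and there is a nondecreasing sequence
`b_n → ∞` with `n·F̄(b_n x) → x^{-α}` for every `x > 0`, then `F̄` is regularly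
varying with index `-α`. -/
theorem stmt_0 {Ω : Type*} [MeasureSpace Ω] [IsProbabilityMeasure (ℙ : Measure Ω)]
    (X : Ω → ℝ) (hXm : Measurable X) (hX0 : ∀ ω, 0 ≤ X ω)
    (Fbar : ℝ → ℝ) (hFbar : ∀ x, Fbar x = (ℙ {ω | x < X ω}).toReal)
    (α : ℝ) (hα : 0 < α)
    (b : ℕ → ℝ) (hb_mono : Monotone b) (hb_top : Tendsto b atTop atTop)
    (hlim : ∀ x > 0, Tendsto (fun n : ℕ => (n : ℝ) * Fbar (b n * x)) atTop
      (nhds (x ^ (-α)))) :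
    ∀ s > 0, Tendsto (fun t : ℝ => Fbar (t * s) / Fbar t) atTop (nhds (s ^ (-α))) := by
  intro s hs
  -- basic properties of Fbar
  have hF_anti : Antitone Fbar := by
    intro x y hxy
    rw [hFbar, hFbar]
    exact ENNReal.toReal_mono (measure_ne_top _ _)
      (measure_mono (fun ω hω => lt_of_le_of_lt hxy hω))
  have hF_nonneg : ∀ x, 0 ≤ Fbar x := fun x => by rw [hFbar]; exact ENNReal.toReal_nonneg
  -- key limits
  have h1 : Tendsto (fun n : ℕ => (n : ℝ) * Fbar (b n)) atTop (nhds 1) := by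
    have h := hlim 1 one_pos
    simpa using h
  have hs' : Tendsto (fun n : ℕ => (n : ℝ) * Fbar (b n * s)) atTop (nhds (s ^ (-α))) :=
    hlim s hs
  have hinv : Tendsto (fun n : ℕ => ((n : ℝ))⁻¹) atTop (nhds 0) :=
    tendsto_inv_atTop_zero.comp tendsto_natCast_atTop_atTop
  have hFs0 : Tendsto (fun n : ℕ => Fbar (b n * s)) atTop (nhds 0) := by
    have h := hs'.mul hinv
    rw [mul_zero] at h
    refine Tendsto.congr' ?_ h
    filter_upwards [eventually_ge_atTop 1] with n hn
    have hn' : ((n : ℝ)) ≠ 0 := by positivity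
    field_simp
  have hF0 : Tendsto (fun n : ℕ => Fbar (b n)) atTop (nhds 0) := by
    have h := h1.mul hinv
    rw [mul_zero] at h
    refine Tendsto.congr' ?_ h
    filter_upwards [eventually_ge_atTop 1] with n hn
    have hn' : ((n : ℝ)) ≠ 0 := by positivity
    field_simp
  -- shifted limits
  have hAnum : Tendsto (fun n : ℕ => ((n + 1 : ℕ) : ℝ) * Fbar (b (n + 1) * s)) atTop
      (nhds (s ^ (-α))) := hs'.comp (tendsto_add_atTop_nat 1)
  have hBden : Tendsto (fun n : ℕ => ((n + 1 : ℕ) : ℝ) * Fbar (b (n + 1))) atTop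
      (nhds 1) := h1.comp (tendsto_add_atTop_nat 1)
  have hAden : Tendsto (fun n : ℕ => ((n + 1 : ℕ) : ℝ) * Fbar (b n)) atTop (nhds 1) := by
    have h := h1.add hF0
    rw [add_zero] at h
    exact h.congr (fun n => by push_cast; ring)
  have hBnum : Tendsto (fun n : ℕ => ((n + 1 : ℕ) : ℝ) * Fbar (b n * s)) atTop
      (nhds (s ^ (-α))) := by
    have h := hs'.add hFs0
    rw [add_zero] at h
    exact h.congr (fun n => by push_cast; ring)
  have hA' : Tendsto (fun n : ℕ => Fbar (b (n + 1) * s) / Fbar (b n)) atTop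
      (nhds (s ^ (-α))) := by
    have hA := hAnum.div hAden one_ne_zero
    rw [div_one] at hA
    refine hA.congr (fun n => ?_)
    exact mul_div_mul_left _ _ (by positivity)
  have hB' : Tendsto (fun n : ℕ => Fbar (b n * s) / Fbar (b (n + 1))) atTop
      (nhds (s ^ (-α))) := by
    have hB := hBnum.div hBden one_ne_zero
    rw [div_one] at hB
    refine hB.congr (fun n => ?_)
    exact mul_div_mul_left _ _ (by positivity)
  -- eventual positivity of Fbar (b n)
  have hpos : ∀ᶠ n : ℕ in atTop, 0 < Fbar (b n) := by
    have h := h1.eventually (eventually_gt_nhds (by norm_num : (0 : ℝ) < 1))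
    filter_upwards [h] with n hn
    rcases (hF_nonneg (b n)).lt_or_eq with h' | h'
    · exact h'
    · exfalso; rw [← h', mul_zero] at hn; exact lt_irrefl _ hn
  obtain ⟨n0, hn0⟩ := eventually_atTop.mp hpos
  -- the index function N
  set N : ℝ → ℕ := fun t => sSup {n | b n ≤ t} with hNdef
  have hbdd : ∀ t : ℝ, BddAbove {n | b n ≤ t} := by
    intro t
    obtain ⟨M, hM⟩ := eventually_atTop.mp (hb_top.eventually_gt_atTop t)
    refine ⟨M, fun n hn => ?_⟩
    by_contra h
    push_neg at h
    exact absurd hn (not_le.mpr (hM n h.le))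
  have hN_ge : ∀ (m : ℕ) (t : ℝ), b m ≤ t → m ≤ N t := fun m t h => le_csSup (hbdd t) h
  have hN_mem : ∀ t : ℝ, b 0 ≤ t → b (N t) ≤ t := fun t ht =>
    Nat.sSup_mem ⟨0, ht⟩ (hbdd t)
  have hN_succ : ∀ t : ℝ, t < b (N t + 1) := by
    intro t
    by_contra h
    push_neg at h
    have := hN_ge (N t + 1) t h
    omega
  have hN_top : Tendsto N atTop atTop := by
    refine tendsto_atTop.mpr (fun m => ?_)
    filter_upwards [eventually_ge_atTop (b m)] with t ht
    exact hN_ge m t ht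
  -- squeeze
  refine tendsto_of_tendsto_of_tendsto_of_le_of_le' (hA'.comp hN_top) (hB'.comp hN_top) ?_ ?_
  · filter_upwards [eventually_ge_atTop (b (n0 + 1)), eventually_ge_atTop (b 0)]
      with t ht ht0
    have hn : n0 + 1 ≤ N t := hN_ge _ t ht
    have h1p : 0 < Fbar (b (N t + 1)) := hn0 _ (by omega)
    have htp : 0 < Fbar t := lt_of_lt_of_le h1p (hF_anti (hN_succ t).le)
    simp only [Function.comp]
    exact div_le_div₀ (hF_nonneg _)
      (hF_anti (mul_le_mul_of_nonneg_right (hN_succ t).le hs.le)) htp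
      (hF_anti (hN_mem t ht0))
  · filter_upwards [eventually_ge_atTop (b (n0 + 1)), eventually_ge_atTop (b 0)]
      with t ht ht0
    have hn : n0 + 1 ≤ N t := hN_ge _ t ht
    have h1p : 0 < Fbar (b (N t + 1)) := hn0 _ (by omega)
    simp only [Function.comp]
    exact div_le_div₀ (hF_nonneg _)
      (hF_anti (mul_le_mul_of_nonneg_right (hN_mem t ht0) hs.le)) h1p
      (hF_anti (hN_succ t).le)
end

section
/- Let C ⊆ ℝ^d be a cone (i.e., x ∈ C and t > 0 imply tx ∈ C) containing the vector 𝟏 = (1,…,1). Let h : C → (0,∞) be measurable and suppose there is a function λ : C → (0,∞) such that for every x ∈ C, h(tx)/h(t𝟏) → λ(x) as t → ∞. Then there exists ρ ∈ ℝ such that λ(sx) = s^ρ λ(x) for all s > 0 and all x ∈ C; in particular the exponent ρ does not depend on x. -/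
open Filter MeasureTheory Pointwise

open Filter MeasureTheory Pointwise

lemma aux_cauchy (φ : ℝ → ℝ) (hφ : Measurable φ)
    (hadd : ∀ u v : ℝ, φ (u + v) = φ u + φ v) : ∀ u : ℝ, φ u = u * φ 1 := by
  set f : ℝ →+ ℝ := AddMonoidHom.mk' φ hadd with hf
  -- Step 1: bounded on a set of positive measure
  obtain ⟨n, hn⟩ : ∃ n : ℕ, 0 < volume ({x : ℝ | |φ x| ≤ n} ∩ Set.Icc 0 1) := by
    by_contra hcon
    push_neg at hcon
    have h0 : ∀ n : ℕ, volume ({x : ℝ | |φ x| ≤ n} ∩ Set.Icc 0 1) = 0 :=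
      fun n => le_antisymm (hcon n) zero_le
    have hU : (⋃ n : ℕ, {x : ℝ | |φ x| ≤ n} ∩ Set.Icc 0 1) = Set.Icc 0 1 := by
      ext x
      simp only [Set.mem_iUnion, Set.mem_inter_iff, Set.mem_setOf_eq]
      constructor
      · rintro ⟨n, _, hx⟩; exact hx
      · intro hx
        obtain ⟨n, hn⟩ := exists_nat_ge (|φ x|)
        exact ⟨n, hn, hx⟩
    have := measure_iUnion_null h0
    rw [hU] at this
    simp [Real.volume_Icc] at this
  set A : Set ℝ := {x : ℝ | |φ x| ≤ n} ∩ Set.Icc 0 1 with hA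
  have hAmeas : MeasurableSet A :=
    (measurableSet_le hφ.abs measurable_const).inter measurableSet_Icc
  have hsub : A - A ∈ nhds (0 : ℝ) :=
    MeasureTheory.Measure.sub_mem_nhds_zero_of_addHaar_pos volume A hAmeas hn
  obtain ⟨δ, hδpos, hδ⟩ := Metric.mem_nhds_iff.1 hsub
  -- |φ x| ≤ 2n near 0
  have hbdd : ∀ x : ℝ, |x| < δ → |φ x| ≤ 2 * n := by
    intro x hx
    have hxmem : x ∈ A - A := hδ (by simpa [Real.dist_eq] using hx)
    obtain ⟨a, ha, b, hb, rfl⟩ := hxmem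
    have : φ (a - b) = φ a - φ b := map_sub f a b
    rw [this]
    calc |φ a - φ b| ≤ |φ a| + |φ b| := abs_sub _ _
      _ ≤ n + n := add_le_add ha.1 hb.1
      _ = 2 * n := by ring
  -- continuity at 0
  have hcont0 : ContinuousAt φ 0 := by
    have hφ0 : φ 0 = 0 := map_zero f
    rw [ContinuousAt, hφ0, Metric.tendsto_nhds_nhds]
    intro ε hε
    obtain ⟨k, hk⟩ := exists_nat_gt (2 * n / ε)
    refine ⟨δ / (k + 1), by positivity, fun {x} hx => ?_⟩
    simp only [Real.dist_eq, sub_zero] at hx ⊢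
    have hkx : |((k : ℝ) + 1) * x| < δ := by
      rw [abs_mul, abs_of_pos (by positivity : (0:ℝ) < (k:ℝ)+1)]
      calc ((k:ℝ)+1) * |x| < ((k:ℝ)+1) * (δ / (k+1)) := by
            apply mul_lt_mul_of_pos_left hx (by positivity)
        _ = δ := by field_simp
    have hmul : φ (((k : ℝ) + 1) * x) = ((k : ℝ) + 1) * φ x := by
      have := map_nsmul f (k + 1) x
      simpa [nsmul_eq_mul, add_comm, hf] using this
    have : |φ x| ≤ 2 * n / ((k : ℝ) + 1) := by
      have h1 : |φ (((k : ℝ) + 1) * x)| ≤ 2 * n := hbdd _ hkx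
      rw [hmul, abs_mul, abs_of_pos (by positivity : (0:ℝ) < (k:ℝ)+1)] at h1
      rw [le_div_iff₀ (by positivity)]
      linarith [h1]
    calc |φ x| ≤ 2 * n / ((k : ℝ) + 1) := this
      _ < ε := by
          rw [div_lt_iff₀ (by positivity)]
          have h2 : 2 * (n:ℝ) / ε < k := hk
          rw [div_lt_iff₀ hε] at h2
          nlinarith
  -- continuity everywhere
  have hcont : Continuous φ := by
    have : Continuous f := continuous_of_continuousAt_zero f hcont0
    exact this
  -- rational linearity
  have hrat : ∀ q : ℚ, φ (q : ℝ) = (q : ℝ) * φ 1 := by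
    intro q
    have := map_ratCast_smul f ℚ ℚ q (1 : ℝ)
    simpa [Rat.smul_def, hf] using this
  -- conclude by density
  have : φ = fun x => x * φ 1 := by
    apply Rat.denseRange_cast.equalizer hcont (by continuity)
    funext q
    simpa using hrat q
  intro u; rw [this]; ring


/-- If `h` is measurable and regularly varying on a cone `C ∋ 𝟏` of `ℝ^d` with
positive limit function `λ`, i.e. `h(tx)/h(t𝟏) → λ(x) > 0` for all `x ∈ C`, then
there is a single exponent `ρ ∈ ℝ` such that `λ(sx) = s^ρ λ(x)` for all `s > 0`,
`x ∈ C`. -/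
theorem stmt_3 {d : ℕ} (C : Set (Fin d → ℝ))
    (hcone : ∀ x ∈ C, ∀ t : ℝ, 0 < t → t • x ∈ C)
    (hone : (fun _ : Fin d => (1 : ℝ)) ∈ C)
    (h : (Fin d → ℝ) → ℝ) (hmeas : Measurable h) (hpos : ∀ x ∈ C, 0 < h x)
    (lam : (Fin d → ℝ) → ℝ) (hlampos : ∀ x ∈ C, 0 < lam x)
    (hlim : ∀ x ∈ C, Tendsto
      (fun t : ℝ => h (t • x) / h (t • (fun _ : Fin d => (1 : ℝ)))) atTop
      (nhds (lam x))) :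
    ∃ ρ : ℝ, ∀ s : ℝ, 0 < s → ∀ x ∈ C, lam (s • x) = s ^ ρ * lam x := by
  set o : Fin d → ℝ := fun _ : Fin d => (1 : ℝ) with ho
  -- multiplicativity
  have hmul : ∀ s : ℝ, 0 < s → ∀ x ∈ C, lam (s • x) = lam (s • o) * lam x := by
    intro s hs x hx
    have h1 : Tendsto (fun t : ℝ => h (t • (s • x)) / h (t • o)) atTop
        (nhds (lam (s • x))) := hlim _ (hcone x hx s hs)
    have hcomp : Tendsto (fun t : ℝ => h ((t * s) • x) / h ((t * s) • o)) atTop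
        (nhds (lam x)) := by
      have hts : Tendsto (fun t : ℝ => t * s) atTop atTop :=
        tendsto_id.atTop_mul_const hs
      exact (hlim x hx).comp hts
    have h2 : Tendsto (fun t : ℝ =>
        (h ((t * s) • x) / h ((t * s) • o)) * (h (t • (s • o)) / h (t • o))) atTop
        (nhds (lam x * lam (s • o))) :=
      hcomp.mul (hlim (s • o) (hcone _ hone s hs))
    have heq : ∀ᶠ t : ℝ in atTop,
        (h ((t * s) • x) / h ((t * s) • o)) * (h (t • (s • o)) / h (t • o)) =
        h (t • (s • x)) / h (t • o) := by
      filter_upwards [eventually_gt_atTop (0 : ℝ)] with t ht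
      have hts : (0 : ℝ) < t * s := mul_pos ht hs
      have hb : h ((t * s) • o) ≠ 0 := ne_of_gt (hpos _ (hcone _ hone _ hts))
      have hc : h (t • o) ≠ 0 := ne_of_gt (hpos _ (hcone _ hone _ ht))
      rw [smul_smul, smul_smul]
      field_simp
    have h2' : Tendsto (fun t : ℝ => h (t • (s • x)) / h (t • o)) atTop
        (nhds (lam x * lam (s • o))) := Tendsto.congr' heq h2
    rw [tendsto_nhds_unique h1 h2', mul_comm]
  -- the function G(u) = lam(exp u • 𝟏) is measurable
  have hGmeas : Measurable (fun u : ℝ => lam (Real.exp u • o)) := by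
    apply measurable_of_tendsto_metrizable
      (f := fun (n : ℕ) (u : ℝ) => h (((n : ℝ) * Real.exp u) • o) / h ((n : ℝ) • o))
    · intro n
      have hc : Continuous fun u : ℝ => ((n : ℝ) * Real.exp u) • o :=
        (continuous_const.mul Real.continuous_exp).smul continuous_const
      exact (hmeas.comp hc.measurable).div measurable_const
    · rw [tendsto_pi_nhds]
      intro u
      have := (hlim (Real.exp u • o) (hcone _ hone _ (Real.exp_pos u))).comp
        (tendsto_natCast_atTop_atTop (R := ℝ))
      simpa [Function.comp_def, smul_smul] using this
  set φ : ℝ → ℝ := fun u => Real.log (lam (Real.exp u • o)) with hφdef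
  have hmemexp : ∀ u : ℝ, Real.exp u • o ∈ C := fun u => hcone _ hone _ (Real.exp_pos u)
  have hφmeas : Measurable φ := Real.measurable_log.comp hGmeas
  have hφadd : ∀ u v : ℝ, φ (u + v) = φ u + φ v := by
    intro u v
    have h1 : Real.exp (u + v) • o = Real.exp u • (Real.exp v • o) := by
      rw [smul_smul, Real.exp_add]
    have h2 : lam (Real.exp u • (Real.exp v • o)) =
        lam (Real.exp u • o) * lam (Real.exp v • o) :=
      hmul _ (Real.exp_pos u) _ (hmemexp v)
    simp only [hφdef, h1, h2]
    exact Real.log_mul (ne_of_gt (hlampos _ (hmemexp u))) (ne_of_gt (hlampos _ (hmemexp v)))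
  have hlin := aux_cauchy φ hφmeas hφadd
  refine ⟨φ 1, fun s hs x hx => ?_⟩
  have hso : lam (s • o) = s ^ (φ 1) := by
    have h1 : φ (Real.log s) = Real.log s * φ 1 := hlin (Real.log s)
    rw [hφdef] at h1
    simp only [Real.exp_log hs] at h1
    rw [← Real.exp_log (hlampos _ (hcone _ hone s hs)), h1, Real.rpow_def_of_pos hs]
  rw [hmul s hs x hx, hso]
end

section
/- Let a : (0,∞) → (0,∞) and b : (0,∞) → ℝ be measurable and suppose there is a function ψ : (0,∞) → ℝ, not identically zero and not constant, such that for every x > 0, (b(tx) − b(t))/a(t) → ψ(x) as t → ∞. Then there exist ρ ∈ ℝ and k ≠ 0 such that ψ(x) = k·(x^ρ − 1)/ρ for all x > 0 if ρ ≠ 0, and ψ(x) = k·log x for all x > 0 if ρ = 0. -/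
open Filter

open MeasureTheory Set Pointwise

lemma cauchy_additive_measurable (f : ℝ → ℝ) (hf : Measurable f)
    (hadd : ∀ x y : ℝ, f (x + y) = f x + f y) : ∀ x : ℝ, f x = f 1 * x := by
  set F : ℝ →+ ℝ := AddMonoidHom.mk' f hadd with hF
  have hFf : ∀ x, F x = f x := fun x => rfl
  have hq : ∀ (q : ℚ) (x : ℝ), f ((q : ℝ) * x) = (q : ℝ) * f x := by
    intro q x
    have := map_ratCast_smul F ℝ ℝ q x
    simpa [Rat.smul_def, hFf] using this
  obtain ⟨k, hk⟩ : ∃ k : ℕ, 0 < volume {x : ℝ | x ∈ Icc (0:ℝ) 1 ∧ |f x| ≤ k} := by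
    by_contra h
    push_neg at h
    simp only [le_zero_iff] at h
    have hU : (⋃ k : ℕ, {x : ℝ | x ∈ Icc (0:ℝ) 1 ∧ |f x| ≤ k}) = Icc (0:ℝ) 1 := by
      ext x
      simp only [mem_iUnion, mem_setOf_eq]
      exact ⟨fun ⟨k, hk, _⟩ => hk, fun hx => (exists_nat_ge |f x|).imp fun k hk => ⟨hx, hk⟩⟩
    have h0 := measure_iUnion_null h
    rw [hU] at h0
    simp [Real.volume_Icc] at h0
  set E : Set ℝ := {x : ℝ | x ∈ Icc (0:ℝ) 1 ∧ |f x| ≤ k} with hE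
  have hEm : MeasurableSet E :=
    MeasurableSet.inter measurableSet_Icc (measurableSet_le hf.abs measurable_const)
  have hst := MeasureTheory.Measure.sub_mem_nhds_zero_of_addHaar_pos volume E hEm hk
  obtain ⟨δ, hδ, hδsub⟩ := Metric.mem_nhds_iff.mp hst
  have hbd : ∀ x : ℝ, |x| < δ → |f x| ≤ 2 * k := by
    intro x hx
    have hmem : x ∈ E - E := hδsub (by simpa [Real.norm_eq_abs] using hx)
    obtain ⟨u, hu, v, hv, huv⟩ := hmem
    have hx' : f x = f u - f v := by
      have h1 : f ((u - v) + v) = f (u - v) + f v := hadd _ _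
      rw [sub_add_cancel] at h1
      rw [← huv]; linarith
    rw [hx']
    calc |f u - f v| ≤ |f u| + |f v| := abs_sub _ _
      _ ≤ k + k := add_le_add hu.2 hv.2
      _ = 2 * k := by ring
  -- h := f x - f 1 * x vanishes on rationals and is bounded everywhere
  set g : ℝ → ℝ := fun x => f x - f 1 * x with hg
  have hgadd : ∀ x y, g (x + y) = g x + g y := by
    intro x y; simp only [hg, hadd]; ring
  have hgq : ∀ q : ℚ, g (q : ℝ) = 0 := by
    intro q
    have := hq q 1
    simp only [mul_one] at this
    simp [hg, this, mul_comm]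
  have hgbd : ∀ x : ℝ, |g x| ≤ 2 * k + |f 1| * δ := by
    have hloc : ∀ x : ℝ, |x| < δ → |g x| ≤ 2 * k + |f 1| * δ := by
      intro x hx
      have : |g x| ≤ |f x| + |f 1| * |x| := by
        simp only [hg]
        calc |f x - f 1 * x| ≤ |f x| + |f 1 * x| := abs_sub _ _
          _ = |f x| + |f 1| * |x| := by rw [abs_mul]
      refine this.trans (add_le_add (hbd x hx) ?_)
      exact mul_le_mul_of_nonneg_left hx.le (abs_nonneg _)
    intro x
    obtain ⟨q, hq1⟩ := exists_rat_near x hδ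
    have : g x = g (x - q) := by
      have := hgadd (x - q) (q : ℝ)
      rw [sub_add_cancel] at this
      rw [this, hgq]; ring
    rw [this]
    exact hloc _ hq1
  -- hence g = 0
  have hg0 : ∀ x : ℝ, g x = 0 := by
    intro x
    by_contra hne
    obtain ⟨n, hn⟩ := exists_nat_gt ((2 * k + |f 1| * δ) / |g x|)
    have hgx : 0 < |g x| := abs_pos.mpr hne
    have hmul : g ((n : ℝ) * x) = n * g x := by
      have h1 := hq (n : ℚ) x
      push_cast at h1
      simp only [hg, h1]; ring
    have hb := hgbd ((n : ℝ) * x)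
    rw [hmul, abs_mul, Nat.abs_cast] at hb
    have hdiv : (2 * k + |f 1| * δ) / |g x| < n := hn
    have hM0 : (0:ℝ) ≤ 2 * k + |f 1| * δ := le_trans (abs_nonneg _) (hgbd 0)
    rw [div_lt_iff₀ hgx] at hdiv
    linarith
  intro x
  have := hg0 x
  simp only [hg] at this
  linarith

/-- Representation of limits in extended regular variation: if `a > 0`, `b` are
measurable with `(b(tx) - b(t))/a(t) → ψ(x)` for all `x > 0` where `ψ` is not
identically zero and not constant on `(0,∞)`, then there are `ρ ∈ ℝ` and `k ≠ 0`
with `ψ(x) = k (x^ρ - 1)/ρ` for all `x > 0` (where for `ρ = 0` the formula is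
interpreted as `ψ(x) = k log x`). -/
theorem stmt_8 (a : ℝ → ℝ) (b : ℝ → ℝ) (ha_meas : Measurable a)
    (hb_meas : Measurable b) (ha_pos : ∀ t : ℝ, 0 < t → 0 < a t)
    (ψ : ℝ → ℝ)
    (hψ_ne : ∃ x : ℝ, 0 < x ∧ ψ x ≠ 0)
    (hψ_nc : ∃ x : ℝ, 0 < x ∧ ∃ y : ℝ, 0 < y ∧ ψ x ≠ ψ y)
    (hlim : ∀ x : ℝ, 0 < x →
      Tendsto (fun t : ℝ => (b (t * x) - b t) / a t) atTop (nhds (ψ x))) :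
    ∃ ρ : ℝ, ∃ k : ℝ, k ≠ 0 ∧
      ((ρ ≠ 0 → ∀ x : ℝ, 0 < x → ψ x = k * ((x ^ ρ - 1) / ρ)) ∧
       (ρ = 0 → ∀ x : ℝ, 0 < x → ψ x = k * Real.log x)) := by
  obtain ⟨y₀, hy₀, hψy₀⟩ := hψ_ne
  -- composition of the limit along t ↦ t * x
  have hcomp : ∀ x : ℝ, 0 < x → ∀ y : ℝ, 0 < y →
      Tendsto (fun t : ℝ => (b (t * x * y) - b (t * x)) / a (t * x)) atTop (nhds (ψ y)) := by
    intro x hx y hy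
    exact (hlim y hy).comp (tendsto_id.atTop_mul_const hx)
  set g : ℝ → ℝ := fun x => (ψ (x * y₀) - ψ x) / ψ y₀ with hgdef
  -- Step A : a (t x) / a t → g x
  have hA : ∀ x : ℝ, 0 < x →
      Tendsto (fun t : ℝ => a (t * x) / a t) atTop (nhds (g x)) := by
    intro x hx
    have hN : Tendsto (fun t : ℝ => (b (t * x * y₀) - b (t * x)) / a t) atTop
        (nhds (ψ (x * y₀) - ψ x)) := by
      have h1 := hlim (x * y₀) (mul_pos hx hy₀)
      have h2 := hlim x hx
      have := h1.sub h2
      refine this.congr fun t => ?_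
      rw [div_sub_div_same, mul_assoc]
      ring_nf
    have hD := hcomp x hx y₀ hy₀
    have hne : ∀ᶠ t in (atTop : Filter ℝ), (b (t * x * y₀) - b (t * x)) / a (t * x) ≠ 0 :=
      hD.eventually_ne hψy₀
    have hratio : Tendsto (fun t : ℝ =>
        ((b (t * x * y₀) - b (t * x)) / a t) / ((b (t * x * y₀) - b (t * x)) / a (t * x)))
        atTop (nhds ((ψ (x * y₀) - ψ x) / ψ y₀)) := hN.div hD hψy₀
    refine Tendsto.congr' ?_ hratio
    filter_upwards [hne, eventually_gt_atTop (0:ℝ)] with t h0 ht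
    have hat : a t ≠ 0 := (ha_pos t ht).ne'
    have hatx : a (t * x) ≠ 0 := (ha_pos _ (mul_pos ht hx)).ne'
    have hbne : b (t * x * y₀) - b (t * x) ≠ 0 := by
      intro h; rw [h] at h0; simp at h0
    field_simp
  -- Step B : functional equation
  have hB : ∀ x : ℝ, 0 < x → ∀ y : ℝ, 0 < y → ψ (x * y) = ψ x + g x * ψ y := by
    intro x hx y hy
    have h1 := hlim x hx
    have h2 := hcomp x hx y hy
    have h3 := hA x hx
    have hsum : Tendsto (fun t : ℝ => (b (t * x) - b t) / a t +
        ((b (t * x * y) - b (t * x)) / a (t * x)) * (a (t * x) / a t)) atTop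
        (nhds (ψ x + ψ y * g x)) := h1.add (h2.mul h3)
    have heq : Tendsto (fun t : ℝ => (b (t * (x * y)) - b t) / a t) atTop
        (nhds (ψ x + ψ y * g x)) := by
      refine Tendsto.congr' ?_ hsum
      filter_upwards [eventually_gt_atTop (0:ℝ)] with t ht
      have hat : a t ≠ 0 := (ha_pos t ht).ne'
      have hatx : a (t * x) ≠ 0 := (ha_pos _ (mul_pos ht hx)).ne'
      rw [← mul_assoc]
      field_simp
      ring
    have := tendsto_nhds_unique (hlim (x * y) (mul_pos hx hy)) heq
    rw [this]; ring
  -- g is multiplicative and positive on (0, ∞)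
  have hg1 : g 1 = 1 := by
    have h1 : Tendsto (fun t : ℝ => a (t * 1) / a t) atTop (nhds 1) := by
      refine Tendsto.congr' ?_ tendsto_const_nhds
      filter_upwards [eventually_gt_atTop (0:ℝ)] with t ht
      rw [mul_one, div_self (ha_pos t ht).ne']
    exact (tendsto_nhds_unique h1 (hA 1 one_pos)).symm
  have hgmul : ∀ x : ℝ, 0 < x → ∀ y : ℝ, 0 < y → g (x * y) = g x * g y := by
    intro x hx y hy
    have h1 : Tendsto (fun t : ℝ => (a (t * x * y) / a (t * x)) * (a (t * x) / a t)) atTop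
        (nhds (g y * g x)) := ((hA y hy).comp (tendsto_id.atTop_mul_const hx)).mul (hA x hx)
    have h2 : Tendsto (fun t : ℝ => a (t * (x * y)) / a t) atTop (nhds (g y * g x)) := by
      refine Tendsto.congr' ?_ h1
      filter_upwards [eventually_gt_atTop (0:ℝ)] with t ht
      have hat : a t ≠ 0 := (ha_pos t ht).ne'
      have hatx : a (t * x) ≠ 0 := (ha_pos _ (mul_pos ht hx)).ne'
      rw [← mul_assoc]
      field_simp
    rw [tendsto_nhds_unique (hA (x * y) (mul_pos hx hy)) h2]
    ring
  have hgpos : ∀ x : ℝ, 0 < x → 0 < g x := by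
    intro x hx
    have hge : 0 ≤ g x := by
      refine ge_of_tendsto (hA x hx) ?_
      filter_upwards [eventually_gt_atTop (0:ℝ)] with t ht
      exact le_of_lt (div_pos (ha_pos _ (mul_pos ht hx)) (ha_pos t ht))
    rcases hge.lt_or_eq with h | h
    · exact h
    · exfalso
      have := hgmul x hx x⁻¹ (inv_pos.mpr hx)
      rw [mul_inv_cancel₀ hx.ne', hg1, ← h] at this
      simp at this
  -- G := log ∘ g ∘ exp is measurable and additive
  set G : ℝ → ℝ := fun u => Real.log (g (Real.exp u)) with hGdef
  have hGmeas : Measurable G := by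
    have hlim' : ∀ u : ℝ, Tendsto (fun n : ℕ => a ((n : ℝ) * Real.exp u) / a (n : ℝ)) atTop
        (nhds (g (Real.exp u))) := fun u =>
      (hA (Real.exp u) (Real.exp_pos u)).comp tendsto_natCast_atTop_atTop
    have hmeas : Measurable (fun u : ℝ => g (Real.exp u)) := by
      refine measurable_of_tendsto_metrizable
        (f := fun n : ℕ => fun u : ℝ => a ((n : ℝ) * Real.exp u) / a (n : ℝ)) ?_ ?_
      · intro n
        exact (ha_meas.comp (Real.measurable_exp.const_mul _)).div measurable_const
      · rw [tendsto_pi_nhds]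
        exact hlim'
    exact Real.measurable_log.comp hmeas
  have hGadd : ∀ u v : ℝ, G (u + v) = G u + G v := by
    intro u v
    simp only [hGdef, Real.exp_add]
    rw [hgmul _ (Real.exp_pos u) _ (Real.exp_pos v),
      Real.log_mul (hgpos _ (Real.exp_pos u)).ne' (hgpos _ (Real.exp_pos v)).ne']
  set ρ : ℝ := G 1 with hρdef
  have hG : ∀ u : ℝ, G u = ρ * u := cauchy_additive_measurable G hGmeas hGadd
  have hgx : ∀ x : ℝ, 0 < x → g x = x ^ ρ := by
    intro x hx
    have h1 : Real.log (g x) = ρ * Real.log x := by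
      simpa only [hGdef, Real.exp_log hx] using hG (Real.log x)
    rw [Real.rpow_def_of_pos hx, ← Real.exp_log (hgpos x hx), h1, mul_comm]
  by_cases hρ : ρ = 0
  · -- ρ = 0 : logarithmic case
    have hgone : ∀ x : ℝ, 0 < x → g x = 1 := by
      intro x hx; rw [hgx x hx, hρ, Real.rpow_zero]
    have hΨadd : ∀ u v : ℝ, ψ (Real.exp (u + v)) = ψ (Real.exp u) + ψ (Real.exp v) := by
      intro u v
      rw [Real.exp_add, hB _ (Real.exp_pos u) _ (Real.exp_pos v),
        hgone _ (Real.exp_pos u), one_mul]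
    have hΨmeas : Measurable (fun u : ℝ => ψ (Real.exp u)) := by
      refine measurable_of_tendsto_metrizable
        (f := fun n : ℕ => fun u : ℝ => (b ((n : ℝ) * Real.exp u) - b (n : ℝ)) / a (n : ℝ)) ?_ ?_
      · intro n
        exact ((hb_meas.comp (Real.measurable_exp.const_mul _)).sub measurable_const).div
          measurable_const
      · rw [tendsto_pi_nhds]
        intro u
        exact (hlim (Real.exp u) (Real.exp_pos u)).comp tendsto_natCast_atTop_atTop
    have hΨ := cauchy_additive_measurable _ hΨmeas hΨadd
    have hk : ψ (Real.exp 1) ≠ 0 := by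
      intro h
      apply hψy₀
      have := hΨ (Real.log y₀)
      rw [Real.exp_log hy₀, h, zero_mul] at this
      exact this
    refine ⟨0, ψ (Real.exp 1), hk, fun h => absurd rfl h, fun _ x hx => ?_⟩
    have := hΨ (Real.log x)
    rwa [Real.exp_log hx] at this
  · -- ρ ≠ 0 : power case
    have hsym : ∀ x : ℝ, 0 < x → ∀ y : ℝ, 0 < y →
        ψ x * (g y - 1) = ψ y * (g x - 1) := by
      intro x hx y hy
      have h1 := hB x hx y hy
      have h2 := hB y hy x hx
      rw [mul_comm y x] at h2
      nlinarith [h1, h2]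
    have hge : g (Real.exp 1) = Real.exp ρ := by
      rw [hgx _ (Real.exp_pos 1), Real.exp_one_rpow]
    have hge1 : g (Real.exp 1) - 1 ≠ 0 := by
      rw [hge, sub_ne_zero]
      intro h
      exact hρ (Real.exp_injective (by rw [h, Real.exp_zero]))
    set c : ℝ := ψ (Real.exp 1) / (g (Real.exp 1) - 1) with hcdef
    have hψx : ∀ x : ℝ, 0 < x → ψ x = c * (g x - 1) := by
      intro x hx
      have hs := hsym x hx (Real.exp 1) (Real.exp_pos 1)
      rw [hcdef]
      field_simp
      linarith
    have hc : c ≠ 0 := by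
      intro h
      apply hψy₀
      rw [hψx y₀ hy₀, h, zero_mul]
    refine ⟨ρ, c * ρ, mul_ne_zero hc hρ, fun _ x hx => ?_, fun h => absurd h hρ⟩
    rw [hψx x hx, hgx x hx]
    field_simp
end

section
/- Let b : (0,∞) → ℝ be nondecreasing with b(t) → sup b as t → ∞, let a : (0,∞) → (0,∞), and let ρ ∈ ℝ. Suppose that for every x > 0, (b(tx) − b(t))/a(t) → ψ(x) as t → ∞, where ψ(x) = (x^ρ − 1)/ρ for ρ ≠ 0 and ψ(x) = log x for ρ = 0. Then for every y with 1 + ρy > 0, b^←(b(t) + y·a(t))/t → (1 + ρy)^{1/ρ} as t → ∞ (interpreted as e^y when ρ = 0), where b^←(x) = inf{s : b(s) ≥ x} is the left-continuous inverse of b. -/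
open Filter

/-- Inverted form of extended regular variation: if `b` is nondecreasing with
`b(t) → sup b`, and `(b(tx) - b(t))/a(t) → ψ(x) = (x^ρ - 1)/ρ` (`= log x` when
`ρ = 0`) for all `x > 0`, then for every `y` with `1 + ρ y > 0`,
`b^←(b(t) + y a(t))/t → (1 + ρ y)^{1/ρ}` (`= e^y` when `ρ = 0`), where
`b^←(x) = inf{s : b(s) ≥ x}`. -/
theorem stmt_9 (b : ℝ → ℝ) (a : ℝ → ℝ) (ρ : ℝ)
    (hb_mono : Monotone b)
    (hb_sup : Tendsto (fun t : ℝ => (b t : EReal)) atTop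
      (nhds (⨆ t : ℝ, (b t : EReal))))
    (ha_pos : ∀ t : ℝ, 0 < t → 0 < a t)
    (hlim : ∀ x : ℝ, 0 < x →
      Tendsto (fun t : ℝ => (b (t * x) - b t) / a t) atTop
        (nhds (if ρ = 0 then Real.log x else (x ^ ρ - 1) / ρ))) :
    ∀ y : ℝ, 0 < 1 + ρ * y →
      Tendsto (fun t : ℝ => sInf {s : ℝ | b t + y * a t ≤ b s} / t) atTop
        (nhds (if ρ = 0 then Real.exp y else (1 + ρ * y) ^ (1 / ρ))) := by
  intro y hy
  set ψ : ℝ → ℝ := fun x => if ρ = 0 then Real.log x else (x ^ ρ - 1) / ρ with hψdef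
  set c : ℝ := if ρ = 0 then Real.exp y else (1 + ρ * y) ^ (1 / ρ) with hcdef
  have hcpos : 0 < c := by
    rw [hcdef]; split
    · exact Real.exp_pos y
    · exact Real.rpow_pos_of_pos hy _
  have hψc : ψ c = y := by
    rw [hψdef, hcdef]
    by_cases h0 : ρ = 0
    · simp [h0]
    · simp only [h0, if_false]
      rw [← Real.rpow_mul hy.le, one_div_mul_cancel h0, Real.rpow_one]
      field_simp
      ring
  have hψmono : ∀ u v : ℝ, 0 < u → u < v → ψ u < ψ v := by
    intro u v hu huv
    by_cases h0 : ρ = 0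
    · simpa [hψdef, h0] using Real.log_lt_log hu huv
    · simp only [hψdef, h0, if_false]
      rcases lt_or_gt_of_ne h0 with hneg | hpos
      · rw [div_lt_div_right_of_neg hneg]
        have := Real.rpow_lt_rpow_of_neg hu huv hneg
        linarith
      · rw [div_lt_div_iff_of_pos_right hpos]
        have := Real.rpow_lt_rpow hu.le huv hpos
        linarith
  rw [tendsto_order]
  constructor
  · intro l hl
    set x₁ : ℝ := (max l 0 + c) / 2 with hx₁def
    have hmaxc : max l 0 < c := max_lt hl hcpos
    have hx₁pos : 0 < x₁ := by
      have := le_max_right l 0; rw [hx₁def]; linarith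
    have hlx₁ : l < x₁ := by
      have := le_max_left l 0; rw [hx₁def]; linarith
    have hx₁c : x₁ < c := by rw [hx₁def]; linarith
    have hψ1 : ψ x₁ < y := hψc ▸ hψmono x₁ c hx₁pos hx₁c
    have hψ2 : y < ψ (c + 1) := hψc ▸ hψmono c (c + 1) hcpos (lt_add_one c)
    have E1 := (hlim x₁ hx₁pos).eventually_lt_const hψ1
    have E2 := (hlim (c + 1) (by linarith)).eventually_const_lt hψ2
    filter_upwards [E1, E2, eventually_gt_atTop (0 : ℝ)] with t h1 h2 ht
    have hat := ha_pos t ht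
    have hb1 : b (t * x₁) < b t + y * a t := by
      have := (div_lt_iff₀ hat).1 h1; linarith
    have hb2 : b t + y * a t ≤ b (t * (c + 1)) := by
      have := (lt_div_iff₀ hat).1 h2; linarith
    have hlb : t * x₁ ≤ sInf {s : ℝ | b t + y * a t ≤ b s} := by
      refine le_csInf ⟨t * (c + 1), ?_⟩ ?_
      · exact hb2
      intro s hs
      by_contra hlt
      push_neg at hlt
      have := hb_mono hlt.le
      have hsmem : b t + y * a t ≤ b s := hs
      linarith
    have : x₁ ≤ sInf {s : ℝ | b t + y * a t ≤ b s} / t := by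
      rw [le_div_iff₀ ht]; linarith [mul_comm t x₁]
    linarith
  · intro u hu
    set x₂ : ℝ := (c + u) / 2 with hx₂def
    have hx₂pos : 0 < x₂ := by rw [hx₂def]; linarith
    have hcx₂ : c < x₂ := by rw [hx₂def]; linarith
    have hx₂u : x₂ < u := by rw [hx₂def]; linarith
    have hψ2 : y < ψ x₂ := hψc ▸ hψmono c x₂ hcpos hcx₂
    have hψ1 : ψ (c / 2) < y := hψc ▸ hψmono (c / 2) c (by linarith) (by linarith)
    have E1 := (hlim (c / 2) (by linarith)).eventually_lt_const hψ1
    have E2 := (hlim x₂ hx₂pos).eventually_const_lt hψ2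
    filter_upwards [E1, E2, eventually_gt_atTop (0 : ℝ)] with t h1 h2 ht
    have hat := ha_pos t ht
    have hb1 : b (t * (c / 2)) < b t + y * a t := by
      have := (div_lt_iff₀ hat).1 h1; linarith
    have hb2 : b t + y * a t ≤ b (t * x₂) := by
      have := (lt_div_iff₀ hat).1 h2; linarith
    have hbdd : BddBelow {s : ℝ | b t + y * a t ≤ b s} := by
      refine ⟨t * (c / 2), ?_⟩
      intro s hs
      by_contra hlt
      push_neg at hlt
      have := hb_mono hlt.le
      have hsmem : b t + y * a t ≤ b s := hs
      linarith
    have hub : sInf {s : ℝ | b t + y * a t ≤ b s} ≤ t * x₂ := csInf_le hbdd (show t * x₂ ∈ {s : ℝ | b t + y * a t ≤ b s} from hb2)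
    have : sInf {s : ℝ | b t + y * a t ≤ b s} / t ≤ x₂ := by
      rw [div_le_iff₀ ht]; linarith [mul_comm t x₂]
    linarith
end

section
/- Let Z = (Z^{(1)},…,Z^{(d)}) be a random vector with nonnegative components, α > 0, and let b, b⁰ : (0,∞) → (0,∞) satisfy b(t) → ∞, b⁰(t) → ∞ and b(t)/b⁰(t) → ∞. Assume: (i) for each i = 1,…,d and each x > 0, t·P[Z^{(i)} > b(t)·x] → x^{-α} as t → ∞; and (ii) for each pair 1 ≤ i < j ≤ d and each u > 0, limsup_{t→∞} t·P[Z^{(i)} > b⁰(t)·u, Z^{(j)} > b⁰(t)·u] < ∞. Then for every x = (x^{(1)},…,x^{(d)}) with all components positive, t·P[Z^{(i)} > b(t)·x^{(i)} for some i] → Σ_{i=1}^d (x^{(i)})^{-α} as t → ∞. -/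
open MeasureTheory ProbabilityTheory Filter

/-- Bonferroni-type lower bound (inclusion–exclusion inequality) in `ℝ≥0∞`. -/
lemma my_bonf {Ω : Type*} [MeasurableSpace Ω] (μ : Measure Ω) {d : ℕ}
    (A : Fin d → Set Ω) (hm : ∀ i, MeasurableSet (A i)) (s : Finset (Fin d)) :
    ∑ i ∈ s, μ (A i) ≤ μ (⋃ i ∈ s, A i)
      + ∑ i ∈ s, ∑ j ∈ s, (if i ≠ j then μ (A i ∩ A j) else 0) := by
  classical
  induction s using Finset.induction_on with
  | empty => simp
  | @insert a s ha ih =>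
    have hU : MeasurableSet (⋃ i ∈ s, A i) :=
      MeasurableSet.biUnion s.countable_toSet (fun i _ => hm i)
    have key : μ (A a) + μ (⋃ i ∈ s, A i)
        = μ (A a ∪ ⋃ i ∈ s, A i) + μ (A a ∩ ⋃ i ∈ s, A i) :=
      (measure_union_add_inter (A a) hU).symm
    have hinter : μ (A a ∩ ⋃ i ∈ s, A i) ≤ ∑ i ∈ s, μ (A a ∩ A i) := by
      rw [Set.inter_iUnion₂]
      exact measure_biUnion_finset_le s _
    have hunion : A a ∪ ⋃ i ∈ s, A i = ⋃ i ∈ insert a s, A i :=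
      (Finset.set_biUnion_insert a s A).symm
    have hpairs : ∑ j ∈ s, μ (A a ∩ A j)
        + ∑ i ∈ s, ∑ j ∈ s, (if i ≠ j then μ (A i ∩ A j) else 0)
        ≤ ∑ i ∈ insert a s, ∑ j ∈ insert a s, (if i ≠ j then μ (A i ∩ A j) else 0) := by
      rw [Finset.sum_insert ha]
      refine add_le_add ?_ ?_
      · calc ∑ j ∈ s, μ (A a ∩ A j)
            = ∑ j ∈ s, (if a ≠ j then μ (A a ∩ A j) else 0) := by
              refine Finset.sum_congr rfl fun j hj => ?_
              rw [if_pos (by rintro rfl; exact ha hj)]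
          _ ≤ ∑ j ∈ insert a s, (if a ≠ j then μ (A a ∩ A j) else 0) :=
              Finset.sum_le_sum_of_subset (Finset.subset_insert a s)
      · refine Finset.sum_le_sum fun i _ => ?_
        exact Finset.sum_le_sum_of_subset (Finset.subset_insert a s)
    calc ∑ i ∈ insert a s, μ (A i)
        = μ (A a) + ∑ i ∈ s, μ (A i) := Finset.sum_insert ha
      _ ≤ μ (A a) + (μ (⋃ i ∈ s, A i)
            + ∑ i ∈ s, ∑ j ∈ s, (if i ≠ j then μ (A i ∩ A j) else 0)) :=
          add_le_add le_rfl ih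
      _ = (μ (A a) + μ (⋃ i ∈ s, A i))
            + ∑ i ∈ s, ∑ j ∈ s, (if i ≠ j then μ (A i ∩ A j) else 0) := by ring
      _ = (μ (⋃ i ∈ insert a s, A i) + μ (A a ∩ ⋃ i ∈ s, A i))
            + ∑ i ∈ s, ∑ j ∈ s, (if i ≠ j then μ (A i ∩ A j) else 0) := by
          rw [key, hunion]
      _ ≤ (μ (⋃ i ∈ insert a s, A i) + ∑ j ∈ s, μ (A a ∩ A j))
            + ∑ i ∈ s, ∑ j ∈ s, (if i ≠ j then μ (A i ∩ A j) else 0) := by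
          gcongr
      _ = μ (⋃ i ∈ insert a s, A i) + (∑ j ∈ s, μ (A a ∩ A j)
            + ∑ i ∈ s, ∑ j ∈ s, (if i ≠ j then μ (A i ∩ A j) else 0)) := by ring
      _ ≤ μ (⋃ i ∈ insert a s, A i)
            + ∑ i ∈ insert a s, ∑ j ∈ insert a s, (if i ≠ j then μ (A i ∩ A j) else 0) :=
          add_le_add le_rfl hpairs

/-- `b` cannot grow faster than regularly varying with index `1/α`:
if `lam * M^(-α) < 1`, then eventually `b (lam*t) < M * b t`. -/
lemma my_b_growth {Ω : Type*} [MeasureSpace Ω] [IsProbabilityMeasure (ℙ : Measure Ω)]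
    (Y : Ω → ℝ) (α : ℝ) (b : ℝ → ℝ)
    (hmargY : ∀ x : ℝ, 0 < x →
      Tendsto (fun t : ℝ => t * (ℙ {ω | b t * x < Y ω}).toReal) atTop (nhds (x ^ (-α))))
    (lam M : ℝ) (hlam : 0 < lam) (hM : 0 < M) (hlt : lam * M ^ (-α) < 1) :
    ∀ᶠ t : ℝ in atTop, b (lam * t) < M * b t := by
  by_contra hcon
  rw [Filter.not_eventually] at hcon
  have h1 : Tendsto (fun t : ℝ => (lam * t) * (ℙ {ω | b (lam * t) * 1 < Y ω}).toReal)
      atTop (nhds 1) := by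
    have := (hmargY 1 one_pos).comp (tendsto_id.const_mul_atTop hlam)
    simpa [Function.comp_def, Real.one_rpow] using this
  have h2 : Tendsto (fun t : ℝ => lam * (t * (ℙ {ω | b t * M < Y ω}).toReal))
      atTop (nhds (lam * M ^ (-α))) := (hmargY M hM).const_mul lam
  set c : ℝ := (1 + lam * M ^ (-α)) / 2 with hcdef
  have hc1 : c < 1 := by rw [hcdef]; linarith
  have hc2 : lam * M ^ (-α) < c := by rw [hcdef]; linarith
  have hev1 := h1.eventually (eventually_gt_nhds hc1)
  have hev2 := h2.eventually (eventually_lt_nhds hc2)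
  obtain ⟨t, hnot, hct1, hct2, ht0⟩ :=
    (hcon.and_eventually (hev1.and (hev2.and (eventually_ge_atTop (0:ℝ))))).exists
  have hle : M * b t ≤ b (lam * t) := not_lt.mp hnot
  have hsub : {ω | b (lam * t) * 1 < Y ω} ⊆ {ω | b t * M < Y ω} := by
    intro ω hω
    simp only [Set.mem_setOf_eq] at hω ⊢
    calc b t * M = M * b t := mul_comm _ _
      _ ≤ b (lam * t) := hle
      _ = b (lam * t) * 1 := (mul_one _).symm
      _ < Y ω := hω
  have hP : (ℙ {ω | b (lam * t) * 1 < Y ω}).toReal ≤ (ℙ {ω | b t * M < Y ω}).toReal :=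
    ENNReal.toReal_mono (measure_ne_top _ _) (measure_mono hsub)
  have hkey : (lam * t) * (ℙ {ω | b (lam * t) * 1 < Y ω}).toReal
      ≤ lam * (t * (ℙ {ω | b t * M < Y ω}).toReal) := by
    rw [mul_assoc]
    exact mul_le_mul_of_nonneg_left
      (mul_le_mul_of_nonneg_left hP ht0) hlam.le
  linarith

/-- Core lemma: joint pairwise tails vanish at the `b` scale. -/
lemma my_pair_core {Ω : Type*} [MeasureSpace Ω] [IsProbabilityMeasure (ℙ : Measure Ω)]
    (Y W : Ω → ℝ) (α : ℝ) (hα : 0 < α) (b b0 : ℝ → ℝ)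
    (hb_pos : ∀ t : ℝ, 0 < t → 0 < b t) (hb0_pos : ∀ t : ℝ, 0 < t → 0 < b0 t)
    (hratio : Tendsto (fun t => b t / b0 t) atTop atTop)
    (hmargY : ∀ x : ℝ, 0 < x →
      Tendsto (fun t : ℝ => t * (ℙ {ω | b t * x < Y ω}).toReal) atTop (nhds (x ^ (-α))))
    (hp : Filter.limsup (fun t : ℝ => ENNReal.ofReal t *
        ℙ {ω | b0 t * 1 < Y ω ∧ b0 t * 1 < W ω}) atTop < ⊤)
    (m : ℝ) (hm : 0 < m) :
    Tendsto (fun t : ℝ => t * (ℙ {ω | b t * m < Y ω ∧ b t * m < W ω}).toReal)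
      atTop (nhds 0) := by
  set F : ℝ → ENNReal := fun s => ENNReal.ofReal s *
      ℙ {ω | b0 s * 1 < Y ω ∧ b0 s * 1 < W ω} with hF
  have hne : limsup F atTop ≠ ⊤ := hp.ne
  have hlt : limsup F atTop < limsup F atTop + 1 := ENNReal.lt_add_right hne one_ne_zero
  have hev : ∀ᶠ s : ℝ in atTop, F s < limsup F atTop + 1 := eventually_lt_of_limsup_lt hlt
  set c : ENNReal := limsup F atTop + 1 with hc
  have hcne : c ≠ ⊤ := ENNReal.add_ne_top.mpr ⟨hne, ENNReal.one_ne_top⟩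
  set C : ℝ := c.toReal with hCdef
  have hC0 : 0 ≤ C := ENNReal.toReal_nonneg
  have hevC : ∀ᶠ s : ℝ in atTop,
      s * (ℙ {ω | b0 s * 1 < Y ω ∧ b0 s * 1 < W ω}).toReal ≤ C := by
    filter_upwards [hev, eventually_ge_atTop (0:ℝ)] with s hs hs0
    have h2 : (F s).toReal ≤ C := ENNReal.toReal_mono hcne hs.le
    rwa [hF, ENNReal.toReal_mul, ENNReal.toReal_ofReal hs0] at h2
  obtain ⟨T, hT⟩ := eventually_atTop.mp hevC
  rw [NormedAddCommGroup.tendsto_nhds_zero]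
  intro δ hδ
  by_contra hcon
  rw [Filter.not_eventually] at hcon
  set K : ℝ := C / δ with hK
  have hK0 : 0 ≤ K := div_nonneg hC0 hδ.le
  set lam : ℝ := K + 1 with hlamdef
  have hlam1 : 1 ≤ lam := by rw [hlamdef]; linarith
  have hlam0 : 0 < lam := lt_of_lt_of_le one_pos hlam1
  have hK2 : (0:ℝ) < K + 2 := by linarith
  set M : ℝ := (K + 2) ^ (α⁻¹) with hMdef
  have hM0 : 0 < M := Real.rpow_pos_of_pos hK2 _
  have hMα : M ^ (-α) = (K + 2)⁻¹ := by
    rw [hMdef, ← Real.rpow_mul hK2.le]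
    have h : α⁻¹ * -α = -1 := by field_simp
    rw [h, Real.rpow_neg_one]
  have hlM : lam * M ^ (-α) < 1 := by
    rw [hMα]
    have h1 : lam < K + 2 := by rw [hlamdef]; linarith
    calc lam * (K + 2)⁻¹ < (K + 2) * (K + 2)⁻¹ :=
          mul_lt_mul_of_pos_right h1 (inv_pos.mpr hK2)
      _ = 1 := mul_inv_cancel₀ hK2.ne'
  have hgrow := my_b_growth Y α b hmargY lam M hlam0 hM0 hlM
  set η : ℝ := m / (2 * M) with hηdef
  have hη0 : 0 < η := div_pos hm (by positivity)
  have hlamtend : Tendsto (fun t : ℝ => lam * t) atTop atTop :=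
    tendsto_id.const_mul_atTop hlam0
  have hratio' : ∀ᶠ s : ℝ in atTop, b0 s ≤ η * b s := by
    filter_upwards [hratio.eventually_ge_atTop (1/η), eventually_gt_atTop (0:ℝ)] with s h1 h2
    have hb0s := hb0_pos s h2
    rw [le_div_iff₀ hb0s] at h1
    calc b0 s = η * (1/η * b0 s) := by field_simp
      _ ≤ η * b s := mul_le_mul_of_nonneg_left h1 hη0.le
  have hratioT : ∀ᶠ t : ℝ in atTop, b0 (lam * t) ≤ η * b (lam * t) :=
    hlamtend.eventually hratio'
  obtain ⟨t₀, hnot, hTt, h1t, hgt, hrt⟩ :=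
    (hcon.and_eventually ((eventually_ge_atTop T).and
      ((eventually_ge_atTop (1:ℝ)).and (hgrow.and hratioT)))).exists
  have ht0pos : (0:ℝ) < t₀ := lt_of_lt_of_le one_pos h1t
  have hp0 : 0 ≤ (ℙ {ω | b t₀ * m < Y ω ∧ b t₀ * m < W ω}).toReal := ENNReal.toReal_nonneg
  have hδle : δ ≤ t₀ * (ℙ {ω | b t₀ * m < Y ω ∧ b t₀ * m < W ω}).toReal := by
    have h := not_lt.mp hnot
    rwa [Real.norm_eq_abs, abs_of_nonneg (mul_nonneg ht0pos.le hp0)] at h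
  by_cases hcase : b0 (lam * t₀) * 1 ≤ b t₀ * m
  · -- contradiction with the hidden-scale bound
    have hsub : {ω | b t₀ * m < Y ω ∧ b t₀ * m < W ω}
        ⊆ {ω | b0 (lam * t₀) * 1 < Y ω ∧ b0 (lam * t₀) * 1 < W ω} := by
      rintro ω ⟨h1, h2⟩
      exact ⟨lt_of_le_of_lt hcase h1, lt_of_le_of_lt hcase h2⟩
    have hple : (ℙ {ω | b t₀ * m < Y ω ∧ b t₀ * m < W ω}).toReal
        ≤ (ℙ {ω | b0 (lam * t₀) * 1 < Y ω ∧ b0 (lam * t₀) * 1 < W ω}).toReal :=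
      ENNReal.toReal_mono (measure_ne_top _ _) (measure_mono hsub)
    have ht0le : t₀ ≤ lam * t₀ := by nlinarith
    have hsT : T ≤ lam * t₀ := le_trans hTt ht0le
    have hCb := hT (lam * t₀) hsT
    have h1 : lam * δ ≤ (lam * t₀) *
        (ℙ {ω | b0 (lam * t₀) * 1 < Y ω ∧ b0 (lam * t₀) * 1 < W ω}).toReal := by
      calc lam * δ ≤ lam * (t₀ * (ℙ {ω | b t₀ * m < Y ω ∧ b t₀ * m < W ω}).toReal) :=
            mul_le_mul_of_nonneg_left hδle hlam0.le
        _ = (lam * t₀) * (ℙ {ω | b t₀ * m < Y ω ∧ b t₀ * m < W ω}).toReal := by ring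
        _ ≤ (lam * t₀) *
            (ℙ {ω | b0 (lam * t₀) * 1 < Y ω ∧ b0 (lam * t₀) * 1 < W ω}).toReal :=
            mul_le_mul_of_nonneg_left hple (by positivity)
    have h2 : lam * δ = C + δ := by
      rw [hlamdef, hK]
      field_simp
    linarith
  · push_neg at hcase
    have hbt0 : 0 < b t₀ := hb_pos t₀ ht0pos
    have hchain : b t₀ * m < η * (M * b t₀) := by
      calc b t₀ * m < b0 (lam * t₀) * 1 := hcase
        _ = b0 (lam * t₀) := mul_one _
        _ ≤ η * b (lam * t₀) := hrt
        _ ≤ η * (M * b t₀) := mul_le_mul_of_nonneg_left hgt.le hη0.le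
    have hηM : η * M = m / 2 := by
      rw [hηdef]
      field_simp
    nlinarith [hchain, hηM, hbt0, hm]

/-- Marginal regular variation with scaling `b` plus finiteness (Radon property) of
joint pairwise tail limsups under the hidden scaling `b⁰` (with `b/b⁰ → ∞`) implies
multivariate regular variation on `[0,∞]^d \ {0}` with limit measure concentrating
on the axes: `t·P[Z⁽ⁱ⁾ > b(t)x⁽ⁱ⁾ for some i] → Σ_i (x⁽ⁱ⁾)^{-α}`. -/
theorem stmt_13 {Ω : Type*} [MeasureSpace Ω] [IsProbabilityMeasure (ℙ : Measure Ω)]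
    {d : ℕ} (Z : Fin d → Ω → ℝ) (hZm : ∀ i, Measurable (Z i))
    (hZ0 : ∀ i ω, 0 ≤ Z i ω)
    (α : ℝ) (hα : 0 < α)
    (b b0 : ℝ → ℝ) (hb_pos : ∀ t : ℝ, 0 < t → 0 < b t)
    (hb0_pos : ∀ t : ℝ, 0 < t → 0 < b0 t)
    (hb_top : Tendsto b atTop atTop) (hb0_top : Tendsto b0 atTop atTop)
    (hratio : Tendsto (fun t => b t / b0 t) atTop atTop)
    (hmarg : ∀ i, ∀ x : ℝ, 0 < x →
      Tendsto (fun t : ℝ => t * (ℙ {ω | b t * x < Z i ω}).toReal) atTop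
        (nhds (x ^ (-α))))
    (hpair : ∀ i j : Fin d, i < j → ∀ u : ℝ, 0 < u →
      Filter.limsup
        (fun t : ℝ => ENNReal.ofReal t *
          ℙ {ω | b0 t * u < Z i ω ∧ b0 t * u < Z j ω}) atTop < ⊤) :
    ∀ x : Fin d → ℝ, (∀ i, 0 < x i) →
      Tendsto (fun t : ℝ => t * (ℙ {ω | ∃ i, b t * x i < Z i ω}).toReal) atTop
        (nhds (∑ i, (x i) ^ (-α))) := by
  classical
  intro x hx
  set A : ℝ → Fin d → Set Ω := fun t i => {ω | b t * x i < Z i ω} with hA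
  have hAm : ∀ t i, MeasurableSet (A t i) :=
    fun t i => measurableSet_lt measurable_const (hZm i)
  -- pairwise terms vanish
  have hpair0 : ∀ i j : Fin d, i ≠ j →
      Tendsto (fun t : ℝ => t * (ℙ (A t i ∩ A t j)).toReal) atTop (nhds 0) := by
    intro i j hij
    set m : ℝ := min (x i) (x j) with hmdef
    have hm : 0 < m := lt_min (hx i) (hx j)
    have hlimsup : Filter.limsup (fun t : ℝ => ENNReal.ofReal t *
        ℙ {ω | b0 t * 1 < Z i ω ∧ b0 t * 1 < Z j ω}) atTop < ⊤ := by
      rcases hij.lt_or_gt with h | h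
      · exact hpair i j h 1 one_pos
      · have hset : ∀ t : ℝ, {ω | b0 t * 1 < Z i ω ∧ b0 t * 1 < Z j ω}
            = {ω | b0 t * 1 < Z j ω ∧ b0 t * 1 < Z i ω} :=
          fun t => Set.ext fun ω => and_comm
        simp only [hset]
        exact hpair j i h 1 one_pos
    have hcore := my_pair_core (Z i) (Z j) α hα b b0 hb_pos hb0_pos hratio
      (hmarg i) hlimsup m hm
    refine tendsto_of_tendsto_of_tendsto_of_le_of_le' tendsto_const_nhds hcore ?_ ?_
    · filter_upwards [eventually_ge_atTop (0:ℝ)] with t ht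
      exact mul_nonneg ht ENNReal.toReal_nonneg
    · filter_upwards [eventually_gt_atTop (0:ℝ)] with t ht
      have hbt : 0 < b t := hb_pos t ht
      have hsub : A t i ∩ A t j ⊆ {ω | b t * m < Z i ω ∧ b t * m < Z j ω} := by
        rintro ω ⟨h1, h2⟩
        simp only [hA, Set.mem_setOf_eq] at h1 h2
        constructor
        · exact lt_of_le_of_lt (mul_le_mul_of_nonneg_left (min_le_left _ _) hbt.le) h1
        · exact lt_of_le_of_lt (mul_le_mul_of_nonneg_left (min_le_right _ _) hbt.le) h2
      exact mul_le_mul_of_nonneg_left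
        (ENNReal.toReal_mono (measure_ne_top _ _) (measure_mono hsub)) ht.le
  -- the union set
  have hUset : ∀ t : ℝ, {ω | ∃ i, b t * x i < Z i ω} = ⋃ i ∈ Finset.univ, A t i := by
    intro t
    ext ω
    simp [hA]
  -- upper bound
  have hup : ∀ᶠ t : ℝ in atTop,
      t * (ℙ {ω | ∃ i, b t * x i < Z i ω}).toReal ≤ ∑ i, t * (ℙ (A t i)).toReal := by
    filter_upwards [eventually_ge_atTop (0:ℝ)] with t ht
    rw [hUset t]
    have h1 : ℙ (⋃ i ∈ Finset.univ, A t i) ≤ ∑ i, ℙ (A t i) :=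
      measure_biUnion_finset_le Finset.univ _
    have h2 : (ℙ (⋃ i ∈ Finset.univ, A t i)).toReal ≤ ∑ i, (ℙ (A t i)).toReal := by
      have hns : (∑ i, ℙ (A t i)) ≠ ⊤ :=
        (ENNReal.sum_lt_top.mpr fun i _ => measure_lt_top _ _).ne
      have := ENNReal.toReal_mono hns h1
      rwa [ENNReal.toReal_sum (fun i _ => measure_ne_top _ _)] at this
    calc t * (ℙ (⋃ i ∈ Finset.univ, A t i)).toReal
        ≤ t * ∑ i, (ℙ (A t i)).toReal := mul_le_mul_of_nonneg_left h2 ht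
      _ = ∑ i, t * (ℙ (A t i)).toReal := Finset.mul_sum _ _ _
  -- lower bound
  have hlo : ∀ᶠ t : ℝ in atTop,
      (∑ i, t * (ℙ (A t i)).toReal)
        - (∑ i, ∑ j, (if i ≠ j then t * (ℙ (A t i ∩ A t j)).toReal else 0))
      ≤ t * (ℙ {ω | ∃ i, b t * x i < Z i ω}).toReal := by
    filter_upwards [eventually_ge_atTop (0:ℝ)] with t ht
    rw [hUset t]
    have hb := my_bonf ℙ (A t) (hAm t) Finset.univ
    have hif_ne : ∀ i j : Fin d, (if i ≠ j then ℙ (A t i ∩ A t j) else 0) ≠ ⊤ := by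
      intro i j
      split
      · exact measure_ne_top _ _
      · exact ENNReal.zero_ne_top
    have hPne : (∑ i, ∑ j, (if i ≠ j then ℙ (A t i ∩ A t j) else 0)) ≠ ⊤ :=
      (ENNReal.sum_lt_top.mpr fun i _ =>
        ENNReal.sum_lt_top.mpr fun j _ => (hif_ne i j).lt_top).ne
    have hUne : ℙ (⋃ i ∈ Finset.univ, A t i) ≠ ⊤ := measure_ne_top _ _
    have e1 : (∑ i, ∑ j, (if i ≠ j then ℙ (A t i ∩ A t j) else 0)).toReal
        = ∑ i, ∑ j, (if i ≠ j then (ℙ (A t i ∩ A t j)).toReal else 0) := by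
      rw [ENNReal.toReal_sum (fun i _ =>
        (ENNReal.sum_lt_top.mpr fun j _ => (hif_ne i j).lt_top).ne)]
      refine Finset.sum_congr rfl fun i _ => ?_
      rw [ENNReal.toReal_sum (fun j _ => hif_ne i j)]
      refine Finset.sum_congr rfl fun j _ => ?_
      split <;> simp
    have h2 : ∑ i, (ℙ (A t i)).toReal
        ≤ (ℙ (⋃ i ∈ Finset.univ, A t i)).toReal
          + ∑ i, ∑ j, (if i ≠ j then (ℙ (A t i ∩ A t j)).toReal else 0) := by
      have hadd_ne : (ℙ (⋃ i ∈ Finset.univ, A t i)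
          + ∑ i, ∑ j, (if i ≠ j then ℙ (A t i ∩ A t j) else 0)) ≠ ⊤ :=
        ENNReal.add_ne_top.mpr ⟨hUne, hPne⟩
      have h3 := ENNReal.toReal_mono hadd_ne hb
      rwa [ENNReal.toReal_sum (fun i _ => measure_ne_top _ _),
        ENNReal.toReal_add hUne hPne, e1] at h3
    have e2 : ∑ i, ∑ j, (if i ≠ j then t * (ℙ (A t i ∩ A t j)).toReal else 0)
        = t * ∑ i, ∑ j, (if i ≠ j then (ℙ (A t i ∩ A t j)).toReal else 0) := by
      rw [Finset.mul_sum]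
      refine Finset.sum_congr rfl fun i _ => ?_
      rw [Finset.mul_sum]
      refine Finset.sum_congr rfl fun j _ => ?_
      split <;> simp
    have h4 : ∑ i, t * (ℙ (A t i)).toReal = t * ∑ i, (ℙ (A t i)).toReal :=
      (Finset.mul_sum _ _ _).symm
    have h5 := mul_le_mul_of_nonneg_left h2 ht
    rw [mul_add] at h5
    rw [h4, e2]
    linarith
  -- limits
  have hg : Tendsto (fun t : ℝ => ∑ i, t * (ℙ (A t i)).toReal) atTop
      (nhds (∑ i, (x i) ^ (-α))) :=
    tendsto_finset_sum Finset.univ (fun i _ => hmarg i (x i) (hx i))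
  have hps : Tendsto (fun t : ℝ =>
      ∑ i, ∑ j, (if i ≠ j then t * (ℙ (A t i ∩ A t j)).toReal else 0)) atTop (nhds 0) := by
    have h : Tendsto (fun t : ℝ =>
        ∑ i, ∑ j, (if i ≠ j then t * (ℙ (A t i ∩ A t j)).toReal else 0)) atTop
        (nhds (∑ _i : Fin d, ∑ _j : Fin d, (0:ℝ))) := by
      refine tendsto_finset_sum _ fun i _ => ?_
      refine tendsto_finset_sum _ fun j _ => ?_
      by_cases hij : i ≠ j
      · simp only [if_pos hij]
        exact hpair0 i j hij
      · simp only [if_neg hij]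
        exact tendsto_const_nhds
    simpa using h
  refine tendsto_of_tendsto_of_tendsto_of_le_of_le' ?_ hg hlo hup
  simpa using hg.sub hps
end

section
/- Let (X, Y*) be an ℝ × (0,∞)-valued random vector, let α : (0,∞) → (0,∞) and β : (0,∞) → ℝ, and let F : ℝ × (0,∞) → [0,∞). Assume: (i) for every y > 0 and every x that is a continuity point of u ↦ F(u, y), t·P[(X − β(t))/α(t) ≤ x, Y* > t·y] → F(x, y) as t → ∞; (ii) for each y > 0 the function x ↦ F(x, y) is nondecreasing with more than one point of increase (nondegenerate); (iii) t·P[Y* > t] → 1 and lim_{x→∞} F(x, 1) = 1 (so H(x) := F(x,1) is a probability distribution function). Then for every c > 0 the limits ψ₁(c) = lim_{t→∞} α(tc)/α(t) ∈ (0,∞) and ψ₂(c) = lim_{t→∞} (β(tc) − β(t))/α(t) ∈ ℝ exist, and for every c > 0 and every continuity point x of the relevant functions, (1/c)·F(x, 1/c) = H(ψ₁(c)·x + ψ₂(c)). -/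
open MeasureTheory ProbabilityTheory Filter

/-- A point of increase of a function `G : ℝ → ℝ`. -/
def IsPointOfIncrease (G : ℝ → ℝ) (x : ℝ) : Prop :=
  ∀ ε : ℝ, 0 < ε → G (x - ε) < G (x + ε)


open Topology

section Helpers

/-- In any nonempty open interval we can find a point avoiding a countable set. -/
lemma exists_notMem_Ioo_of_countable {s : Set ℝ} (hs : s.Countable) {x y : ℝ} (hxy : x < y) :
    ∃ z, z ∈ Set.Ioo x y ∧ z ∉ s := by
  by_contra h
  push_neg at h
  have hsub : Set.Ioo x y ⊆ s := fun z hz => h z hz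
  have h0 : volume (Set.Ioo x y) = 0 :=
    le_antisymm (le_trans (measure_mono hsub) (le_of_eq (hs.measure_zero volume))) zero_le
  rw [Real.volume_Ioo] at h0
  have : y - x ≤ 0 := by
    by_contra hyx
    push_neg at hyx
    rw [ENNReal.ofReal_eq_zero] at h0
    linarith
  linarith

/-- A monotone function equal to its translate by `δ > 0` on a co-countable set is constant. -/
lemma mono_const_of_translation {f : ℝ → ℝ} (hf : Monotone f) {δ : ℝ} (hδ : 0 < δ)
    {E : Set ℝ} (hE : Eᶜ.Countable) (heq : ∀ x ∈ E, f x = f (x + δ)) (x y : ℝ) :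
    f x = f y := by
  -- on each [z, z+δ] with z ∈ E, f is constant
  have hconst : ∀ z ∈ E, ∀ w, z ≤ w → w ≤ z + δ → f w = f z := by
    intro z hz w h1 h2
    have := heq z hz
    exact le_antisymm (this ▸ hf h2) (hf h1)
  -- induction step
  have key : ∀ n : ℕ, ∀ u v : ℝ, u ≤ v → v ≤ u + n * (δ / 2) → f u = f v := by
    intro n
    induction n with
    | zero =>
      intro u v h1 h2
      simp only [Nat.cast_zero, zero_mul, add_zero] at h2
      exact congrArg f (le_antisymm h1 h2)
    | succ n ih =>
      intro u v h1 h2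
      rcases le_or_gt v (u + n * (δ / 2)) with h | h
      · exact ih u v h1 h
      · obtain ⟨m, hm⟩ : ∃ m : ℝ, m = u + n * (δ / 2) := ⟨_, rfl⟩
        rw [← hm] at h
        have hum : u ≤ m := by
          have : (0:ℝ) ≤ (n:ℝ) * (δ/2) := by positivity
          linarith
        have h3 : f u = f m := ih u m hum (le_of_eq hm)
        have hvm : v ≤ m + δ / 2 := by
          push_cast at h2
          linarith
        -- pick z ∈ E ∩ (v - δ, m)
        obtain ⟨z, hz1, hz2⟩ := exists_notMem_Ioo_of_countable hE
          (show v - δ < m by linarith)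
        have hzE : z ∈ E := by simpa using hz2
        have hmz : f m = f z := hconst z hzE m (le_of_lt hz1.2) (by linarith [hz1.1])
        have hvz : f v = f z := hconst z hzE v (by linarith [hz1.2]) (by linarith [hz1.1])
        rw [h3, hmz, hvz]
  -- conclude
  rcases le_total x y with h | h
  · obtain ⟨n, hn⟩ := exists_nat_ge ((y - x) / (δ / 2))
    exact key n x y h (by
      have hpos : (0:ℝ) < δ / 2 := by linarith
      rw [div_le_iff₀ hpos] at hn
      linarith)
  · obtain ⟨n, hn⟩ := exists_nat_ge ((x - y) / (δ / 2))
    exact (key n y x h (by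
      have hpos : (0:ℝ) < δ / 2 := by linarith
      rw [div_le_iff₀ hpos] at hn
      linarith)).symm

/-- Version for nonzero `δ`. -/
lemma mono_const_of_translation' {f : ℝ → ℝ} (hf : Monotone f) {δ : ℝ} (hδ : δ ≠ 0)
    {E : Set ℝ} (hE : Eᶜ.Countable) (heq : ∀ x ∈ E, f x = f (x + δ)) (x y : ℝ) :
    f x = f y := by
  rcases hδ.lt_or_gt with h | h
  · -- δ < 0 : use the translated set
    have hE' : ((fun z => z + δ) '' E)ᶜ.Countable := by
      have hbij : Function.Bijective (fun z : ℝ => z + δ) :=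
        ⟨fun a b hab => by simpa using hab, fun w => ⟨w - δ, by ring⟩⟩
      have : ((fun z => z + δ) '' E)ᶜ = (fun z => z + δ) '' Eᶜ :=
        (Set.image_compl_eq hbij).symm
      rw [this]
      exact hE.image _
    refine mono_const_of_translation hf (show 0 < -δ by linarith) hE' ?_ x y
    rintro w ⟨z, hz, rfl⟩
    have := heq z hz
    simpa [add_assoc] using this.symm
  · exact mono_const_of_translation hf h hE heq x y

end Helpers

/-- Rigidity: a monotone function with two points of increase determines the affine
normalization. -/
lemma affine_rigidity {U : ℝ → ℝ} (hU : Monotone U) {p q : ℝ} (hpq : p ≠ q)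
    (hp : IsPointOfIncrease U p) (hq : IsPointOfIncrease U q)
    {A B A2 B2 : ℝ} (hA : 0 < A) (hA2 : 0 < A2) {E : Set ℝ} (hE : Eᶜ.Countable)
    (h : ∀ x ∈ E, U (A * x + B) = U (A2 * x + B2)) : A = A2 ∧ B = B2 := by
  have hAne : A ≠ 0 := ne_of_gt hA
  set lam := A2 / A with hlam
  set mu := B2 - A2 * B / A with hmu
  have hlam0 : 0 < lam := div_pos hA2 hA
  have hbij : Function.Bijective (fun x : ℝ => A * x + B) :=
    ⟨fun a b hab => by
      simp only at hab
      have h1 : A * (a - b) = 0 := by ring_nf; linarith [hab]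
      rcases mul_eq_zero.mp h1 with h' | h'
      · exact absurd h' hAne
      · linarith [sub_eq_zero.mp h'],
     fun w => ⟨(w - B) / A, by field_simp; ring⟩⟩
  set S := (fun x : ℝ => A * x + B) '' E with hS
  have hE' : Sᶜ.Countable := by
    rw [hS, (Set.image_compl_eq hbij).symm]
    exact hE.image _
  have key : ∀ y ∈ S, U y = U (lam * y + mu) := by
    rintro y ⟨x, hx, rfl⟩
    rw [h x hx]
    congr 1
    rw [hlam, hmu]
    field_simp
    ring
  have main : lam = 1 ∧ mu = 0 := by
    by_contra hcon
    rcases eq_or_ne lam 1 with hl1 | hl1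
    · -- lam = 1, mu ≠ 0
      have hmu0 : mu ≠ 0 := fun h0 => hcon ⟨hl1, h0⟩
      have hconst : ∀ x y : ℝ, U x = U y := by
        refine mono_const_of_translation' hU hmu0 hE' ?_
        intro y hy
        have := key y hy
        rwa [hl1, one_mul] at this
      have := hp 1 one_pos
      rw [hconst (p - 1) (p + 1)] at this
      exact lt_irrefl _ this
    · -- lam ≠ 1 : U constant on each side of the fixed point f₀
      set f₀ := mu / (1 - lam) with hf₀
      have h1lam : (1:ℝ) - lam ≠ 0 := sub_ne_zero.mpr (Ne.symm hl1)
      have hfix : lam * f₀ + mu = f₀ := by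
        rw [hf₀]
        field_simp
        ring
      have hloglam : Real.log lam ≠ 0 := by
        intro h0
        have := Real.exp_log hlam0
        rw [h0, Real.exp_zero] at this
        exact hl1 this.symm
      -- U is constant on (f₀, ∞)
      have hrconst : ∀ u v : ℝ, f₀ < u → f₀ < v → U u = U v := by
        have hinj : Function.Injective (fun z : ℝ => f₀ + Real.exp z) := by
          intro a b hab
          simp only [add_right_inj] at hab
          exact Real.exp_injective hab
        have hEc : ((fun z : ℝ => f₀ + Real.exp z) ⁻¹' S)ᶜ.Countable := by
          rw [← Set.preimage_compl]
          exact hE'.preimage hinj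
        have hmono : Monotone (fun z : ℝ => U (f₀ + Real.exp z)) := fun z w hzw =>
          hU (by simp [Real.exp_le_exp.mpr hzw])
        have heq2 : ∀ z ∈ (fun z : ℝ => f₀ + Real.exp z) ⁻¹' S,
            (fun z : ℝ => U (f₀ + Real.exp z)) z
              = (fun z : ℝ => U (f₀ + Real.exp z)) (z + Real.log lam) := by
          intro z hz
          have := key _ hz
          simp only [Real.exp_add, Real.exp_log hlam0]
          rw [this]
          congr 1
          have : lam * (f₀ + Real.exp z) + mu = (lam * f₀ + mu) + lam * Real.exp z := by ring
          rw [this, hfix]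
          ring
        have hcst := mono_const_of_translation' hmono hloglam hEc heq2
        intro u v hu hv
        have hu' : f₀ + Real.exp (Real.log (u - f₀)) = u := by
          rw [Real.exp_log (by linarith)]; ring
        have hv' : f₀ + Real.exp (Real.log (v - f₀)) = v := by
          rw [Real.exp_log (by linarith)]; ring
        have := hcst (Real.log (u - f₀)) (Real.log (v - f₀))
        rwa [hu', hv'] at this
      -- U is constant on (-∞, f₀)
      have hlconst : ∀ u v : ℝ, u < f₀ → v < f₀ → U u = U v := by
        have hinj : Function.Injective (fun z : ℝ => f₀ - Real.exp (-z)) := by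
          intro a b hab
          simp only [sub_right_inj] at hab
          have := Real.exp_injective hab
          linarith [neg_injective this]
        have hEc : ((fun z : ℝ => f₀ - Real.exp (-z)) ⁻¹' S)ᶜ.Countable := by
          rw [← Set.preimage_compl]
          exact hE'.preimage hinj
        have hmono : Monotone (fun z : ℝ => U (f₀ - Real.exp (-z))) := fun z w hzw =>
          hU (by linarith [Real.exp_le_exp.mpr (neg_le_neg hzw)])
        have heq2 : ∀ z ∈ (fun z : ℝ => f₀ - Real.exp (-z)) ⁻¹' S,
            (fun z : ℝ => U (f₀ - Real.exp (-z))) z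
              = (fun z : ℝ => U (f₀ - Real.exp (-z))) (z + (- Real.log lam)) := by
          intro z hz
          have hk := key _ hz
          simp only at hk ⊢
          rw [hk]
          congr 1
          have hexp : Real.exp (-(z + -Real.log lam)) = lam * Real.exp (-z) := by
            rw [neg_add, neg_neg, add_comm, Real.exp_add, Real.exp_log hlam0]
          rw [hexp]
          have h3 : lam * (f₀ - Real.exp (-z)) + mu = (lam * f₀ + mu) - lam * Real.exp (-z) := by
            ring
          rw [h3, hfix]
        have hcst := mono_const_of_translation' hmono (neg_ne_zero.mpr hloglam) hEc heq2
        intro u v hu hv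
        have hu' : f₀ - Real.exp (-(- Real.log (f₀ - u))) = u := by
          rw [neg_neg, Real.exp_log (by linarith)]; ring
        have hv' : f₀ - Real.exp (-(- Real.log (f₀ - v))) = v := by
          rw [neg_neg, Real.exp_log (by linarith)]; ring
        have := hcst (- Real.log (f₀ - u)) (- Real.log (f₀ - v))
        rwa [hu', hv'] at this
      -- contradiction with a point of increase away from f₀
      have hnotinc : ∀ r : ℝ, r ≠ f₀ → ¬ IsPointOfIncrease U r := by
        intro r hr hinc
        rcases hr.lt_or_gt with hlt | hlt
        · have hε : 0 < (f₀ - r) / 2 := by linarith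
          have := hinc _ hε
          rw [hlconst (r - (f₀ - r)/2) (r + (f₀ - r)/2) (by linarith) (by linarith)] at this
          exact lt_irrefl _ this
        · have hε : 0 < (r - f₀) / 2 := by linarith
          have := hinc _ hε
          rw [hrconst (r - (r - f₀)/2) (r + (r - f₀)/2) (by linarith) (by linarith)] at this
          exact lt_irrefl _ this
      rcases eq_or_ne p f₀ with hpf | hpf
      · exact hnotinc q (by rw [← hpf]; exact Ne.symm hpq) hq
      · exact hnotinc p hpf hp
  constructor
  · have := main.1
    rw [hlam] at this
    field_simp at this
    linarith
  · have h2 := main.2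
    have h1 := main.1
    rw [hlam] at h1
    rw [hmu] at h2
    have hA2A : A2 = A := by field_simp at h1; linarith
    rw [hA2A] at h2
    field_simp at h2
    linarith

section Comparison

variable {V : ℝ → ℝ → ℝ}

/-- If the limits are strictly ordered, the arguments are eventually ordered. -/
lemma my_eventually_le_of_tendsto_lt
    (hV : ∀ᶠ t in atTop, Monotone (V t)) {g h : ℝ → ℝ} {Lg Lh : ℝ}
    (hg : Tendsto (fun t => V t (g t)) atTop (𝓝 Lg))
    (hh : Tendsto (fun t => V t (h t)) atTop (𝓝 Lh)) (hlt : Lg < Lh) :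
    ∀ᶠ t in atTop, g t ≤ h t := by
  by_contra hc
  have hfreq : ∃ᶠ t in atTop, h t < g t := by
    have := Filter.not_eventually.mp hc
    exact this.mono (fun t ht => lt_of_not_ge ht)
  rw [Filter.frequently_atTop] at hfreq
  choose s hs1 hs2 using hfreq
  set u : ℕ → ℝ := fun n => s (n : ℝ) with hu
  have hstop : Tendsto u atTop atTop :=
    tendsto_atTop_mono (fun n => hs1 (n:ℝ)) tendsto_natCast_atTop_atTop
  have hle : Lh ≤ Lg := by
    refine le_of_tendsto_of_tendsto (hh.comp hstop) (hg.comp hstop) ?_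
    exact (hstop.eventually hV).mono (fun n hm => hm (le_of_lt (hs2 (n : ℝ))))
  linarith

end Comparison

section Cluster

variable {V : ℝ → ℝ → ℝ} {a b a2 b2 : ℝ → ℝ} {U : ℝ → ℝ}

/-- Key algebra: `a * ((a2/a) * x + (b2-b)/a) + b = a2 * x + b2`. -/
lemma affine_transfer {at' a2t bt b2t x : ℝ} (ha : at' ≠ 0) :
    at' * ((a2t / at') * x + (b2t - bt) / at') + bt = a2t * x + b2t := by
  field_simp
  ring

/-- Identification of the limit along a convergent affine cluster. -/
lemma cluster_identity
    (hV : ∀ᶠ t in atTop, Monotone (V t)) (ha : ∀ᶠ t in atTop, 0 < a t)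
    (hUlim : ∀ x, ContinuousAt U x →
      Tendsto (fun t => V t (a t * x + b t)) atTop (𝓝 (U x)))
    (hUdc : {x : ℝ | ¬ ContinuousAt U x}.Countable)
    {s : ℕ → ℝ} (hs : Tendsto s atTop atTop)
    {A B : ℝ} (hA : 0 < A)
    (hAc : Tendsto (fun n => a2 (s n) / a (s n)) atTop (𝓝 A))
    (hBc : Tendsto (fun n => (b2 (s n) - b (s n)) / a (s n)) atTop (𝓝 B))
    {x Wx : ℝ} (hWx : Tendsto (fun t => V t (a2 t * x + b2 t)) atTop (𝓝 Wx))
    (hz : ContinuousAt U (A * x + B)) : Wx = U (A * x + B) := by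
  set z := A * x + B with hzdef
  have hmain : ∀ ε : ℝ, 0 < ε → |Wx - U z| < ε := by
    intro ε hε
    obtain ⟨δ, hδ, hδ2⟩ := Metric.continuousAt_iff.mp hz ε hε
    obtain ⟨um, hum, humc⟩ := exists_notMem_Ioo_of_countable hUdc
      (show z - δ < z by linarith)
    obtain ⟨up, hup, hupc⟩ := exists_notMem_Ioo_of_countable hUdc
      (show z < z + δ by linarith)
    have humcont : ContinuousAt U um := not_not.mp (fun hn => humc hn)
    have hupcont : ContinuousAt U up := not_not.mp (fun hn => hupc hn)
    have humval : |U um - U z| < ε := by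
      have := hδ2 (show dist um z < δ by
        rw [Real.dist_eq]; rw [abs_lt]; constructor <;> [linarith [hum.1]; linarith [hum.2]])
      rwa [Real.dist_eq] at this
    have hupval : |U up - U z| < ε := by
      have := hδ2 (show dist up z < δ by
        rw [Real.dist_eq]; rw [abs_lt]; constructor <;> [linarith [hup.1]; linarith [hup.2]])
      rwa [Real.dist_eq] at this
    -- the moving point
    set c : ℕ → ℝ := fun n => (a2 (s n) / a (s n)) * x + (b2 (s n) - b (s n)) / a (s n) with hc
    have hctend : Tendsto c atTop (𝓝 z) := by
      rw [hzdef]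
      exact (hAc.mul_const x).add hBc
    have hmem : ∀ᶠ n in atTop, c n ∈ Set.Ioo um up :=
      hctend (Ioo_mem_nhds hum.2 hup.1)
    have hVm : ∀ᶠ n in atTop, Monotone (V (s n)) := hs.eventually hV
    have hap : ∀ᶠ n in atTop, 0 < a (s n) := hs.eventually ha
    have hlow : U um ≤ Wx := by
      refine le_of_tendsto_of_tendsto ((hUlim um humcont).comp hs) (hWx.comp hs) ?_
      filter_upwards [hmem, hVm, hap] with n h1 h2 h3
      have := h2 (show a (s n) * um + b (s n) ≤ a (s n) * (c n) + b (s n) by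
        have := mul_le_mul_of_nonneg_left (le_of_lt h1.1) (le_of_lt h3)
        linarith)
      rwa [affine_transfer (ne_of_gt h3)] at this
    have hhigh : Wx ≤ U up := by
      refine le_of_tendsto_of_tendsto (hWx.comp hs) ((hUlim up hupcont).comp hs) ?_
      filter_upwards [hmem, hVm, hap] with n h1 h2 h3
      have := h2 (show a (s n) * (c n) + b (s n) ≤ a (s n) * up + b (s n) by
        have := mul_le_mul_of_nonneg_left (le_of_lt h1.2) (le_of_lt h3)
        linarith)
      rwa [affine_transfer (ne_of_gt h3)] at this
    rw [abs_lt] at humval hupval ⊢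
    constructor <;> [linarith [humval.1]; linarith [hupval.2]]
  by_contra hne
  have hpos : 0 < |Wx - U z| := abs_pos.mpr (sub_ne_zero.mpr hne)
  exact lt_irrefl _ (hmain _ hpos)

/-- A cluster value `A = 0` is impossible. -/
lemma cluster_exclusion
    (hV : ∀ᶠ t in atTop, Monotone (V t)) (ha : ∀ᶠ t in atTop, 0 < a t)
    (ha2 : ∀ᶠ t in atTop, 0 < a2 t)
    (hUlim : ∀ x, ContinuousAt U x →
      Tendsto (fun t => V t (a t * x + b t)) atTop (𝓝 (U x)))
    (hUdc : {x : ℝ | ¬ ContinuousAt U x}.Countable)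
    {w₁ w₂ xh Ww₁ Ww₂ : ℝ}
    (hWl1 : Tendsto (fun t => V t (a2 t * w₁ + b2 t)) atTop (𝓝 Ww₁))
    (hWl2 : Tendsto (fun t => V t (a2 t * w₂ + b2 t)) atTop (𝓝 Ww₂))
    (hxh : ContinuousAt U xh) (h1 : Ww₁ < U xh) (h2 : U xh < Ww₂)
    {s : ℕ → ℝ} (hs : Tendsto s atTop atTop) {B : ℝ}
    (hAc : Tendsto (fun n => a2 (s n) / a (s n)) atTop (𝓝 0))
    (hBc : Tendsto (fun n => (b2 (s n) - b (s n)) / a (s n)) atTop (𝓝 B)) : False := by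
  have hVm : ∀ᶠ n in atTop, Monotone (V (s n)) := hs.eventually hV
  have hap : ∀ᶠ n in atTop, 0 < a (s n) := hs.eventually ha
  have ha2p : ∀ᶠ n in atTop, 0 < a2 (s n) := hs.eventually ha2
  have hAinv : Tendsto (fun n => (a2 (s n) / a (s n))⁻¹) atTop atTop := by
    refine tendsto_inv_nhdsGT_zero.comp ?_
    rw [tendsto_nhdsWithin_iff]
    refine ⟨hAc, ?_⟩
    filter_upwards [hap, ha2p] with n h3 h4
    exact div_pos h4 h3
  -- the general step : for x' continuity point with x' > B, U x' ≥ Ww₂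
  have hgenhi : ∀ x' : ℝ, ContinuousAt U x' → B < x' → Ww₂ ≤ U x' := by
    intro x' hx' hBx
    -- moving preimage point
    set d : ℕ → ℝ := fun n => (x' - (b2 (s n) - b (s n)) / a (s n)) * (a2 (s n) / a (s n))⁻¹
      with hd
    have hdtop : Tendsto d atTop atTop := by
      refine Filter.Tendsto.pos_mul_atTop (show (0:ℝ) < x' - B by linarith) ?_ hAinv
      exact tendsto_const_nhds.sub hBc
    refine le_of_tendsto_of_tendsto (hWl2.comp hs) ((hUlim x' hx').comp hs) ?_
    filter_upwards [hVm, hap, ha2p, hdtop.eventually_ge_atTop w₂] with n h3 h4 h5 h6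
    have halg : a2 (s n) * (d n) + b2 (s n) = a (s n) * x' + b (s n) := by
      rw [hd]
      field_simp
      ring
    have := h3 (show a2 (s n) * w₂ + b2 (s n) ≤ a2 (s n) * (d n) + b2 (s n) by
      have := mul_le_mul_of_nonneg_left h6 (le_of_lt h5)
      linarith)
    rwa [halg] at this
  -- symmetric : for x' continuity point with x' < B, U x' ≤ Ww₁
  have hgenlo : ∀ x' : ℝ, ContinuousAt U x' → x' < B → U x' ≤ Ww₁ := by
    intro x' hx' hBx
    set d : ℕ → ℝ := fun n => (x' - (b2 (s n) - b (s n)) / a (s n)) * (a2 (s n) / a (s n))⁻¹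
      with hd
    have hdbot : Tendsto d atTop atBot := by
      have : Tendsto (fun n => ((b2 (s n) - b (s n)) / a (s n) - x')
          * (a2 (s n) / a (s n))⁻¹) atTop atTop := by
        refine Filter.Tendsto.pos_mul_atTop (show (0:ℝ) < B - x' by linarith) ?_ hAinv
        exact hBc.sub tendsto_const_nhds
      have hneg : d = fun n => -(((b2 (s n) - b (s n)) / a (s n) - x')
          * (a2 (s n) / a (s n))⁻¹) := by
        funext n; rw [hd]; ring
      rw [hneg]
      exact tendsto_neg_atTop_atBot.comp this
    refine le_of_tendsto_of_tendsto ((hUlim x' hx').comp hs) (hWl1.comp hs) ?_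
    filter_upwards [hVm, hap, ha2p, hdbot.eventually_le_atBot w₁] with n h3 h4 h5 h6
    have halg : a2 (s n) * (d n) + b2 (s n) = a (s n) * x' + b (s n) := by
      rw [hd]
      field_simp
      ring
    have := h3 (show a2 (s n) * (d n) + b2 (s n) ≤ a2 (s n) * w₁ + b2 (s n) by
      have := mul_le_mul_of_nonneg_left h6 (le_of_lt h5)
      linarith)
    rwa [halg] at this
  -- now the trichotomy on xh vs B
  rcases le_or_gt B xh with hc | hc
  · -- find continuity point x' > xh ≥ B with U x' < Ww₂
    obtain ⟨δ, hδ, hδ2⟩ := Metric.continuousAt_iff.mp hxh (Ww₂ - U xh) (by linarith)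
    obtain ⟨x', hx'm, hx'c⟩ := exists_notMem_Ioo_of_countable hUdc
      (show xh < xh + δ by linarith)
    have hcont : ContinuousAt U x' := not_not.mp (fun hn => hx'c hn)
    have hdist : dist x' xh < δ := by
      rw [Real.dist_eq, abs_lt]; constructor <;> [linarith [hx'm.1]; linarith [hx'm.2]]
    have hval := hδ2 hdist
    rw [Real.dist_eq, abs_lt] at hval
    have := hgenhi x' hcont (by linarith [hx'm.1])
    linarith [hval.1, hval.2]
  · -- find continuity point x' < xh < B with U x' > Ww₁
    obtain ⟨δ, hδ, hδ2⟩ := Metric.continuousAt_iff.mp hxh (U xh - Ww₁) (by linarith)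
    obtain ⟨x', hx'm, hx'c⟩ := exists_notMem_Ioo_of_countable hUdc
      (show xh - δ < xh by linarith)
    have hcont : ContinuousAt U x' := not_not.mp (fun hn => hx'c hn)
    have hdist : dist x' xh < δ := by
      rw [Real.dist_eq, abs_lt]; constructor <;> [linarith [hx'm.1]; linarith [hx'm.2]]
    have hval := hδ2 hdist
    rw [Real.dist_eq, abs_lt] at hval
    have := hgenlo x' hcont (by linarith [hx'm.2])
    linarith [hval.1, hval.2]

end Cluster

section Bound

variable {V : ℝ → ℝ → ℝ} {a b a2 b2 : ℝ → ℝ} {U : ℝ → ℝ}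

/-- Boundedness of the affine coefficients. -/
lemma affine_bound
    (hV : ∀ᶠ t in atTop, Monotone (V t)) (ha : ∀ᶠ t in atTop, 0 < a t)
    (ha2 : ∀ᶠ t in atTop, 0 < a2 t)
    (hUlim : ∀ x, ContinuousAt U x →
      Tendsto (fun t => V t (a t * x + b t)) atTop (𝓝 (U x)))
    (hUmono : Monotone U)
    {w₁ w₂ ulo uhi Ww₁ Ww₂ : ℝ} (hw : w₁ < w₂)
    (hWl1 : Tendsto (fun t => V t (a2 t * w₁ + b2 t)) atTop (𝓝 Ww₁))
    (hWl2 : Tendsto (fun t => V t (a2 t * w₂ + b2 t)) atTop (𝓝 Ww₂))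
    (hulo : ContinuousAt U ulo) (huhi : ContinuousAt U uhi)
    (h1 : U ulo < Ww₁) (h2 : Ww₂ < U uhi) (h3 : Ww₁ ≤ Ww₂) :
    ∃ M K : ℝ, 0 < M ∧ ∀ᶠ t in atTop,
      0 < a t ∧ 0 < a2 t ∧ a2 t / a t ≤ M ∧ |(b2 t - b t) / a t| ≤ K := by
  have hlohi : ulo < uhi := by
    by_contra hcon
    push_neg at hcon
    have := hUmono hcon
    linarith
  set M := (uhi - ulo) / (w₂ - w₁) with hM
  have hMpos : 0 < M := div_pos (by linarith) (by linarith)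
  refine ⟨M, |ulo| + |uhi| + M * |w₁|, hMpos, ?_⟩
  have E1 : ∀ᶠ t in atTop, a t * ulo + b t ≤ a2 t * w₁ + b2 t :=
    my_eventually_le_of_tendsto_lt hV (hUlim ulo hulo) hWl1 h1
  have E2 : ∀ᶠ t in atTop, a2 t * w₂ + b2 t ≤ a t * uhi + b t :=
    my_eventually_le_of_tendsto_lt hV hWl2 (hUlim uhi huhi) h2
  filter_upwards [ha, ha2, E1, E2] with t hat ha2t he1 he2
  refine ⟨hat, ha2t, ?_, ?_⟩
  · rw [div_le_iff₀ hat, hM, div_mul_eq_mul_div, le_div_iff₀ (by linarith : (0:ℝ) < w₂ - w₁)]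
    nlinarith [mul_le_mul_of_nonneg_left (le_of_lt hw) (le_of_lt ha2t)]
  · have hAle : a2 t / a t ≤ M := by
      rw [div_le_iff₀ hat, hM, div_mul_eq_mul_div, le_div_iff₀ (by linarith : (0:ℝ) < w₂ - w₁)]
      nlinarith [mul_le_mul_of_nonneg_left (le_of_lt hw) (le_of_lt ha2t)]
    have hA0 : 0 ≤ a2 t / a t := le_of_lt (div_pos ha2t hat)
    -- (a2/a) * w₁ + B_t ∈ [ulo, uhi]
    have hin1 : ulo ≤ (a2 t / a t) * w₁ + (b2 t - b t) / a t := by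
      rw [div_mul_eq_mul_div, ← add_div, le_div_iff₀ hat]
      nlinarith
    have hin2 : (a2 t / a t) * w₁ + (b2 t - b t) / a t ≤ uhi := by
      have : a2 t * w₁ + b2 t ≤ a t * uhi + b t := by
        have := mul_le_mul_of_nonneg_left (le_of_lt hw) (le_of_lt ha2t)
        linarith
      rw [div_mul_eq_mul_div, ← add_div, div_le_iff₀ hat]
      nlinarith
    have habs : |(a2 t / a t) * w₁| ≤ M * |w₁| := by
      rw [abs_mul]
      have : |a2 t / a t| = a2 t / a t := abs_of_nonneg hA0
      rw [this]
      exact mul_le_mul_of_nonneg_right hAle (abs_nonneg _)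
    rw [abs_le]
    constructor
    · have := neg_abs_le ((a2 t / a t) * w₁)
      have h5 := neg_abs_le ulo
      nlinarith [le_abs_self ((a2 t / a t) * w₁), abs_nonneg uhi]
    · have := le_abs_self ((a2 t / a t) * w₁)
      nlinarith [neg_abs_le ((a2 t / a t) * w₁), le_abs_self uhi, abs_nonneg ulo]
end Bound

lemma affine_injective {A B : ℝ} (hA : A ≠ 0) : Function.Injective (fun x : ℝ => A * x + B) := by
  intro u v huv
  simp only [add_left_inj] at huv
  exact mul_left_cancel₀ hA huv

/-- The main abstract convergence-of-types statement. -/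
lemma main_types {V : ℝ → ℝ → ℝ} {a b a2 b2 : ℝ → ℝ} {U W : ℝ → ℝ} {κ : ℝ}
    (hV : ∀ᶠ t in atTop, Monotone (V t)) (ha : ∀ᶠ t in atTop, 0 < a t)
    (ha2 : ∀ᶠ t in atTop, 0 < a2 t)
    (hUlim : ∀ x, ContinuousAt U x →
      Tendsto (fun t => V t (a t * x + b t)) atTop (𝓝 (U x)))
    (hWlim : ∀ x, ContinuousAt W x →
      Tendsto (fun t => V t (a2 t * x + b2 t)) atTop (𝓝 (W x)))
    (hUmono : Monotone U) (hWmono : Monotone W)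
    (hU0 : ∀ x, 0 ≤ U x) (hU1 : Tendsto U atTop (𝓝 1))
    {p q : ℝ} (hpq : p ≠ q) (hp : IsPointOfIncrease U p) (hq : IsPointOfIncrease U q)
    (hκ0 : 0 < κ) (hκ1 : κ < 1)
    (hUW : ∀ x, ContinuousAt U x → ContinuousAt W x →
      κ * U x ≤ W x ∧ W x ≤ κ * U x + (1 - κ))
    {x₁ : ℝ} (hx₁ : ContinuousAt U x₁)
    (hn1 : sInf (Set.range U) < κ * U x₁)
    (hn2 : κ * sInf (Set.range U) + (1 - κ) < U x₁)
    (hn3 : U x₁ < κ) :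
    ∃ A B : ℝ, 0 < A ∧ Tendsto (fun t => a2 t / a t) atTop (𝓝 A) ∧
      Tendsto (fun t => (b2 t - b t) / a t) atTop (𝓝 B) := by
  -- discontinuity sets
  have hUdc : {x : ℝ | ¬ ContinuousAt U x}.Countable := hUmono.countable_not_continuousAt
  have hWdc : {x : ℝ | ¬ ContinuousAt W x}.Countable := hWmono.countable_not_continuousAt
  have hdc : ({x : ℝ | ¬ ContinuousAt U x} ∪ {x : ℝ | ¬ ContinuousAt W x}).Countable :=
    hUdc.union hWdc
  have pick : ∀ {u v : ℝ}, u < v → ∃ z, z ∈ Set.Ioo u v ∧ ContinuousAt U z ∧ ContinuousAt W z := by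
    intro u v huv
    obtain ⟨z, hz, hzn⟩ := exists_notMem_Ioo_of_countable hdc huv
    rw [Set.mem_union, not_or] at hzn
    exact ⟨z, hz, not_not.mp hzn.1, not_not.mp hzn.2⟩
  have pickU : ∀ {u v : ℝ}, u < v → ∃ z, z ∈ Set.Ioo u v ∧ ContinuousAt U z := by
    intro u v huv
    obtain ⟨z, hz, hzn⟩ := exists_notMem_Ioo_of_countable hUdc huv
    exact ⟨z, hz, not_not.mp hzn⟩
  -- infimum facts
  set mU := sInf (Set.range U) with hmUdef
  have hbdd : BddBelow (Set.range U) := ⟨0, by rintro y ⟨x, rfl⟩; exact hU0 x⟩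
  have hmU_le : ∀ x, mU ≤ U x := fun x => csInf_le hbdd ⟨x, rfl⟩
  have hexlt : ∀ r : ℝ, mU < r → ∃ x₀, U x₀ < r := by
    intro r hr
    obtain ⟨y, hy1, hy2⟩ := exists_lt_of_csInf_lt (Set.range_nonempty U) hr
    obtain ⟨x₀, rfl⟩ := hy1
    exact ⟨x₀, hy2⟩
  -- numerics
  set v := U x₁ with hvdef
  have hκne : κ ≠ 0 := ne_of_gt hκ0
  set θ := (mU / κ + v) / 2 with hθdef
  have hθv : θ < v := by
    have : mU / κ < v := by rw [div_lt_iff₀ hκ0]; linarith [hn1, mul_comm v κ]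
    rw [hθdef]; linarith
  have hmθ : mU < κ * θ := by
    have hcalc : κ * θ = (mU + κ * v) / 2 := by rw [hθdef]; field_simp
    rw [hcalc]; linarith [hn1]
  set γ := max θ (κ * mU + (1 - κ)) with hγdef
  have hγv : γ < v := max_lt hθv hn2
  have hv1 : v < 1 := lt_trans hn3 hκ1
  -- choose w₁ < w₂ near x₁ from the left
  obtain ⟨δ, hδ, hδ2⟩ := Metric.continuousAt_iff.mp hx₁ (v - γ) (by linarith)
  have hUnear : ∀ w : ℝ, x₁ - δ < w → w < x₁ → γ < U w ∧ U w ≤ v := by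
    intro w h1 h2
    constructor
    · have := hδ2 (show dist w x₁ < δ by rw [Real.dist_eq, abs_lt]; constructor <;> linarith)
      rw [Real.dist_eq, abs_lt] at this
      linarith [this.1]
    · exact hUmono (le_of_lt h2)
  obtain ⟨w₂, hw₂m, hw₂U, hw₂W⟩ := pick (show x₁ - δ/2 < x₁ by linarith)
  obtain ⟨w₁, hw₁m, hw₁U, hw₁W⟩ := pick (show x₁ - δ/2 < w₂ from hw₂m.1)
  have hw12 : w₁ < w₂ := hw₁m.2
  have hw₁near := hUnear w₁ (by linarith [hw₁m.1]) (lt_trans hw₁m.2 hw₂m.2)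
  have hw₂near := hUnear w₂ (by linarith [hw₂m.1]) hw₂m.2
  -- W values
  have hWw₁ := hUW w₁ hw₁U hw₁W
  have hWw₂ := hUW w₂ hw₂U hw₂W
  have hW1lo : mU < W w₁ := by
    have h5 : κ * θ ≤ κ * U w₁ := by
      have : θ ≤ U w₁ := le_of_lt (lt_of_le_of_lt (le_max_left _ _) hw₁near.1)
      exact mul_le_mul_of_nonneg_left this (le_of_lt hκ0)
    linarith [hWw₁.1]
  have hW2hi : W w₂ < 1 := by
    have h5 : κ * U w₂ ≤ κ * v := mul_le_mul_of_nonneg_left hw₂near.2 (le_of_lt hκ0)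
    have h6 : κ * v < κ := by nlinarith
    linarith [hWw₂.2]
  have hW12 : W w₁ ≤ W w₂ := hWmono (le_of_lt hw12)
  -- u_lo and u_hi
  obtain ⟨x₀, hx₀⟩ := hexlt _ hW1lo
  obtain ⟨ulo, hulom, huloU⟩ := pickU (show x₀ - 1 < x₀ by linarith)
  have hulo_lt : U ulo < W w₁ := lt_of_le_of_lt (hUmono (le_of_lt hulom.2)) hx₀
  obtain ⟨x₀', hx₀'⟩ := (hU1.eventually (eventually_gt_nhds hW2hi)).exists_forall_of_atTop
  obtain ⟨uhi, huhim, huhiU⟩ := pickU (show x₀' < x₀' + 1 by linarith)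
  have huhi_gt : W w₂ < U uhi := hx₀' uhi (le_of_lt huhim.1)
  -- the bound
  obtain ⟨M, K, hM, hbd⟩ := affine_bound hV ha ha2 hUlim hUmono hw12
    (hWlim w₁ hw₁W) (hWlim w₂ hw₂W) huloU huhiU hulo_lt huhi_gt hW12
  -- exclusion data : points w₁' w₂' with W w₁' < U w₁ < W w₂'
  have hvκ1 : v / κ < 1 := (div_lt_one hκ0).mpr hn3
  obtain ⟨y₀, hy₀⟩ := (hU1.eventually (eventually_gt_nhds hvκ1)).exists_forall_of_atTop
  obtain ⟨w₂', hw₂'m, hw₂'U, hw₂'W⟩ := pick (show y₀ < y₀ + 1 by linarith)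
  have hlthi : U w₁ < W w₂' := by
    have h5 : v / κ < U w₂' := hy₀ w₂' (le_of_lt hw₂'m.1)
    have h6 : v < κ * U w₂' := by
      rw [div_lt_iff₀ hκ0] at h5
      linarith [mul_comm (U w₂') κ]
    linarith [(hUW w₂' hw₂'U hw₂'W).1, hw₁near.2]
  have hrmU : mU < (U w₁ - (1 - κ)) / κ := by
    rw [lt_div_iff₀ hκ0]
    have : κ * mU + (1 - κ) ≤ γ := le_max_right _ _
    linarith [hw₁near.1, mul_comm mU κ]
  obtain ⟨x₀'', hx₀''⟩ := hexlt _ hrmU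
  obtain ⟨w₁', hw₁'m, hw₁'U, hw₁'W⟩ := pick (show x₀'' - 1 < x₀'' by linarith)
  have hltlo : W w₁' < U w₁ := by
    have h5 : U w₁' < (U w₁ - (1 - κ)) / κ := lt_of_le_of_lt (hUmono (le_of_lt hw₁'m.2)) hx₀''
    have h6 : κ * U w₁' < U w₁ - (1 - κ) := by
      rw [lt_div_iff₀ hκ0] at h5
      linarith [mul_comm (U w₁') κ]
    linarith [(hUW w₁' hw₁'U hw₁'W).2]
  -- threshold
  obtain ⟨N, hN⟩ := hbd.exists_forall_of_atTop
  -- key subsequence extraction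
  have key : ∀ s : ℕ → ℝ, Tendsto s atTop atTop → (∀ n, N ≤ s n) →
      ∃ A' B' : ℝ, 0 < A' ∧
        (∀ x, ContinuousAt U (A' * x + B') → ContinuousAt W x → W x = U (A' * x + B')) ∧
        ∃ ψ : ℕ → ℕ, StrictMono ψ ∧
          Tendsto (fun n => a2 (s (ψ n)) / a (s (ψ n))) atTop (𝓝 A') ∧
          Tendsto (fun n => (b2 (s (ψ n)) - b (s (ψ n))) / a (s (ψ n))) atTop (𝓝 B') := by
    intro s hs hsN
    have hmemA : ∀ n, a2 (s n) / a (s n) ∈ Set.Icc (0:ℝ) M := by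
      intro n
      obtain ⟨h1', h2', h3', _⟩ := hN (s n) (hsN n)
      exact ⟨le_of_lt (div_pos h2' h1'), h3'⟩
    obtain ⟨A', hA'mem, φ₁, hφ₁, hA'c⟩ := isCompact_Icc.tendsto_subseq hmemA
    have hmemB : ∀ n, (b2 (s (φ₁ n)) - b (s (φ₁ n))) / a (s (φ₁ n)) ∈ Set.Icc (-K) K := by
      intro n
      obtain ⟨_, _, _, h4'⟩ := hN (s (φ₁ n)) (hsN (φ₁ n))
      exact abs_le.mp h4'
    obtain ⟨B', hB'mem, φ₂, hφ₂, hB'c⟩ := isCompact_Icc.tendsto_subseq hmemB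
    have hψmono : StrictMono (fun n => φ₁ (φ₂ n)) := hφ₁.comp hφ₂
    have hs2 : Tendsto (fun n => s (φ₁ (φ₂ n))) atTop atTop := hs.comp hψmono.tendsto_atTop
    have hA'c2 : Tendsto (fun n => a2 (s (φ₁ (φ₂ n))) / a (s (φ₁ (φ₂ n)))) atTop (𝓝 A') :=
      hA'c.comp hφ₂.tendsto_atTop
    have hB'c2 : Tendsto (fun n => (b2 (s (φ₁ (φ₂ n))) - b (s (φ₁ (φ₂ n)))) /
        a (s (φ₁ (φ₂ n)))) atTop (𝓝 B') := hB'c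
    have hA'pos : 0 < A' := by
      rcases lt_or_eq_of_le hA'mem.1 with h | h
      · exact h
      · exfalso
        refine cluster_exclusion hV ha ha2 hUlim hUdc (hWlim w₁' hw₁'W) (hWlim w₂' hw₂'W)
          hw₁U hltlo hlthi hs2 ?_ hB'c2
        rw [← h] at hA'c2
        exact hA'c2
    refine ⟨A', B', hA'pos, ?_, fun n => φ₁ (φ₂ n), hψmono, hA'c2, hB'c2⟩
    intro x hx hWcont
    exact cluster_identity hV ha hUlim hUdc hs2 hA'pos hA'c2 hB'c2 (hWlim x hWcont) hx
  -- apply to a base sequence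
  have hs₀ : Tendsto (fun n : ℕ => N + (n : ℝ)) atTop atTop :=
    tendsto_atTop_add_const_left _ N tendsto_natCast_atTop_atTop
  obtain ⟨A₀, B₀, hA₀pos, hid₀, _, _, _, _⟩ :=
    key (fun n : ℕ => N + (n : ℝ)) hs₀ (fun n => le_add_of_nonneg_right (Nat.cast_nonneg n))
  -- gluing via rigidity
  have hglue : ∀ A' B' : ℝ, 0 < A' →
      (∀ x, ContinuousAt U (A' * x + B') → ContinuousAt W x → W x = U (A' * x + B')) →
      A₀ = A' ∧ B₀ = B' := by
    intro A' B' hA' hid'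
    set E := {x : ℝ | ContinuousAt W x ∧ ContinuousAt U (A₀ * x + B₀) ∧
      ContinuousAt U (A' * x + B')} with hEdef
    have hEc : Eᶜ.Countable := by
      have hsub : Eᶜ ⊆ {x : ℝ | ¬ ContinuousAt W x} ∪
          ((fun x => A₀ * x + B₀) ⁻¹' {x : ℝ | ¬ ContinuousAt U x}) ∪
          ((fun x => A' * x + B') ⁻¹' {x : ℝ | ¬ ContinuousAt U x}) := by
        intro x hx
        rw [hEdef] at hx
        simp only [Set.mem_compl_iff, Set.mem_setOf_eq, not_and_or] at hx
        rcases hx with h | h | h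
        · exact Or.inl (Or.inl h)
        · exact Or.inl (Or.inr h)
        · exact Or.inr h
      refine Set.Countable.mono hsub ?_
      exact ((hWdc.union (hUdc.preimage (affine_injective (ne_of_gt hA₀pos)))).union
        (hUdc.preimage (affine_injective (ne_of_gt hA'))))
    refine affine_rigidity hUmono hpq hp hq hA₀pos hA' hEc ?_
    intro x hx
    rw [hEdef] at hx
    exact (hid₀ x hx.2.1 hx.1).symm.trans (hid' x hx.2.2 hx.1)
  -- full convergence of the pair
  have hpair : Tendsto (fun t => (a2 t / a t, (b2 t - b t) / a t)) atTop (𝓝 (A₀, B₀)) := by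
    by_contra hT
    rw [Metric.tendsto_nhds] at hT
    push_neg at hT
    obtain ⟨ε, hε, hfreq⟩ := hT
    have hfreq' : ∀ r : ℝ, ∃ t ≥ r,
        ε ≤ dist (a2 t / a t, (b2 t - b t) / a t) (A₀, B₀) := by
      intro r
      obtain ⟨t, ht1, ht2⟩ := Filter.frequently_atTop.mp hfreq r
      exact ⟨t, ht1, ht2⟩
    choose s hsge hsdist using hfreq'
    set u : ℕ → ℝ := fun n => s (max N (n : ℝ)) with hu
    have hutop : Tendsto u atTop atTop := by
      refine tendsto_atTop_mono (fun n => ?_) tendsto_natCast_atTop_atTop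
      exact le_trans (le_max_right _ _) (hsge _)
    have huN : ∀ n, N ≤ u n := fun n => le_trans (le_max_left _ _) (hsge _)
    obtain ⟨A', B', hA'pos, hid', ψ, hψ, hAc', hBc'⟩ := key u hutop huN
    obtain ⟨hAeq, hBeq⟩ := hglue A' B' hA'pos hid'
    rw [← hAeq] at hAc'
    rw [← hBeq] at hBc'
    have hptend : Tendsto (fun n => (a2 (u (ψ n)) / a (u (ψ n)),
        (b2 (u (ψ n)) - b (u (ψ n))) / a (u (ψ n)))) atTop (𝓝 (A₀, B₀)) :=
      hAc'.prodMk_nhds hBc'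
    have hdist0 : Tendsto (fun n => dist (a2 (u (ψ n)) / a (u (ψ n)),
        (b2 (u (ψ n)) - b (u (ψ n))) / a (u (ψ n))) ((A₀ : ℝ), B₀)) atTop (𝓝 0) := by
      have := hptend.dist (tendsto_const_nhds (x := ((A₀ : ℝ), B₀)))
      simpa using this
    obtain ⟨n, hn⟩ := (hdist0.eventually (eventually_lt_nhds hε)).exists
    exact absurd hn (not_lt.mpr (hsdist (max N ((ψ n : ℕ) : ℝ))))
  exact ⟨A₀, B₀, hA₀pos,
    ((continuous_fst.tendsto _).comp hpair : _),
    ((continuous_snd.tendsto _).comp hpair : _)⟩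

/-- Difference-of-measures comparison in `toReal` form. -/
lemma measure_toReal_diff_le {Ω : Type*} [MeasureSpace Ω] [IsProbabilityMeasure (ℙ : Measure Ω)]
    {A A' Bset B' : Set Ω} (hA' : A' ⊆ A) (hAB : A \ A' ⊆ Bset \ B') (hB'B : B' ⊆ Bset)
    (hB'm : MeasurableSet B') :
    (ℙ A).toReal ≤ (ℙ A').toReal + ((ℙ Bset).toReal - (ℙ B').toReal) := by
  have h1 : ℙ A ≤ ℙ A' + ℙ (A \ A') := by
    calc ℙ A = ℙ (A' ∪ A \ A') := by rw [Set.union_diff_cancel hA']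
    _ ≤ ℙ A' + ℙ (A \ A') := measure_union_le _ _
  have h2 : (ℙ (A \ A')).toReal ≤ (ℙ (Bset \ B')).toReal :=
    ENNReal.toReal_mono (measure_ne_top _ _) (measure_mono hAB)
  have h3 : ℙ (Bset \ B') = ℙ Bset - ℙ B' :=
    measure_diff hB'B hB'm.nullMeasurableSet (measure_ne_top _ _)
  have h4 : (ℙ (Bset \ B')).toReal = (ℙ Bset).toReal - (ℙ B').toReal := by
    rw [h3, ENNReal.toReal_sub_of_le (measure_mono hB'B) (measure_ne_top _ _)]
  calc (ℙ A).toReal ≤ (ℙ A' + ℙ (A \ A')).toReal :=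
        ENNReal.toReal_mono (by
          exact ENNReal.add_ne_top.mpr ⟨measure_ne_top _ _, measure_ne_top _ _⟩) h1
  _ = (ℙ A').toReal + (ℙ (A \ A')).toReal :=
        ENNReal.toReal_add (measure_ne_top _ _) (measure_ne_top _ _)
  _ ≤ (ℙ A').toReal + ((ℙ Bset).toReal - (ℙ B').toReal) := by
        rw [← h4]; exact add_le_add_right h2 _

/-- Conditioned limit theorem (Heffernan–Resnick): if
`t·P[(X - β(t))/α(t) ≤ x, Y* > t y] → F(x,y)` at continuity points, with the
`Y`-variable standardized (`t·P[Y* > t] → 1`), each `F(·,y)` nondecreasing and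
nondegenerate, and `H = F(·,1)` a probability distribution function, then the
limits `ψ₁(c) = lim α(tc)/α(t) > 0` and `ψ₂(c) = lim (β(tc) - β(t))/α(t)` exist
for every `c > 0` and `(1/c)·F(x,1/c) = H(ψ₁(c)x + ψ₂(c))` at continuity
points. -/
theorem stmt_15 {Ω : Type*} [MeasureSpace Ω] [IsProbabilityMeasure (ℙ : Measure Ω)]
    (X Ys : Ω → ℝ) (hXm : Measurable X) (hYm : Measurable Ys)
    (hYpos : ∀ ω, 0 < Ys ω)
    (α : ℝ → ℝ) (β : ℝ → ℝ) (hα_pos : ∀ t : ℝ, 0 < t → 0 < α t)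
    (F : ℝ → ℝ → ℝ) (hF_nonneg : ∀ x y, 0 ≤ F x y)
    (hconv : ∀ y : ℝ, 0 < y → ∀ x : ℝ, ContinuousAt (fun u => F u y) x →
      Tendsto (fun t : ℝ =>
          t * (ℙ {ω | (X ω - β t) / α t ≤ x ∧ t * y < Ys ω}).toReal) atTop
        (nhds (F x y)))
    (hF_mono : ∀ y : ℝ, 0 < y → Monotone (fun x => F x y))
    (hF_nondeg : ∀ y : ℝ, 0 < y → ∃ x₁ x₂ : ℝ, x₁ ≠ x₂ ∧
      IsPointOfIncrease (fun x => F x y) x₁ ∧ IsPointOfIncrease (fun x => F x y) x₂)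
    (hYstd : Tendsto (fun t : ℝ => t * (ℙ {ω | t < Ys ω}).toReal) atTop (nhds 1))
    (hH1 : Tendsto (fun x => F x 1) atTop (nhds 1)) :
    ∀ c : ℝ, 0 < c → ∃ ψ₁ ψ₂ : ℝ, 0 < ψ₁ ∧
      Tendsto (fun t : ℝ => α (t * c) / α t) atTop (nhds ψ₁) ∧
      Tendsto (fun t : ℝ => (β (t * c) - β t) / α t) atTop (nhds ψ₂) ∧
      ∀ x : ℝ, ContinuousAt (fun u => F u (1 / c)) x →
        ContinuousAt (fun u => F u 1) (ψ₁ * x + ψ₂) →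
        (1 / c) * F x (1 / c) = F (ψ₁ * x + ψ₂) 1 := by
  -- the common monotone family
  set V : ℝ → ℝ → ℝ := fun t u => t * (ℙ {ω | X ω ≤ u ∧ t < Ys ω}).toReal with hVdef
  set U : ℝ → ℝ := fun x => F x 1 with hUdef
  have hVmono : ∀ᶠ t in atTop, Monotone (V t) := by
    filter_upwards [eventually_ge_atTop (0:ℝ)] with t ht u u' huu'
    refine mul_le_mul_of_nonneg_left ?_ ht
    refine ENNReal.toReal_mono (measure_ne_top _ _) (measure_mono ?_)
    intro ω hω
    exact ⟨le_trans hω.1 huu', hω.2⟩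
  have ha : ∀ᶠ t in atTop, 0 < α t := by
    filter_upwards [eventually_gt_atTop (0:ℝ)] with t ht
    exact hα_pos t ht
  have hmul : ∀ c : ℝ, 0 < c → Tendsto (fun t : ℝ => t * c) atTop atTop :=
    fun c hc => tendsto_id.atTop_mul_const hc
  have ha2 : ∀ c : ℝ, 0 < c → ∀ᶠ t in atTop, 0 < α (t * c) := by
    intro c hc
    filter_upwards [eventually_gt_atTop (0:ℝ)] with t ht
    exact hα_pos _ (by positivity)
  -- limit along the identity normalization
  have hUlim : ∀ x, ContinuousAt U x →
      Tendsto (fun t => V t (α t * x + β t)) atTop (𝓝 (U x)) := by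
    intro x hx
    refine (hconv 1 one_pos x hx).congr' ?_
    filter_upwards [eventually_gt_atTop (0:ℝ)] with t ht
    have hαt := hα_pos t ht
    have hset : {ω | (X ω - β t) / α t ≤ x ∧ t * 1 < Ys ω}
        = {ω | X ω ≤ α t * x + β t ∧ t < Ys ω} := by
      ext ω
      simp only [Set.mem_setOf_eq, mul_one]
      constructor
      · rintro ⟨h1, h2⟩
        refine ⟨?_, h2⟩
        rw [div_le_iff₀ hαt] at h1
        linarith [mul_comm x (α t)]
      · rintro ⟨h1, h2⟩
        refine ⟨?_, h2⟩
        rw [div_le_iff₀ hαt]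
        linarith [mul_comm x (α t)]
    rw [hset]
  -- limit along the c-shifted normalization
  have hWVlim : ∀ c : ℝ, 0 < c → ∀ x : ℝ, ContinuousAt (fun u => F u (1/c)) x →
      Tendsto (fun t => V t (α (t * c) * x + β (t * c))) atTop
        (𝓝 ((1/c) * F x (1/c))) := by
    intro c hc x hx
    have hcne : c ≠ 0 := ne_of_gt hc
    have h1 := (hconv (1/c) (by positivity) x hx).comp (hmul c hc)
    refine (h1.const_mul (1/c)).congr' ?_
    filter_upwards [eventually_gt_atTop (0:ℝ)] with t ht
    have htc : (0:ℝ) < t * c := by positivity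
    have hαtc := hα_pos _ htc
    have hset : {ω | (X ω - β (t * c)) / α (t * c) ≤ x ∧ t * c * (1/c) < Ys ω}
        = {ω | X ω ≤ α (t * c) * x + β (t * c) ∧ t < Ys ω} := by
      have htcc : t * c * (1/c) = t := by field_simp
      ext ω
      simp only [Set.mem_setOf_eq, htcc]
      constructor
      · rintro ⟨h1', h2⟩
        refine ⟨?_, h2⟩
        rw [div_le_iff₀ hαtc] at h1'
        linarith [mul_comm x (α (t * c))]
      · rintro ⟨h1', h2⟩
        refine ⟨?_, h2⟩
        rw [div_le_iff₀ hαtc]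
        linarith [mul_comm x (α (t * c))]
    show (1/c) * ((fun s => s * (ℙ {ω | (X ω - β s) / α s ≤ x ∧ s * (1/c) < Ys ω}).toReal) (t * c))
        = V t (α (t * c) * x + β (t * c))
    simp only
    rw [hset]
    have : (1/c) * (t * c) = t := by field_simp
    rw [hVdef]
    simp only
    rw [← mul_assoc, this]
  -- basic facts about U
  have hUmono : Monotone U := hF_mono 1 one_pos
  have hU0 : ∀ x, 0 ≤ U x := fun x => hF_nonneg x 1
  have hU1 : Tendsto U atTop (𝓝 1) := hH1
  have hUdc : {x : ℝ | ¬ ContinuousAt U x}.Countable := hUmono.countable_not_continuousAt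
  have pickU : ∀ {u v : ℝ}, u < v → ∃ z, z ∈ Set.Ioo u v ∧ ContinuousAt U z := by
    intro u v huv
    obtain ⟨z, hz, hzn⟩ := exists_notMem_Ioo_of_countable hUdc huv
    exact ⟨z, hz, not_not.mp hzn⟩
  have hUle1 : ∀ x, U x ≤ 1 := by
    intro x
    obtain ⟨z, hzm, hzc⟩ := pickU (show x < x + 1 by linarith)
    refine le_trans (hUmono (le_of_lt hzm.1)) ?_
    refine le_of_tendsto_of_tendsto (hUlim z hzc) hYstd ?_
    filter_upwards [eventually_ge_atTop (0:ℝ)] with t ht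
    refine mul_le_mul_of_nonneg_left ?_ ht
    refine ENNReal.toReal_mono (measure_ne_top _ _) (measure_mono ?_)
    intro ω hω
    exact hω.2
  -- points of increase of U
  obtain ⟨p₀, q₀, hp₀q₀, hp₀, hq₀⟩ := hF_nondeg 1 one_pos
  have hUincr : ∀ r, IsPointOfIncrease (fun x => F x 1) r → IsPointOfIncrease U r :=
    fun r hr => hr
  have hp₀' := hUincr p₀ hp₀
  have hq₀' := hUincr q₀ hq₀
  -- a middle continuity point strictly between the two increase points
  obtain ⟨p, q, hpq, hpU, hqU⟩ : ∃ p q : ℝ, p < q ∧ IsPointOfIncrease U p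
      ∧ IsPointOfIncrease U q := by
    rcases hp₀q₀.lt_or_gt with h | h
    · exact ⟨p₀, q₀, h, hp₀', hq₀'⟩
    · exact ⟨q₀, p₀, h, hq₀', hp₀'⟩
  obtain ⟨x₁c, hx₁m, hx₁c⟩ := pickU hpq
  set mU := sInf (Set.range U) with hmUdef
  have hbdd : BddBelow (Set.range U) := ⟨0, by rintro y ⟨x, rfl⟩; exact hU0 x⟩
  have hmU_le : ∀ x, mU ≤ U x := fun x => csInf_le hbdd ⟨x, rfl⟩
  have hmU0 : 0 ≤ mU := le_csInf (Set.range_nonempty U) (by rintro y ⟨x, rfl⟩; exact hU0 x)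
  set a1 := U x₁c with ha1def
  have hma : mU < a1 := by
    have h1 : U (p - (x₁c - p)) < U (p + (x₁c - p)) := hpU _ (by linarith [hx₁m.1])
    have h2 : p + (x₁c - p) = x₁c := by ring
    rw [h2] at h1
    exact lt_of_le_of_lt (hmU_le _) h1
  have ha11 : a1 < 1 := by
    have h1 : U (q - (q - x₁c)) < U (q + (q - x₁c)) := hqU _ (by linarith [hx₁m.2])
    have h2 : q - (q - x₁c) = x₁c := by ring
    rw [h2] at h1
    exact lt_of_lt_of_le h1 (hUle1 _)
  have ha10 : 0 < a1 := lt_of_le_of_lt hmU0 hma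
  -- the threshold d₀
  set T : ℝ := max (max a1 (mU / a1)) ((1 - a1) / (1 - mU)) with hTdef
  have hT1 : T < 1 := by
    refine max_lt (max_lt ha11 ?_) ?_
    · rw [div_lt_one ha10]; exact hma
    · rw [div_lt_one (by linarith)]; linarith
  have hT0 : 0 < T := lt_of_lt_of_le ha10 (le_trans (le_max_left _ _) (le_max_left _ _))
  set d₀ : ℝ := (1 + 1/T) / 2 with hd₀def
  have hinvT : 1 < 1/T := by rw [lt_div_iff₀ hT0]; linarith
  have h1d : 1 < d₀ := by rw [hd₀def]; linarith
  have hdT : d₀ < 1/T := by rw [hd₀def]; linarith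
  have hd₀0 : (0:ℝ) < d₀ := by linarith
  -- the relation between U and W for c > 1
  have hUW : ∀ c : ℝ, 1 < c → ∀ x : ℝ, ContinuousAt U x →
      ContinuousAt (fun u => F u (1/c)) x →
      (1/c) * U x ≤ (1/c) * F x (1/c) ∧ (1/c) * F x (1/c) ≤ (1/c) * U x + (1 - 1/c) := by
    intro c hc x hxU hxF
    have hc0 : (0:ℝ) < c := by linarith
    have hκ0 : (0:ℝ) < 1/c := by positivity
    have hUlim_tc : Tendsto (fun t => V (t * c) (α (t * c) * x + β (t * c))) atTop
        (𝓝 (U x)) := (hUlim x hxU).comp (hmul c hc0)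
    have hWx := hWVlim c hc0 x hxF
    constructor
    · refine le_of_tendsto_of_tendsto (hUlim_tc.const_mul (1/c)) hWx ?_
      filter_upwards [eventually_gt_atTop (0:ℝ)] with t ht
      show (1/c) * V (t * c) (α (t * c) * x + β (t * c)) ≤ V t (α (t * c) * x + β (t * c))
      rw [hVdef]
      simp only
      rw [← mul_assoc]
      have hid : 1/c * (t * c) = t := by field_simp
      rw [hid]
      refine mul_le_mul_of_nonneg_left ?_ (le_of_lt ht)
      refine ENNReal.toReal_mono (measure_ne_top _ _) (measure_mono ?_)
      intro ω hω
      refine ⟨hω.1, lt_of_le_of_lt ?_ hω.2⟩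
      exact le_mul_of_one_le_right (le_of_lt ht) (le_of_lt hc)
    · -- upper bound with the layer term
      have hr2 : Tendsto (fun t : ℝ => t * (ℙ {ω | t * c < Ys ω}).toReal) atTop
          (𝓝 (1/c)) := by
        have h1 := (hYstd.comp (hmul c hc0)).const_mul (1/c)
        simp only [mul_one] at h1
        refine h1.congr ?_
        intro t
        show 1/c * ((t * c) * (ℙ {ω | t * c < Ys ω}).toReal) = _
        rw [← mul_assoc]
        have : 1/c * (t * c) = t := by field_simp
        rw [this]
      have hRHS : Tendsto (fun t => (1/c) * V (t * c) (α (t * c) * x + β (t * c))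
          + (t * (ℙ {ω | t < Ys ω}).toReal - t * (ℙ {ω | t * c < Ys ω}).toReal)) atTop
          (𝓝 ((1/c) * U x + (1 - 1/c))) := by
        refine Tendsto.add (hUlim_tc.const_mul (1/c)) ?_
        exact hYstd.sub hr2
      refine le_of_tendsto_of_tendsto hWx hRHS ?_
      filter_upwards [eventually_gt_atTop (0:ℝ)] with t ht
      show V t (α (t * c) * x + β (t * c)) ≤ (1/c) * V (t * c) (α (t * c) * x + β (t * c))
          + (t * (ℙ {ω | t < Ys ω}).toReal - t * (ℙ {ω | t * c < Ys ω}).toReal)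
      rw [hVdef]
      simp only
      rw [← mul_assoc]
      have hid : 1/c * (t * c) = t := by field_simp
      rw [hid]
      set u := α (t * c) * x + β (t * c) with hu
      have hkey := measure_toReal_diff_le (Ω := Ω)
        (A := {ω | X ω ≤ u ∧ t < Ys ω})
        (A' := {ω | X ω ≤ u ∧ t * c < Ys ω})
        (Bset := {ω | t < Ys ω}) (B' := {ω | t * c < Ys ω})
        (by
          intro ω hω
          exact ⟨hω.1, lt_of_le_of_lt (le_mul_of_one_le_right (le_of_lt ht) (le_of_lt hc)) hω.2⟩)
        (by
          intro ω hω
          obtain ⟨h1', h2'⟩ := hω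
          refine ⟨h1'.2, ?_⟩
          intro hcon
          exact h2' ⟨h1'.1, hcon⟩)
        (by
          intro ω hω
          exact lt_of_le_of_lt (le_mul_of_one_le_right (le_of_lt ht) (le_of_lt hc)) hω)
        (hYm measurableSet_Ioi)
      nlinarith [hkey]
  -- the main conclusion for c ∈ (1, d₀]
  have good : ∀ c : ℝ, 1 < c → c ≤ d₀ → ∃ A B : ℝ, 0 < A ∧
      Tendsto (fun t => α (t * c) / α t) atTop (𝓝 A) ∧
      Tendsto (fun t => (β (t * c) - β t) / α t) atTop (𝓝 B) := by
    intro c hc hcd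
    have hc0 : (0:ℝ) < c := by linarith
    have hκ0 : (0:ℝ) < 1/c := by positivity
    have hκ1 : 1/c < 1 := by rw [div_lt_one hc0]; exact hc
    have hκT : T < 1/c := by
      have h1 : 1/d₀ ≤ 1/c := one_div_le_one_div_of_le hc0 hcd
      have h2 : T < 1/d₀ := by
        rw [lt_div_iff₀ hd₀0]
        calc T * d₀ < T * (1/T) := mul_lt_mul_of_pos_left hdT hT0
        _ = 1 := by field_simp
      linarith
    set W : ℝ → ℝ := fun x => (1/c) * F x (1/c) with hWdef
    have hWmono : Monotone W := fun uu vv huv =>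
      mul_le_mul_of_nonneg_left (hF_mono (1/c) hκ0 huv) (le_of_lt hκ0)
    have hWcont : ∀ x, ContinuousAt W x → ContinuousAt (fun u => F u (1/c)) x := by
      intro x hx
      have heq : (fun u => F u (1/c)) = fun u => c * W u := by
        funext u
        rw [hWdef]
        simp only
        field_simp
      rw [heq]
      exact continuousAt_const.mul hx
    have hWlim : ∀ x, ContinuousAt W x →
        Tendsto (fun t => V t (α (t*c) * x + β (t*c))) atTop (𝓝 (W x)) := by
      intro x hx
      exact hWVlim c hc0 x (hWcont x hx)
    have hUWc : ∀ x, ContinuousAt U x → ContinuousAt W x →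
        (1/c) * U x ≤ W x ∧ W x ≤ (1/c) * U x + (1 - 1/c) :=
      fun x hxU hxW => hUW c hc x hxU (hWcont x hxW)
    have hn1 : sInf (Set.range U) < (1/c) * U x₁c := by
      have h1 : mU / a1 < 1/c := lt_of_le_of_lt (le_trans (le_max_right _ _)
        (le_max_left _ _)) hκT
      rw [div_lt_iff₀ ha10] at h1
      rw [← hmUdef, ← ha1def]
      linarith [mul_comm a1 (1/c)]
    have hn2 : (1/c) * sInf (Set.range U) + (1 - 1/c) < U x₁c := by
      have h1 : (1 - a1) / (1 - mU) < 1/c := lt_of_le_of_lt (le_max_right _ _) hκT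
      rw [div_lt_iff₀ (by linarith : (0:ℝ) < 1 - mU)] at h1
      rw [← hmUdef, ← ha1def]
      nlinarith
    have hn3 : U x₁c < 1/c := by
      rw [← ha1def]
      exact lt_of_le_of_lt (le_trans (le_max_left _ _) (le_max_left _ _)) hκT
    exact main_types (V := V) (a := α) (b := β) (a2 := fun t => α (t*c))
      (b2 := fun t => β (t*c)) (U := U) (W := W) (κ := 1/c)
      hVmono ha (ha2 c hc0) hUlim hWlim hUmono hWmono hU0 hU1
      (ne_of_lt hpq) hpU hqU hκ0 hκ1 hUWc hx₁c hn1 hn2 hn3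
  -- reindexing helper
  have hre : ∀ (d : ℝ), 0 < d → ∀ {f : ℝ → ℝ} {L : ℝ}, Tendsto f atTop (𝓝 L) →
      Tendsto (fun t => f (t * d)) atTop (𝓝 L) := fun d hd f L h => h.comp (hmul d hd)
  -- multiplicativity
  have goodMul : ∀ c d : ℝ, 0 < c → 0 < d →
      (∃ A B : ℝ, 0 < A ∧ Tendsto (fun t => α (t * c) / α t) atTop (𝓝 A) ∧
        Tendsto (fun t => (β (t * c) - β t) / α t) atTop (𝓝 B)) →
      (∃ A B : ℝ, 0 < A ∧ Tendsto (fun t => α (t * d) / α t) atTop (𝓝 A) ∧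
        Tendsto (fun t => (β (t * d) - β t) / α t) atTop (𝓝 B)) →
      (∃ A B : ℝ, 0 < A ∧ Tendsto (fun t => α (t * (c * d)) / α t) atTop (𝓝 A) ∧
        Tendsto (fun t => (β (t * (c * d)) - β t) / α t) atTop (𝓝 B)) := by
    rintro c d hc hd ⟨A₁, B₁, hA₁, hAc₁, hBc₁⟩ ⟨A₂, B₂, hA₂, hAc₂, hBc₂⟩
    refine ⟨A₁ * A₂, B₁ * A₂ + B₂, by positivity, ?_, ?_⟩
    · have h1 : Tendsto (fun t => α (t * d * c) / α (t * d)) atTop (𝓝 A₁) := hre d hd hAc₁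
      refine (h1.mul hAc₂).congr' ?_
      filter_upwards [eventually_gt_atTop (0:ℝ)] with t ht
      have h3 : α (t*d) ≠ 0 := ne_of_gt (hα_pos _ (by positivity))
      have h4 : α t ≠ 0 := ne_of_gt (hα_pos _ ht)
      show α (t*d*c) / α (t*d) * (α (t*d) / α t) = α (t*(c*d)) / α t
      rw [show t*(c*d) = t*d*c by ring]
      field_simp
    · have h1 : Tendsto (fun t => (β (t * d * c) - β (t * d)) / α (t * d)) atTop (𝓝 B₁) :=
        hre d hd hBc₁
      have h2 : Tendsto (fun t => α (t * d) / α t) atTop (𝓝 A₂) := hAc₂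
      refine (((h1.mul h2)).add hBc₂).congr' ?_
      filter_upwards [eventually_gt_atTop (0:ℝ)] with t ht
      have h3 : α (t*d) ≠ 0 := ne_of_gt (hα_pos _ (by positivity))
      have h4 : α t ≠ 0 := ne_of_gt (hα_pos _ ht)
      show (β (t*d*c) - β (t*d)) / α (t*d) * (α (t*d) / α t) + (β (t*d) - β t) / α t
          = (β (t*(c*d)) - β t) / α t
      rw [show t*(c*d) = t*d*c by ring]
      field_simp
      ring
  -- inverses
  have goodInv : ∀ c : ℝ, 0 < c →
      (∃ A B : ℝ, 0 < A ∧ Tendsto (fun t => α (t * c) / α t) atTop (𝓝 A) ∧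
        Tendsto (fun t => (β (t * c) - β t) / α t) atTop (𝓝 B)) →
      (∃ A B : ℝ, 0 < A ∧ Tendsto (fun t => α (t * c⁻¹) / α t) atTop (𝓝 A) ∧
        Tendsto (fun t => (β (t * c⁻¹) - β t) / α t) atTop (𝓝 B)) := by
    rintro c hc ⟨A, B, hA, hAc, hBc⟩
    have hcinv : (0:ℝ) < c⁻¹ := by positivity
    refine ⟨A⁻¹, -B * A⁻¹, by positivity, ?_, ?_⟩
    · have h1 : Tendsto (fun t => α (t * c⁻¹ * c) / α (t * c⁻¹)) atTop (𝓝 A) :=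
        hre c⁻¹ hcinv hAc
      refine (h1.inv₀ (ne_of_gt hA)).congr' ?_
      filter_upwards [eventually_gt_atTop (0:ℝ)] with t ht
      have h5 : t * c⁻¹ * c = t := by field_simp
      show (α (t * c⁻¹ * c) / α (t * c⁻¹))⁻¹ = α (t * c⁻¹) / α t
      rw [h5, inv_div]
    · have h1 : Tendsto (fun t => (β (t * c⁻¹ * c) - β (t * c⁻¹)) / α (t * c⁻¹)) atTop
        (𝓝 B) := hre c⁻¹ hcinv hBc
      have h2 : Tendsto (fun t => α (t * c⁻¹ * c) / α (t * c⁻¹)) atTop (𝓝 A) :=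
        hre c⁻¹ hcinv hAc
      refine ((h1.neg).mul (h2.inv₀ (ne_of_gt hA))).congr' ?_
      filter_upwards [eventually_gt_atTop (0:ℝ)] with t ht
      have h5 : t * c⁻¹ * c = t := by field_simp
      have h3 : α (t * c⁻¹) ≠ 0 := ne_of_gt (hα_pos _ (by positivity))
      have h4 : α t ≠ 0 := ne_of_gt (hα_pos _ ht)
      show -((β (t * c⁻¹ * c) - β (t * c⁻¹)) / α (t * c⁻¹)) *
          (α (t * c⁻¹ * c) / α (t * c⁻¹))⁻¹ = (β (t * c⁻¹) - β t) / α t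
      rw [h5, inv_div, neg_mul, div_mul_div_comm,
        mul_comm (β t - β (t * c⁻¹)) (α (t * c⁻¹)), mul_div_mul_left _ _ h3, ← neg_div, neg_sub]
  -- the trivial case c = 1
  have good1 : ∃ A B : ℝ, 0 < A ∧ Tendsto (fun t => α (t * 1) / α t) atTop (𝓝 A) ∧
      Tendsto (fun t => (β (t * 1) - β t) / α t) atTop (𝓝 B) := by
    refine ⟨1, 0, one_pos, ?_, ?_⟩
    · refine tendsto_const_nhds.congr' ?_
      filter_upwards [eventually_gt_atTop (0:ℝ)] with t ht
      rw [mul_one, div_self (ne_of_gt (hα_pos t ht))]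
    · refine tendsto_const_nhds.congr' ?_
      filter_upwards [eventually_gt_atTop (0:ℝ)] with t ht
      rw [mul_one, sub_self, zero_div]
  -- extension to all c > 1 by induction
  have hind : ∀ n : ℕ, ∀ c : ℝ, 1 < c → c ≤ d₀ ^ n →
      ∃ A B : ℝ, 0 < A ∧ Tendsto (fun t => α (t * c) / α t) atTop (𝓝 A) ∧
        Tendsto (fun t => (β (t * c) - β t) / α t) atTop (𝓝 B) := by
    intro n
    induction n with
    | zero =>
      intro c hc hle
      rw [pow_zero] at hle
      linarith
    | succ n ih =>
      intro c hc hle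
      by_cases hcd : c ≤ d₀
      · exact good c hc hcd
      · push_neg at hcd
        have h1 : 1 < c / d₀ := (one_lt_div hd₀0).mpr hcd
        have h2 : c / d₀ ≤ d₀ ^ n := by
          rw [div_le_iff₀ hd₀0]
          rw [pow_succ] at hle
          exact hle
        have h5 := goodMul (c / d₀) d₀ (by positivity) hd₀0 (ih (c / d₀) h1 h2)
          (good d₀ h1d (le_refl _))
        rwa [div_mul_cancel₀ _ (ne_of_gt hd₀0)] at h5
  -- all c > 0
  have hall : ∀ c : ℝ, 0 < c →
      ∃ A B : ℝ, 0 < A ∧ Tendsto (fun t => α (t * c) / α t) atTop (𝓝 A) ∧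
        Tendsto (fun t => (β (t * c) - β t) / α t) atTop (𝓝 B) := by
    intro c hc
    rcases lt_trichotomy c 1 with h | h | h
    · have h1 : 1 < c⁻¹ := (one_lt_inv₀ hc).mpr h
      obtain ⟨n, hn⟩ := pow_unbounded_of_one_lt (c⁻¹) h1d
      have h3 := goodInv c⁻¹ (by positivity) (hind n c⁻¹ h1 (le_of_lt hn))
      rwa [inv_inv] at h3
    · subst h
      exact good1
    · obtain ⟨n, hn⟩ := pow_unbounded_of_one_lt c h1d
      exact hind n c h (le_of_lt hn)
  -- final assembly
  intro c hc
  obtain ⟨A, B, hA, hAc, hBc⟩ := hall c hc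
  refine ⟨A, B, hA, hAc, hBc, ?_⟩
  intro x hxF hxU
  have hWx := hWVlim c hc x hxF
  exact cluster_identity (V := V) (a := α) (b := β) (a2 := fun t => α (t*c))
    (b2 := fun t => β (t*c)) hVmono ha hUlim hUdc
    (s := fun n : ℕ => (n:ℝ)) tendsto_natCast_atTop_atTop hA
    (hAc.comp tendsto_natCast_atTop_atTop) (hBc.comp tendsto_natCast_atTop_atTop)
    hWx hxU
end

section
/- In the setting of the conditioned limit theorem: let (X, Y*) be an ℝ × (0,∞)-valued random vector, α : (0,∞) → (0,∞), β : (0,∞) → ℝ, and F : ℝ × (0,∞) → [0,∞) such that (i) for every y > 0 and every continuity point x of u ↦ F(u,y), t·P[(X − β(t))/α(t) ≤ x, Y* > t·y] → F(x,y); (ii) H(x) := F(x,1) is a nondegenerate probability distribution function; (iii) t·P[Y* > t] → 1; and let ψ₁(c) = lim_t α(tc)/α(t) and ψ₂(c) = lim_t (β(tc) − β(t))/α(t), which exist for all c > 0. Then the limit is a product, i.e., F(x, y) = H(x)·y^{-1} for all y > 0 and all continuity points x of H, if and only if ψ₁(c) = 1 and ψ₂(c) = 0 for all c > 0. -/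
open MeasureTheory ProbabilityTheory Filter

lemma aux_dense {S : Set ℝ} (hS : Sᶜ.Countable) : Dense S := by
  have := hS.dense_compl ℝ
  rwa [compl_compl] at this

lemma aux_mem_Ioo {S : Set ℝ} (hS : Sᶜ.Countable) {a b : ℝ} (hab : a < b) :
    ∃ u ∈ S, u ∈ Set.Ioo a b :=
  (aux_dense hS).exists_mem_open isOpen_Ioo (Set.nonempty_Ioo.2 hab)

lemma aux_sandwich {g : ℝ → ℝ → ℝ} {G : ℝ → ℝ}
    (hg : ∀ᶠ t : ℝ in atTop, Monotone (g t))
    {S : Set ℝ} (hS : Sᶜ.Countable)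
    (hlim : ∀ u ∈ S, Tendsto (fun t => g t u) atTop (nhds (G u)))
    {m : ℝ → ℝ} {u₀ : ℝ} (hm : Tendsto m atTop (nhds u₀))
    (hu₀ : ContinuousAt G u₀) :
    Tendsto (fun t => g t (m t)) atTop (nhds (G u₀)) := by
  rw [Metric.tendsto_nhds]
  intro ε hε
  have hε2 : 0 < ε / 2 := by linarith
  obtain ⟨δ, hδ, hδ'⟩ := Metric.continuousAt_iff.1 hu₀ (ε / 2) hε2
  obtain ⟨u', hu'S, hu'⟩ := aux_mem_Ioo hS (show u₀ - δ < u₀ by linarith)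
  obtain ⟨u'', hu''S, hu''⟩ := aux_mem_Ioo hS (show u₀ < u₀ + δ by linarith)
  have hGu' : |G u' - G u₀| < ε / 2 := by
    have := hδ' (x := u') (by rw [Real.dist_eq]; rw [abs_lt]; constructor <;>
      [linarith [hu'.1]; linarith [hu'.2]])
    rwa [Real.dist_eq] at this
  have hGu'' : |G u'' - G u₀| < ε / 2 := by
    have := hδ' (x := u'') (by rw [Real.dist_eq]; rw [abs_lt]; constructor <;>
      [linarith [hu''.1]; linarith [hu''.2]])
    rwa [Real.dist_eq] at this
  have hmem : ∀ᶠ t in atTop, m t ∈ Set.Ioo u' u'' :=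
    hm (Ioo_mem_nhds hu'.2 hu''.1)
  have h1 : ∀ᶠ t in atTop, dist (g t u') (G u') < ε / 2 :=
    Metric.tendsto_nhds.1 (hlim u' hu'S) _ hε2
  have h2 : ∀ᶠ t in atTop, dist (g t u'') (G u'') < ε / 2 :=
    Metric.tendsto_nhds.1 (hlim u'' hu''S) _ hε2
  filter_upwards [hmem, h1, h2, hg] with t ht h1t h2t hmono
  rw [Real.dist_eq] at h1t h2t ⊢
  have hl : g t u' ≤ g t (m t) := hmono ht.1.le
  have hr : g t (m t) ≤ g t u'' := hmono ht.2.le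
  rw [abs_lt] at h1t h2t hGu' hGu'' ⊢
  constructor <;> [nlinarith; nlinarith]

lemma aux_ext_at {G₁ G₂ : ℝ → ℝ} (h₁ : Monotone G₁)
    {S : Set ℝ} (hS : Sᶜ.Countable) (heq : ∀ u ∈ S, G₁ u = G₂ u)
    {x : ℝ} (hx : ContinuousAt G₂ x) : G₁ x = G₂ x := by
  by_contra hne
  have hε : 0 < |G₁ x - G₂ x| := abs_pos.2 (sub_ne_zero.2 hne)
  obtain ⟨δ, hδ, hδ'⟩ := Metric.continuousAt_iff.1 hx _ hε
  obtain ⟨u', hu'S, hu'⟩ := aux_mem_Ioo hS (show x - δ < x by linarith)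
  obtain ⟨u'', hu''S, hu''⟩ := aux_mem_Ioo hS (show x < x + δ by linarith)
  have hGu' : |G₂ u' - G₂ x| < |G₁ x - G₂ x| := by
    have := hδ' (x := u') (by rw [Real.dist_eq, abs_lt]; constructor <;>
      [linarith [hu'.1]; linarith [hu'.2]])
    rwa [Real.dist_eq] at this
  have hGu'' : |G₂ u'' - G₂ x| < |G₁ x - G₂ x| := by
    have := hδ' (x := u'') (by rw [Real.dist_eq, abs_lt]; constructor <;>
      [linarith [hu''.1]; linarith [hu''.2]])
    rwa [Real.dist_eq] at this
  have e1 : G₁ u' = G₂ u' := heq _ hu'S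
  have e2 : G₁ u'' = G₂ u'' := heq _ hu''S
  have l1 : G₁ u' ≤ G₁ x := h₁ hu'.2.le
  have l2 : G₁ x ≤ G₁ u'' := h₁ hu''.1.le
  rw [abs_lt] at hGu' hGu''
  have : |G₁ x - G₂ x| < |G₁ x - G₂ x| := abs_lt.2 ⟨by linarith, by linarith⟩
  exact lt_irrefl _ this

lemma aux_ext_rc {G₁ G₂ : ℝ → ℝ} (h₁ : Monotone G₁) (h₂ : Monotone G₂)
    {S : Set ℝ} (hS : Sᶜ.Countable) (heq : ∀ u ∈ S, G₁ u = G₂ u)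
    {x : ℝ} (hx₁ : ContinuousWithinAt G₁ (Set.Ici x) x)
    (hx₂ : ContinuousWithinAt G₂ (Set.Ici x) x) : G₁ x = G₂ x := by
  by_contra hne
  have hε : 0 < |G₁ x - G₂ x| / 2 := by
    have := abs_pos.2 (sub_ne_zero.2 hne); linarith
  have hE₁ : G₁ ⁻¹' Metric.ball (G₁ x) (|G₁ x - G₂ x| / 2) ∈ nhdsWithin x (Set.Ici x) :=
    hx₁ (Metric.ball_mem_nhds _ hε)
  have hE₂ : G₂ ⁻¹' Metric.ball (G₂ x) (|G₁ x - G₂ x| / 2) ∈ nhdsWithin x (Set.Ici x) :=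
    hx₂ (Metric.ball_mem_nhds _ hε)
  obtain ⟨δ, hδ, hδ'⟩ := Metric.mem_nhdsWithin_iff.1 (Filter.inter_mem hE₁ hE₂)
  obtain ⟨u, huS, hu⟩ := aux_mem_Ioo hS (show x < x + δ by linarith)
  have humem : u ∈ Metric.ball x δ ∩ Set.Ici x := by
    constructor
    · rw [Metric.mem_ball, Real.dist_eq, abs_lt]
      constructor <;> [linarith [hu.1]; linarith [hu.2]]
    · exact le_of_lt hu.1
  obtain ⟨hb₁, hb₂⟩ := hδ' humem
  rw [Set.mem_preimage, Metric.mem_ball, Real.dist_eq, abs_lt] at hb₁ hb₂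
  have e : G₁ u = G₂ u := heq _ huS
  have l1 : G₁ x ≤ G₁ u := h₁ hu.1.le
  have l2 : G₂ x ≤ G₂ u := h₂ hu.1.le
  have : |G₁ x - G₂ x| < |G₁ x - G₂ x| := by
    rw [abs_lt]
    constructor
    · rcases abs_cases (G₁ x - G₂ x) with ⟨h, _⟩ | ⟨h, _⟩ <;> linarith
    · rcases abs_cases (G₁ x - G₂ x) with ⟨h, _⟩ | ⟨h, _⟩ <;> linarith
  exact lt_irrefl _ this

lemma aux_contraction {H : ℝ → ℝ} (hmono : Monotone H) {a b : ℝ}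
    (ha0 : 0 < a) (ha1 : a < 1) (hfix : ∀ x, H (a * x + b) = H x)
    {x₁ x₂ : ℝ} (h12 : x₁ ≠ x₂)
    (hp₁ : IsPointOfIncrease H x₁) (hp₂ : IsPointOfIncrease H x₂) : False := by
  set p : ℝ := b / (1 - a) with hp
  have hap : a * p + b = p := by
    have : (1 : ℝ) - a ≠ 0 := by linarith
    rw [hp]
    field_simp
    ring
  have hiter : ∀ (n : ℕ) (x : ℝ), H (a ^ n * (x - p) + p) = H x := by
    intro n
    induction n with
    | zero => intro x; simp
    | succ n ih =>
      intro x
      have harg : a ^ (n + 1) * (x - p) + p = a * (a ^ n * (x - p) + p) + b := by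
        rw [pow_succ]; nlinarith [hap]
      rw [harg, hfix, ih]
  have hpow : Tendsto (fun n : ℕ => a ^ n) atTop (nhds 0) :=
    tendsto_pow_atTop_nhds_zero_of_lt_one ha0.le ha1
  have habove : ∀ x x' : ℝ, p < x' → x' ≤ x → H x = H x' := by
    intro x x' hpx' hx'x
    refine le_antisymm ?_ (hmono hx'x)
    have hlim : Tendsto (fun n : ℕ => a ^ n * (x - p)) atTop (nhds 0) := by
      simpa using hpow.mul_const (x - p)
    obtain ⟨n, hn⟩ := ((tendsto_order.1 hlim).2 _ (show (0:ℝ) < x' - p by linarith)).exists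
    calc H x = H (a ^ n * (x - p) + p) := (hiter n x).symm
      _ ≤ H x' := hmono (by linarith)
  have hbelow : ∀ x x' : ℝ, x ≤ x' → x' < p → H x = H x' := by
    intro x x' hxx' hx'p
    refine le_antisymm (hmono hxx') ?_
    have hlim : Tendsto (fun n : ℕ => a ^ n * (x - p)) atTop (nhds 0) := by
      simpa using hpow.mul_const (x - p)
    obtain ⟨n, hn⟩ := ((tendsto_order.1 hlim).1 _ (show x' - p < (0:ℝ) by linarith)).exists
    calc H x' ≤ H (a ^ n * (x - p) + p) := hmono (by linarith)
      _ = H x := hiter n x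
  have key : ∀ z, IsPointOfIncrease H z → z = p := by
    intro z hz
    by_contra hzp
    rcases lt_or_gt_of_ne hzp with h | h
    · have hε : 0 < (p - z) / 2 := by linarith
      have h1 := hz _ hε
      have h2 : H (z + (p - z) / 2) = H (z - (p - z) / 2) :=
        (hbelow _ _ (by linarith) (by linarith)).symm
      linarith
    · have hε : 0 < (z - p) / 2 := by linarith
      have h1 := hz _ hε
      have h2 : H (z + (z - p) / 2) = H (z - (z - p) / 2) :=
        habove _ _ (by linarith) (by linarith)
      linarith
  exact h12 ((key _ hp₁).trans (key _ hp₂).symm)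

lemma aux_translation_pos {H : ℝ → ℝ} {b : ℝ} (hb : 0 < b)
    (hfix : ∀ x, H (x + b) = H x)
    (htop : Tendsto H atTop (nhds 1)) (hbot : Tendsto H atBot (nhds 0)) : False := by
  have hfix' : ∀ x, H (x - b) = H x := by
    intro x
    have := hfix (x - b)
    simpa using this.symm
  have hiter : ∀ (n : ℕ) (x : ℝ), H (x + n * b) = H x := by
    intro n
    induction n with
    | zero => intro x; simp
    | succ n ih =>
      intro x
      have harg : x + (n + 1 : ℕ) * b = (x + n * b) + b := by push_cast; ring
      rw [harg, hfix, ih]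
  have hiter' : ∀ (n : ℕ) (x : ℝ), H (x - n * b) = H x := by
    intro n
    induction n with
    | zero => intro x; simp
    | succ n ih =>
      intro x
      have harg : x - (n + 1 : ℕ) * b = (x - n * b) - b := by push_cast; ring
      rw [harg, hfix', ih]
  have hA : Tendsto (fun n : ℕ => (n : ℝ) * b) atTop atTop :=
    tendsto_natCast_atTop_atTop.atTop_mul_const hb
  have hup : Tendsto (fun n : ℕ => (0 : ℝ) + n * b) atTop atTop := by
    simpa using hA
  have hdn : Tendsto (fun n : ℕ => (0 : ℝ) - n * b) atTop atBot := by
    have := tendsto_neg_atTop_atBot.comp hA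
    simp only [Function.comp_def] at this
    refine this.congr (fun n => by simp)
  have h1 : Tendsto (fun n : ℕ => H ((0 : ℝ) + n * b)) atTop (nhds 1) := htop.comp hup
  have h0 : Tendsto (fun n : ℕ => H ((0 : ℝ) - n * b)) atTop (nhds 0) := hbot.comp hdn
  have e1 : (fun n : ℕ => H ((0 : ℝ) + n * b)) = fun _ => H 0 := by
    funext n; exact hiter n 0
  have e0 : (fun n : ℕ => H ((0 : ℝ) - n * b)) = fun _ => H 0 := by
    funext n; exact hiter' n 0
  rw [e1] at h1; rw [e0] at h0
  have r1 : (1 : ℝ) = H 0 := tendsto_nhds_unique h1 tendsto_const_nhds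
  have r0 : (0 : ℝ) = H 0 := tendsto_nhds_unique h0 tendsto_const_nhds
  linarith

/-- In the setting of the conditioned limit theorem with the `Y`-variable
standardized, the limit is a product, `F(x,y) = H(x)·y⁻¹` at continuity points of
`H = F(·,1)`, if and only if `ψ₁(c) = lim α(tc)/α(t) = 1` and
`ψ₂(c) = lim (β(tc) - β(t))/α(t) = 0` for all `c > 0`. -/
theorem stmt_16 {Ω : Type*} [MeasureSpace Ω] [IsProbabilityMeasure (ℙ : Measure Ω)]
    (X Ys : Ω → ℝ) (hXm : Measurable X) (hYm : Measurable Ys)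
    (hYpos : ∀ ω, 0 < Ys ω)
    (α : ℝ → ℝ) (β : ℝ → ℝ) (hα_pos : ∀ t : ℝ, 0 < t → 0 < α t)
    (F : ℝ → ℝ → ℝ) (hF_nonneg : ∀ x y, 0 ≤ F x y)
    (hF_mono : ∀ y : ℝ, 0 < y → Monotone (fun x => F x y))
    (hconv : ∀ y : ℝ, 0 < y → ∀ x : ℝ, ContinuousAt (fun u => F u y) x →
      Tendsto (fun t : ℝ =>
          t * (ℙ {ω | (X ω - β t) / α t ≤ x ∧ t * y < Ys ω}).toReal) atTop
        (nhds (F x y)))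
    -- `H := F(·,1)` is a nondegenerate probability distribution function:
    (hH_rc : ∀ x : ℝ, ContinuousWithinAt (fun u => F u 1) (Set.Ici x) x)
    (hH_top : Tendsto (fun x => F x 1) atTop (nhds 1))
    (hH_bot : Tendsto (fun x => F x 1) atBot (nhds 0))
    (hH_nondeg : ∃ x₁ x₂ : ℝ, x₁ ≠ x₂ ∧
      IsPointOfIncrease (fun x => F x 1) x₁ ∧ IsPointOfIncrease (fun x => F x 1) x₂)
    (hYstd : Tendsto (fun t : ℝ => t * (ℙ {ω | t < Ys ω}).toReal) atTop (nhds 1))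
    (ψ₁ ψ₂ : ℝ → ℝ)
    (hψ₁ : ∀ c : ℝ, 0 < c →
      Tendsto (fun t : ℝ => α (t * c) / α t) atTop (nhds (ψ₁ c)))
    (hψ₂ : ∀ c : ℝ, 0 < c →
      Tendsto (fun t : ℝ => (β (t * c) - β t) / α t) atTop (nhds (ψ₂ c))) :
    (∀ y : ℝ, 0 < y → ∀ x : ℝ, ContinuousAt (fun u => F u 1) x →
        F x y = F x 1 * y⁻¹) ↔
      (∀ c : ℝ, 0 < c → ψ₁ c = 1 ∧ ψ₂ c = 0) := by
  classical
  -- positivity of ψ₁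
  have hψ₁pos : ∀ c : ℝ, 0 < c → 0 < ψ₁ c := by
    intro c hc
    have h1 := hψ₁ c hc
    have h2 : Tendsto (fun t : ℝ => α (t * c * c⁻¹) / α (t * c)) atTop (nhds (ψ₁ c⁻¹)) := by
      have := (hψ₁ c⁻¹ (inv_pos.2 hc)).comp (tendsto_id.atTop_mul_const hc)
      simpa [Function.comp_def] using this
    have h3 := h1.mul h2
    have h4 : (fun t : ℝ => α (t * c) / α t * (α (t * c * c⁻¹) / α (t * c)))
        =ᶠ[atTop] (fun _ => (1 : ℝ)) := by
      filter_upwards [eventually_gt_atTop 0] with t ht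
      have htc : t * c * c⁻¹ = t := by field_simp
      have h5 : α t ≠ 0 := ne_of_gt (hα_pos t ht)
      have h6 : α (t * c) ≠ 0 := ne_of_gt (hα_pos _ (mul_pos ht hc))
      rw [htc]
      field_simp
    have huniq : ψ₁ c * ψ₁ c⁻¹ = 1 :=
      tendsto_nhds_unique (h3.congr' h4) tendsto_const_nhds
    have hnonneg : 0 ≤ ψ₁ c := by
      refine ge_of_tendsto h1 ?_
      filter_upwards [eventually_gt_atTop 0] with t ht
      exact div_nonneg (hα_pos _ (mul_pos ht hc)).le (hα_pos t ht).le
    rcases hnonneg.lt_or_eq with h | h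
    · exact h
    · exfalso; rw [← h] at huniq; simp at huniq
  -- countability of discontinuity sets
  have hcount : ∀ y : ℝ, 0 < y → ({u | ContinuousAt (fun v => F v y) u}ᶜ).Countable := by
    intro y hy
    have := (hF_mono y hy).countable_not_continuousAt
    rwa [show {u | ContinuousAt (fun v => F v y) u}ᶜ = {u | ¬ContinuousAt (fun v => F v y) u}
      from Set.compl_setOf _]
  -- the key scaling relation
  have hR : ∀ c : ℝ, 0 < c → ∀ y : ℝ, 0 < y → ∀ x : ℝ,
      ContinuousAt (fun u => F u (c * y)) x →
      ContinuousAt (fun u => F u y) ((x - ψ₂ c) / ψ₁ c) →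
      F x (c * y) = c⁻¹ * F ((x - ψ₂ c) / ψ₁ c) y := by
    intro c hc y hy x hx hx'
    have hcy : 0 < c * y := mul_pos hc hy
    have hA := hconv (c * y) hcy x hx
    set m : ℝ → ℝ := fun t => (x * α t + β t - β (t * c)) / α (t * c) with hmdef
    set g : ℝ → ℝ → ℝ := fun t u =>
      t * (ℙ {ω | (X ω - β (t * c)) / α (t * c) ≤ u ∧ (t * c) * y < Ys ω}).toReal with hgdef
    have hgmono : ∀ᶠ t : ℝ in atTop, Monotone (g t) := by
      filter_upwards [eventually_ge_atTop (0 : ℝ)] with t ht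
      intro u v huv
      simp only [hgdef]
      refine mul_le_mul_of_nonneg_left ?_ ht
      refine ENNReal.toReal_mono (measure_ne_top _ _) (measure_mono ?_)
      intro ω hω
      exact ⟨le_trans hω.1 huv, hω.2⟩
    have hlim : ∀ u ∈ {u : ℝ | ContinuousAt (fun v => F v y) u},
        Tendsto (fun t => g t u) atTop (nhds (c⁻¹ * F u y)) := by
      intro u hu
      have h0 := (hconv y hy u hu).comp (tendsto_id.atTop_mul_const hc)
      simp only [Function.comp, id_eq] at h0
      have h1 := h0.const_mul c⁻¹
      refine h1.congr ?_
      intro t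
      have hcc : c⁻¹ * (t * c) = t := by field_simp
      simp only [hgdef, Function.comp]
      rw [← mul_assoc, hcc]
    have hu₀ : Tendsto m atTop (nhds ((x - ψ₂ c) / ψ₁ c)) := by
      have h5 : Tendsto (fun t : ℝ => (x - (β (t * c) - β t) / α t) / (α (t * c) / α t)) atTop
          (nhds ((x - ψ₂ c) / ψ₁ c)) :=
        (tendsto_const_nhds.sub (hψ₂ c hc)).div (hψ₁ c hc) (ne_of_gt (hψ₁pos c hc))
      refine h5.congr' ?_
      filter_upwards [eventually_gt_atTop 0] with t ht
      have h6 : α t ≠ 0 := ne_of_gt (hα_pos t ht)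
      have h7 : α (t * c) ≠ 0 := ne_of_gt (hα_pos _ (mul_pos ht hc))
      simp only [hmdef]
      field_simp
      ring
    have hB := aux_sandwich hgmono (hcount y hy) hlim hu₀ (continuousAt_const.mul hx')
    have hAB : (fun t : ℝ =>
        t * (ℙ {ω | (X ω - β t) / α t ≤ x ∧ t * (c * y) < Ys ω}).toReal)
        =ᶠ[atTop] fun t => g t (m t) := by
      filter_upwards [eventually_gt_atTop 0] with t ht
      have hα1 : 0 < α t := hα_pos t ht
      have hα2 : 0 < α (t * c) := hα_pos _ (mul_pos ht hc)
      have hset : {ω | (X ω - β t) / α t ≤ x ∧ t * (c * y) < Ys ω} =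
          {ω | (X ω - β (t * c)) / α (t * c) ≤ m t ∧ (t * c) * y < Ys ω} := by
        ext ω
        simp only [Set.mem_setOf_eq, hmdef]
        have hiff1 : (X ω - β t) / α t ≤ x ↔
            (X ω - β (t * c)) / α (t * c) ≤ (x * α t + β t - β (t * c)) / α (t * c) := by
          rw [div_le_iff₀ hα1, div_le_iff₀ hα2, div_mul_cancel₀ _ (ne_of_gt hα2)]
          constructor <;> intro h <;> linarith
        have hiff2 : t * (c * y) < Ys ω ↔ (t * c) * y < Ys ω := by rw [mul_assoc]
        exact and_congr hiff1 hiff2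
      rw [hset]
    exact tendsto_nhds_unique (hA.congr' hAB) hB
  constructor
  · -- product form implies ψ₁ = 1 and ψ₂ = 0
    intro hprod c hc
    obtain ⟨x₁, x₂, h12, hp₁, hp₂⟩ := hH_nondeg
    have ha : 0 < ψ₁ c := hψ₁pos c hc
    set a : ℝ := ψ₁ c with hadef
    set b : ℝ := ψ₂ c with hbdef
    have hφmono : Monotone (fun u : ℝ => (u - b) / a) := fun u v huv =>
      (div_le_div_iff_of_pos_right ha).2 (by linarith)
    have hφcont : Continuous (fun u : ℝ => (u - b) / a) :=
      (continuous_id.sub continuous_const).div_const a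
    have hHφ : ∀ x : ℝ, F x 1 = F ((x - b) / a) 1 := by
      set S : Set ℝ := ({u | ContinuousAt (fun v => F v c) u} ∩
          {u | ContinuousAt (fun v => F v 1) u}) ∩
          (fun u : ℝ => (u - b) / a) ⁻¹' {u | ContinuousAt (fun v => F v 1) u} with hSdef
      have hSc : Sᶜ.Countable := by
        rw [hSdef, Set.compl_inter, Set.compl_inter]
        refine (((hcount c hc).union (hcount 1 one_pos)).union ?_)
        have himg : ((fun u : ℝ => (u - b) / a) ⁻¹'
            {u | ContinuousAt (fun v => F v 1) u})ᶜ ⊆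
            (fun u : ℝ => a * u + b) '' {u | ContinuousAt (fun v => F v 1) u}ᶜ := by
          intro x hx
          refine ⟨(x - b) / a, hx, ?_⟩
          field_simp
          ring
        exact Set.Countable.mono himg (((hcount 1 one_pos)).image _)
      have heq : ∀ u ∈ S, F u 1 = F ((u - b) / a) 1 := by
        intro u hu
        obtain ⟨⟨hu1, hu2⟩, hu3⟩ := hu
        have hcy : ContinuousAt (fun v => F v (c * 1)) u := by
          rw [mul_one]; exact hu1
        have hRu := hR c hc 1 one_pos u hcy hu3
        rw [mul_one] at hRu
        have hpu := hprod c hc u hu2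
        have hkey : F u 1 * c⁻¹ = F ((u - b) / a) 1 * c⁻¹ := by
          rw [← hpu, hRu, mul_comm]
        exact mul_right_cancel₀ (inv_ne_zero (ne_of_gt hc)) hkey
      intro x
      refine aux_ext_rc (hF_mono 1 one_pos) ((hF_mono 1 one_pos).comp hφmono) hSc heq
        (hH_rc x) ?_
      have hmaps : Set.MapsTo (fun u : ℝ => (u - b) / a) (Set.Ici x)
          (Set.Ici ((x - b) / a)) := fun u hu => hφmono hu
      have hcw : ContinuousWithinAt (fun u : ℝ => (u - b) / a) (Set.Ici x) x :=
        hφcont.continuousWithinAt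
      have := ContinuousWithinAt.comp (f := fun u : ℝ => (u - b) / a)
        (g := fun u : ℝ => F u 1) (x := x) (s := Set.Ici x)
        (t := Set.Ici ((x - b) / a)) (hH_rc _) hcw hmaps
      simpa [Function.comp] using this
    have ha1 : a = 1 := by
      by_contra hne
      have hHf : ∀ x : ℝ, F (a * x + b) 1 = F x 1 := by
        intro x
        have h := hHφ (a * x + b)
        have harg : (a * x + b - b) / a = x := by field_simp; ring
        rw [harg] at h
        exact h
      rcases lt_or_gt_of_ne hne with h | h
      · exact aux_contraction (hF_mono 1 one_pos) ha h hHf h12 hp₁ hp₂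
      · have hHf' : ∀ x : ℝ, F (a⁻¹ * x + -(b / a)) 1 = F x 1 := by
          intro x
          have h' := hHφ x
          have harg : (x - b) / a = a⁻¹ * x + -(b / a) := by
            field_simp
            ring
          rw [harg] at h'
          exact h'.symm
        exact aux_contraction (hF_mono 1 one_pos) (inv_pos.2 ha) (inv_lt_one_of_one_lt₀ h) hHf'
          h12 hp₁ hp₂
    have hb0 : b = 0 := by
      by_contra hb
      have hHf : ∀ x : ℝ, F (x + b) 1 = F x 1 := by
        intro x
        have h := hHφ (x + b)
        rw [ha1] at h
        simp only [div_one, add_sub_cancel_right] at h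
        exact h
      rcases lt_or_gt_of_ne hb with h | h
      · have hfix2 : ∀ x : ℝ, F (x + -b) 1 = F x 1 := by
          intro x
          have := hHf (x + -b)
          rw [show x + -b + b = x by ring] at this
          exact this.symm
        exact aux_translation_pos (neg_pos.2 h) hfix2 hH_top hH_bot
      · exact aux_translation_pos h hHf hH_top hH_bot
    exact ⟨ha1, hb0⟩
  · -- ψ₁ = 1 and ψ₂ = 0 imply the product form
    intro hψ y hy x hxH
    have h1 := (hψ y hy).1
    have h2 := (hψ y hy).2
    set S : Set ℝ := {u | ContinuousAt (fun v => F v y) u} ∩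
        {u | ContinuousAt (fun v => F v 1) u} with hSdef
    have hSc : Sᶜ.Countable := by
      rw [hSdef, Set.compl_inter]
      exact (hcount y hy).union (hcount 1 one_pos)
    have heq : ∀ u ∈ S, F u y = F u 1 * y⁻¹ := by
      intro u hu
      have hcy : ContinuousAt (fun v => F v (y * 1)) u := by
        rw [mul_one]; exact hu.1
      have hcu : ContinuousAt (fun v => F v 1) ((u - ψ₂ y) / ψ₁ y) := by
        rw [h1, h2]
        simpa using hu.2
      have hRu := hR y hy 1 one_pos u hcy hcu
      rw [mul_one, h1, h2, sub_zero, div_one] at hRu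
      rw [hRu, mul_comm]
    exact aux_ext_at (hF_mono y hy)
      hSc heq (hxH.mul continuousAt_const)
end

section
/- Let Φ denote the standard normal distribution function, Φ(x) = ∫_{−∞}^x e^{−t²/2}/√(2π) dt. Define b(t) = (1/(1−Φ))^←(t) (the left-continuous inverse of 1/(1−Φ)) and a(t) = 1/√(2 log t) for t > 1. Then for every x ∈ ℝ, t·(1 − Φ(a(t)·x + b(t))) → e^{−x} as t → ∞; equivalently, if N is a standard normal random variable, t·P[(N − b(t))/a(t) > x] → e^{−x} for all x ∈ ℝ. -/
open MeasureTheory Filter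

/-- The standard normal distribution function. -/
noncomputable def stdNormalCDF (x : ℝ) : ℝ :=
  ∫ t in Set.Iic x, Real.exp (-(t ^ 2) / 2) / Real.sqrt (2 * Real.pi)

namespace Stmt18Aux

open Real Set

noncomputable def pdf (t : ℝ) : ℝ := Real.exp (-(t ^ 2) / 2) / Real.sqrt (2 * Real.pi)

noncomputable def Q (y : ℝ) : ℝ := 1 - stdNormalCDF y

lemma pdf_pos (t : ℝ) : 0 < pdf t :=
  div_pos (exp_pos _) (Real.sqrt_pos.2 (by positivity))

lemma integrable_pdf : Integrable pdf := by
  have h : Integrable (fun t : ℝ => Real.exp (-(1/2) * t ^ 2)) := integrable_exp_neg_mul_sq (by norm_num)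
  have : pdf = fun t => Real.exp (-(1/2) * t ^ 2) * (1 / Real.sqrt (2 * Real.pi)) := by
    funext t
    rw [pdf, show -(t^2)/2 = -(1/2)*t^2 by ring, div_eq_mul_inv, ← one_div]
  rw [this]
  exact h.mul_const _

lemma integral_pdf : ∫ t, pdf t = 1 := by
  have h : ∫ t : ℝ, Real.exp (-(1/2) * t ^ 2) = Real.sqrt (Real.pi / (1/2)) :=
    integral_gaussian (1/2)
  have h2 : ∫ t, pdf t = (∫ t : ℝ, Real.exp (-(1/2) * t ^ 2)) / Real.sqrt (2 * Real.pi) := by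
    rw [← integral_div]; congr 1; funext t
    rw [pdf, show -(t^2)/2 = -(1/2)*t^2 by ring]
  rw [h2, h]
  rw [show Real.pi / (1/2) = 2 * Real.pi by ring]
  exact div_self (by positivity)

lemma Q_eq (y : ℝ) : Q y = ∫ t in Set.Ioi y, pdf t := by
  have := intervalIntegral.integral_Iic_add_Ioi (f := pdf) (b := y) (μ := volume)
    integrable_pdf.integrableOn integrable_pdf.integrableOn
  rw [integral_pdf] at this
  simp only [Q, stdNormalCDF]
  have hp : (∫ t in Set.Iic y, pdf t) = ∫ t in Set.Iic y, Real.exp (-(t ^ 2) / 2) / Real.sqrt (2 * Real.pi) := rfl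
  linarith [this, hp ▸ this]

lemma Q_pos (y : ℝ) : 0 < Q y := by
  rw [Q_eq]
  have h1 : (0:ℝ) < ∫ t in Set.Ioc y (y+1), pdf t := by
    rw [← intervalIntegral.integral_of_le (by linarith)]
    apply intervalIntegral.intervalIntegral_pos_of_pos_on
    · exact (integrable_pdf.intervalIntegrable)
    · intro t _; exact pdf_pos t
    · linarith
  have h2 : (∫ t in Set.Ioc y (y+1), pdf t) ≤ ∫ t in Set.Ioi y, pdf t := by
    apply setIntegral_mono_set integrable_pdf.integrableOn
      (Filter.Eventually.of_forall fun t => (pdf_pos t).le)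
    exact HasSubset.Subset.eventuallyLE Set.Ioc_subset_Ioi_self
  linarith

lemma cdf_lt_one (y : ℝ) : stdNormalCDF y < 1 := by
  have := Q_pos y; simp only [Q] at this; linarith

lemma Q_strictAnti : StrictAnti Q := by
  intro y z hyz
  have : Q y - Q z = ∫ t in Set.Ioc y z, pdf t := by
    simp only [Q]
    have := intervalIntegral.integral_Iic_sub_Iic (f := pdf) (μ := volume)
      integrable_pdf.integrableOn integrable_pdf.integrableOn (a := y) (b := z)
    simp only [stdNormalCDF]
    have hp : ∀ w, (∫ t in Set.Iic w, pdf t) = ∫ t in Set.Iic w, Real.exp (-(t ^ 2) / 2) / Real.sqrt (2 * Real.pi) := fun _ => rfl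
    rw [← hp, ← hp, ← intervalIntegral.integral_of_le hyz.le, ← this]
    ring
  have hpos : (0:ℝ) < ∫ t in Set.Ioc y z, pdf t := by
    rw [← intervalIntegral.integral_of_le hyz.le]
    apply intervalIntegral.intervalIntegral_pos_of_pos_on
    · exact integrable_pdf.intervalIntegrable
    · intro t _; exact pdf_pos t
    · exact hyz
  linarith

lemma pdf_continuous : Continuous pdf := by
  unfold pdf; fun_prop

lemma hasDerivAt_pdf (t : ℝ) : HasDerivAt pdf (-t * pdf t) t := by
  have h1 : HasDerivAt (fun t : ℝ => -(t^2)/2) (-t) t := by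
    have := ((hasDerivAt_pow 2 t).neg).div_const 2
    exact this.congr_deriv (by norm_num; ring)
  have h2 := (h1.exp).div_const (Real.sqrt (2*Real.pi))
  exact h2.congr_deriv (by unfold pdf; ring)

lemma pdf_tendsto_atTop : Tendsto pdf atTop (nhds 0) := by
  have h0 : Tendsto (fun t : ℝ => -(t^2)/2) atTop atBot := by
    apply Tendsto.atBot_div_const (by norm_num)
    exact tendsto_neg_atBot_iff.2 (tendsto_pow_atTop two_ne_zero)
  have h1 : Tendsto (fun t : ℝ => Real.exp (-(t^2)/2)) atTop (nhds 0) :=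
    Real.tendsto_exp_atBot.comp h0
  have := h1.div_const (Real.sqrt (2*Real.pi))
  rw [zero_div] at this
  exact this

lemma pdf_le (t : ℝ) : pdf t ≤ 1 / Real.sqrt (2 * Real.pi) := by
  unfold pdf
  gcongr
  exact Real.exp_le_one_iff.2 (by nlinarith [sq_nonneg t])

lemma Phi_continuous : Continuous stdNormalCDF := by
  have key : ∀ x : ℝ, stdNormalCDF x = stdNormalCDF 0 + ∫ t in (0:ℝ)..x, pdf t := by
    intro x
    have := intervalIntegral.integral_Iic_sub_Iic (f := pdf) (μ := volume)
      integrable_pdf.integrableOn integrable_pdf.integrableOn (a := (0:ℝ)) (b := x)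
    have hp : ∀ w, (∫ t in Set.Iic w, pdf t) = stdNormalCDF w := fun _ => rfl
    rw [hp, hp] at this
    linarith
  have hc : Continuous (fun x : ℝ => ∫ t in (0:ℝ)..x, pdf t) := by
    apply intervalIntegral.continuous_primitive
    intro a b
    exact integrable_pdf.intervalIntegrable
  have : Continuous (fun x : ℝ => stdNormalCDF 0 + ∫ t in (0:ℝ)..x, pdf t) :=
    continuous_const.add hc
  exact this.congr fun x => (key x).symm

lemma Q_continuous : Continuous Q :=
  continuous_const.sub Phi_continuous

lemma deriv_neg_pdf (t : ℝ) : HasDerivAt (fun s => -pdf s) (t * pdf t) t := by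
  have := (hasDerivAt_pdf t).neg
  exact this.congr_deriv (by ring)

lemma int_t_pdf {y : ℝ} (hy : 0 < y) : ∫ t in Set.Ioi y, t * pdf t = pdf y := by
  have h := integral_Ioi_of_hasDerivAt_of_nonneg (g := fun s => -pdf s)
    (g' := fun t => t * pdf t) (a := y) (l := 0)
    (pdf_continuous.neg.continuousWithinAt)
    (fun t _ => deriv_neg_pdf t)
    (fun t ht => mul_nonneg (le_trans hy.le (le_of_lt ht)) (pdf_pos t).le)
    (by simpa using pdf_tendsto_atTop.neg)
  rw [h]; ring

lemma integrableOn_t_pdf {y : ℝ} (hy : 0 < y) :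
    IntegrableOn (fun t => t * pdf t) (Set.Ioi y) := by
  exact integrableOn_Ioi_deriv_of_nonneg (pdf_continuous.neg.continuousWithinAt)
    (fun t _ => deriv_neg_pdf t)
    (fun t ht => mul_nonneg (le_trans hy.le (le_of_lt ht)) (pdf_pos t).le)
    (l := 0) (by have h := pdf_tendsto_atTop.neg; rw [neg_zero] at h; exact h)

lemma deriv_neg_pdf_div {t : ℝ} (ht : t ≠ 0) :
    HasDerivAt (fun s => -(pdf s / s)) ((1 + 1/t^2) * pdf t) t := by
  have h := ((hasDerivAt_pdf t).div (hasDerivAt_id t) ht).neg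
  refine h.congr_deriv ?_
  simp only [id]
  field_simp
  ring

lemma pdf_div_tendsto : Tendsto (fun t : ℝ => -(pdf t / t)) atTop (nhds 0) := by
  have := (pdf_tendsto_atTop.mul tendsto_inv_atTop_zero).neg
  simp only [zero_mul, neg_zero] at this
  apply this.congr
  intro t
  rw [div_eq_mul_inv]

lemma int_one_div_sq_pdf {y : ℝ} (hy : 0 < y) :
    ∫ t in Set.Ioi y, (1 + 1/t^2) * pdf t = pdf y / y := by
  have h := integral_Ioi_of_hasDerivAt_of_nonneg (g := fun s => -(pdf s / s))
    (g' := fun t => (1 + 1/t^2) * pdf t) (a := y) (l := 0)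
    (((pdf_continuous.continuousAt.div continuousAt_id (ne_of_gt hy)).neg).continuousWithinAt)
    (fun t ht => deriv_neg_pdf_div (ne_of_gt (lt_trans hy ht)))
    (fun t ht => mul_nonneg (by positivity) (pdf_pos t).le)
    pdf_div_tendsto
  rw [h]; ring

lemma integrableOn_one_div_sq_pdf {y : ℝ} (hy : 0 < y) :
    IntegrableOn (fun t => (1 + 1/t^2) * pdf t) (Set.Ioi y) := by
  exact integrableOn_Ioi_deriv_of_nonneg
    (((pdf_continuous.continuousAt.div continuousAt_id (ne_of_gt hy)).neg).continuousWithinAt)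
    (fun t ht => deriv_neg_pdf_div (ne_of_gt (lt_trans hy ht)))
    (fun t ht => mul_nonneg (by positivity) (pdf_pos t).le)
    (l := 0) pdf_div_tendsto

lemma mills_upper {y : ℝ} (hy : 0 < y) : Q y ≤ pdf y / y := by
  have hmono : Q y ≤ ∫ t in Set.Ioi y, (1/y) * (t * pdf t) := by
    rw [Q_eq]
    apply setIntegral_mono_on integrable_pdf.integrableOn
      (((integrableOn_t_pdf hy).const_mul _)) measurableSet_Ioi
    intro t ht
    have ht' : y < t := ht
    rw [one_div, ← mul_assoc]
    have h1 : (1:ℝ) ≤ y⁻¹ * t := by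
      rw [inv_mul_eq_div]; exact (one_le_div hy).2 ht'.le
    nlinarith [pdf_pos t]
  rw [integral_const_mul, int_t_pdf hy] at hmono
  rw [div_eq_mul_inv, mul_comm, ← one_div]
  exact hmono

lemma mills_lower {y : ℝ} (hy : 0 < y) : y * pdf y / (y ^ 2 + 1) ≤ Q y := by
  have hmono : (∫ t in Set.Ioi y, (y^2/(y^2+1)) * ((1 + 1/t^2) * pdf t)) ≤ Q y := by
    rw [Q_eq]
    apply setIntegral_mono_on (((integrableOn_one_div_sq_pdf hy).const_mul _))
      integrable_pdf.integrableOn measurableSet_Ioi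
    intro t ht
    have ht' : y < t := ht
    have htpos : 0 < t := lt_trans hy ht'
    have key : y^2/(y^2+1) * (1 + 1/t^2) ≤ 1 := by
      rw [div_mul_eq_mul_div, div_le_one (by positivity)]
      have h2 : y^2 * (1+1/t^2) = y^2 + y^2/t^2 := by ring
      rw [h2]
      have h3 : y^2/t^2 ≤ 1 := by
        rw [div_le_one (by positivity)]; nlinarith
      linarith
    calc (y^2/(y^2+1)) * ((1 + 1/t^2) * pdf t) = (y^2/(y^2+1) * (1 + 1/t^2)) * pdf t := by ring
      _ ≤ 1 * pdf t := mul_le_mul_of_nonneg_right key (pdf_pos t).le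
      _ = pdf t := one_mul _
  rw [integral_const_mul, int_one_div_sq_pdf hy] at hmono
  calc y * pdf y / (y ^ 2 + 1) = y^2/(y^2+1) * (pdf y / y) := by field_simp
    _ ≤ Q y := hmono

lemma Q_tendsto_atTop : Tendsto Q atTop (nhds 0) := by
  have hupper : ∀ᶠ y in atTop, Q y ≤ (1 / Real.sqrt (2 * Real.pi)) / y := by
    filter_upwards [eventually_gt_atTop 0] with y hy
    refine le_trans (mills_upper hy) ?_
    gcongr
    exact pdf_le y
  have hlower : ∀ᶠ y in atTop, (0:ℝ) ≤ Q y := Eventually.of_forall fun y => (Q_pos y).le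
  have htop : Tendsto (fun y : ℝ => (1 / Real.sqrt (2 * Real.pi)) / y) atTop (nhds 0) :=
    Tendsto.div_atTop tendsto_const_nhds tendsto_id
  exact tendsto_of_tendsto_of_tendsto_of_le_of_le' tendsto_const_nhds htop hlower hupper

lemma pdf_neg (t : ℝ) : pdf (-t) = pdf t := by
  unfold pdf; norm_num

lemma Phi_eq_Q_neg (y : ℝ) : stdNormalCDF y = Q (-y) := by
  have h1 : stdNormalCDF y = ∫ t in Set.Iic y, pdf t := rfl
  have h2 : (∫ t in Set.Iic y, pdf t) = ∫ t in Set.Iic y, pdf (-t) := by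
    congr 1; funext t; rw [pdf_neg]
  rw [h1, h2, integral_comp_neg_Iic, ← Q_eq]

lemma Q_tendsto_atBot : Tendsto Q atBot (nhds 1) := by
  have h : Tendsto stdNormalCDF atBot (nhds 0) := by
    have := Q_tendsto_atTop.comp (tendsto_neg_atBot_atTop : Tendsto (fun y:ℝ => -y) atBot atTop)
    apply this.congr
    intro y
    exact (Phi_eq_Q_neg y).symm
  have := h.const_sub 1
  rw [sub_zero] at this
  exact this

lemma Q_lt_one (y : ℝ) : Q y < 1 := by
  have h := Q_pos (-y)
  rw [← Phi_eq_Q_neg] at h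
  simp only [Q]; linarith

lemma neg_log_Q_pos (y : ℝ) : 0 < -Real.log (Q y) := by
  have := Real.log_neg (Q_pos y) (Q_lt_one y)
  linarith

lemma tendsto_log_div_sq : Tendsto (fun y : ℝ => Real.log y / (y^2/2)) atTop (nhds 0) := by
  have h1 : Tendsto (fun y : ℝ => Real.log y / y) atTop (nhds 0) :=
    Real.isLittleO_log_id_atTop.tendsto_div_nhds_zero
  have h2 := (h1.mul tendsto_inv_atTop_zero).mul_const (2:ℝ)
  rw [zero_mul, zero_mul] at h2
  apply h2.congr'
  filter_upwards [eventually_gt_atTop (0:ℝ)] with y hy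
  rw [eq_div_iff (by positivity : (0:ℝ) < y^2/2).ne']
  field_simp

lemma tendsto_log_sq_add_one_div_sq :
    Tendsto (fun y : ℝ => Real.log (y^2+1) / (y^2/2)) atTop (nhds 0) := by
  have hcomp : Tendsto (fun y : ℝ => y^2) atTop atTop := tendsto_pow_atTop two_ne_zero
  have h1 : Tendsto (fun u : ℝ => Real.log (u+1) / (u+1)) atTop (nhds 0) := by
    have := Real.isLittleO_log_id_atTop.tendsto_div_nhds_zero
    exact this.comp (tendsto_atTop_add_const_right atTop 1 tendsto_id)
  have h2 : Tendsto (fun u : ℝ => (u+1) / u) atTop (nhds 1) := by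
    have := (tendsto_const_nhds (x := (1:ℝ)) (f := atTop)).add tendsto_inv_atTop_zero
    rw [add_zero] at this
    apply this.congr'
    filter_upwards [eventually_gt_atTop (0:ℝ)] with u hu
    field_simp
  have h3 := (h1.mul h2).mul_const (2:ℝ)
  rw [zero_mul, zero_mul] at h3
  have h4 : Tendsto (fun u : ℝ => Real.log (u+1) / (u/2)) atTop (nhds 0) := by
    apply h3.congr'
    filter_upwards [eventually_gt_atTop (0:ℝ)] with u hu
    rw [eq_div_iff (by positivity : (0:ℝ) < u/2).ne']
    field_simp
  exact h4.comp hcomp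

lemma log_Q_lower {y : ℝ} (hy : 1 < y) :
    y^2/2 + Real.log (Real.sqrt (2*Real.pi)) + Real.log y ≤ -Real.log (Q y) := by
  have hy0 : 0 < y := by linarith
  have h := Real.log_le_log (Q_pos y) (mills_upper hy0)
  have hpdf : Real.log (pdf y / y) = -(y^2)/2 - Real.log (Real.sqrt (2*Real.pi)) - Real.log y := by
    rw [Real.log_div (ne_of_gt (pdf_pos y)) (ne_of_gt hy0), pdf,
      Real.log_div (Real.exp_ne_zero _) (Real.sqrt_ne_zero'.2 (by positivity)), Real.log_exp]
  rw [hpdf] at h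
  linarith

lemma log_Q_upper {y : ℝ} (hy : 1 < y) :
    -Real.log (Q y) ≤ y^2/2 + Real.log (Real.sqrt (2*Real.pi)) - Real.log y + Real.log (y^2+1) := by
  have hy0 : 0 < y := by linarith
  have h := Real.log_le_log (by have := pdf_pos y; positivity : (0:ℝ) < y * pdf y / (y^2+1)) (mills_lower hy0)
  have hpdf : Real.log (y * pdf y / (y^2+1)) =
      Real.log y + (-(y^2)/2 - Real.log (Real.sqrt (2*Real.pi))) - Real.log (y^2+1) := by
    rw [Real.log_div (mul_pos hy0 (pdf_pos y)).ne' (by positivity : (0:ℝ) < y^2+1).ne',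
      Real.log_mul (ne_of_gt hy0) (ne_of_gt (pdf_pos y)), pdf,
      Real.log_div (Real.exp_ne_zero _) (Real.sqrt_ne_zero'.2 (by positivity)), Real.log_exp]
  rw [hpdf] at h
  linarith

lemma R_tendsto : Tendsto (fun y : ℝ => (-Real.log (Q y)) / (y^2/2)) atTop (nhds 1) := by
  set s := Real.log (Real.sqrt (2*Real.pi)) with hs
  have hy2 : Tendsto (fun y : ℝ => s / (y^2/2)) atTop (nhds 0) := by
    apply Tendsto.div_atTop tendsto_const_nhds
    exact (tendsto_pow_atTop two_ne_zero).atTop_div_const (by norm_num)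
  have hL : Tendsto (fun y : ℝ => (y^2/2 + s + Real.log y) / (y^2/2)) atTop (nhds 1) := by
    have := (tendsto_const_nhds (x := (1:ℝ)) (f := atTop)).add (hy2.add tendsto_log_div_sq)
    rw [add_zero, add_zero] at this
    apply this.congr'
    filter_upwards [eventually_gt_atTop (0:ℝ)] with y hy
    rw [eq_comm, div_eq_iff (by positivity : (0:ℝ) < y^2/2).ne']
    field_simp
    ring
  have hU : Tendsto (fun y : ℝ => (y^2/2 + s - Real.log y + Real.log (y^2+1)) / (y^2/2))
      atTop (nhds 1) := by
    have := ((tendsto_const_nhds (x := (1:ℝ)) (f := atTop)).add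
      ((hy2.sub tendsto_log_div_sq).add tendsto_log_sq_add_one_div_sq))
    rw [sub_zero, add_zero, add_zero] at this
    apply this.congr'
    filter_upwards [eventually_gt_atTop (0:ℝ)] with y hy
    rw [eq_comm, div_eq_iff (by positivity : (0:ℝ) < y^2/2).ne']
    field_simp
    ring
  apply tendsto_of_tendsto_of_tendsto_of_le_of_le' hL hU
  · filter_upwards [eventually_gt_atTop (1:ℝ)] with y hy
    have h := log_Q_lower hy
    gcongr
  · filter_upwards [eventually_gt_atTop (1:ℝ)] with y hy
    have h := log_Q_upper hy
    gcongr

lemma F_tendsto : Tendsto (fun y : ℝ => y / Real.sqrt (2 * (-Real.log (Q y)))) atTop (nhds 1) := by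
  have h1 : Tendsto (fun y : ℝ => Real.sqrt ((-Real.log (Q y)) / (y^2/2))) atTop (nhds 1) := by
    have := (Real.continuous_sqrt.tendsto 1).comp R_tendsto
    rw [Real.sqrt_one] at this
    exact this
  have h2 := h1.inv₀ (by norm_num)
  rw [inv_one] at h2
  apply h2.congr'
  filter_upwards [eventually_gt_atTop (1:ℝ)] with y hy
  have hy0 : 0 < y := by linarith
  have hlog := neg_log_Q_pos y
  have hX : 0 < (-Real.log (Q y)) / (y^2/2) := div_pos hlog (by positivity)
  have hsX : 0 < Real.sqrt ((-Real.log (Q y)) / (y^2/2)) := Real.sqrt_pos.2 hX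
  have key : 2 * (-Real.log (Q y)) = y^2 * ((-Real.log (Q y)) / (y^2/2)) := by
    field_simp
  rw [key, Real.sqrt_mul (by positivity : (0:ℝ) ≤ y^2) _, Real.sqrt_sq hy0.le]
  rw [eq_div_iff (mul_pos hy0 hsX).ne']
  rw [mul_comm y, ← mul_assoc, inv_mul_cancel₀ (ne_of_gt hsX), one_mul]

lemma p_pos {B C : ℝ} (hB1 : 1 < B) (hC : |C| < B - 1) : 1 < B + C/B := by
  have hB0 : 0 < B := by linarith
  have h1 : -(B-1) < C := neg_lt_of_abs_lt hC
  have heq : B + C/B = (B^2 + C)/B := by field_simp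
  rw [heq, lt_div_iff₀ hB0, one_mul]
  nlinarith [sq_nonneg (B-1)]

lemma pdf_ratio {B C : ℝ} (hB0 : B ≠ 0) :
    pdf (B + C/B) = pdf B * Real.exp (-C - C^2/(2*B^2)) := by
  unfold pdf
  rw [div_mul_eq_mul_div, ← Real.exp_add]
  congr 2
  field_simp
  ring

lemma ratio_upper {B C : ℝ} (hB1 : 1 < B) (hC : |C| < B - 1) :
    Q (B + C/B) / Q B ≤ Real.exp (-C - C^2/(2*B^2)) * ((B^2+1)/(B^2+C)) := by
  have hB0 : 0 < B := by linarith
  have hp : 1 < B + C/B := p_pos hB1 hC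
  have hp0 : 0 < B + C/B := by linarith
  have hCb : -(B-1) < C := neg_lt_of_abs_lt hC
  have hBC : 0 < B^2 + C := by nlinarith
  have hpdfp := pdf_pos (B + C/B)
  have hpdfB := pdf_pos B
  have step1 : Q (B + C/B) / Q B ≤ (pdf (B + C/B) / (B + C/B)) / (B * pdf B/(B^2+1)) :=
    div_le_div₀ (by positivity) (mills_upper hp0) (by positivity) (mills_lower hB0)
  refine le_trans step1 (le_of_eq ?_)
  rw [pdf_ratio (ne_of_gt hB0)]
  have he := (Real.exp_pos (-C - C^2/(2*B^2))).ne'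
  have h1 : (B + C/B) ≠ 0 := ne_of_gt hp0
  rw [show B + C/B = (B^2+C)/B by field_simp]
  field_simp [hBC.ne', hpdfB.ne']

lemma ratio_lower {B C : ℝ} (hB1 : 1 < B) (hC : |C| < B - 1) :
    Real.exp (-C - C^2/(2*B^2)) * ((B^2+C)/(B^2+2*C+C^2/B^2+1)) ≤ Q (B + C/B) / Q B := by
  have hB0 : 0 < B := by linarith
  have hp : 1 < B + C/B := p_pos hB1 hC
  have hp0 : 0 < B + C/B := by linarith
  have hCb : -(B-1) < C := neg_lt_of_abs_lt hC
  have hBC : 0 < B^2 + C := by nlinarith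
  have hpdfp := pdf_pos (B + C/B)
  have hpdfB := pdf_pos B
  have step1 : ((B + C/B) * pdf (B + C/B)/((B + C/B)^2+1)) / (pdf B / B) ≤ Q (B + C/B) / Q B :=
    div_le_div₀ (Q_pos _).le (mills_lower hp0) (Q_pos B) (mills_upper hB0)
  refine le_trans (le_of_eq ?_) step1
  rw [pdf_ratio (ne_of_gt hB0)]
  have he := (Real.exp_pos (-C - C^2/(2*B^2))).ne'
  have h1 : (B + C/B) ≠ 0 := ne_of_gt hp0
  have hD : B^2+2*C+C^2/B^2+1 = (B+C/B)^2+1 := by field_simp; ring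
  rw [hD]
  have h2 : ((B+C/B)^2+1) ≠ 0 := by positivity
  field_simp [hpdfB.ne', h2]

end Stmt18Aux

open Stmt18Aux in
/-- The standard normal distribution lies in the Gumbel maximal domain of
attraction: with `b(t) = (1/(1-Φ))^←(t)` (left-continuous inverse) and
`a(t) = 1/√(2 log t)`, one has `t·(1 - Φ(a(t)x + b(t))) → e^{-x}` for every
`x ∈ ℝ`. -/
theorem stmt_18 (a b : ℝ → ℝ)
    (hb : ∀ t : ℝ, b t = sInf {y : ℝ | t ≤ 1 / (1 - stdNormalCDF y)})
    (ha : ∀ t : ℝ, 1 < t → a t = 1 / Real.sqrt (2 * Real.log t)) :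
    ∀ x : ℝ, Tendsto (fun t : ℝ => t * (1 - stdNormalCDF (a t * x + b t))) atTop
      (nhds (Real.exp (-x))) := by
  have hQb : ∀ t : ℝ, 1 < t → Q (b t) = 1/t := by
    intro t ht
    have ht0 : (0:ℝ) < t := by linarith
    have hp0 : (0:ℝ) < 1/t := by positivity
    have hp1 : 1/t < 1 := by rw [div_lt_one ht0]; linarith
    obtain ⟨y₀, hy₀⟩ : ∃ y₀, Q y₀ = 1/t := by
      obtain ⟨y₁, hy₁⟩ := (Q_tendsto_atBot.eventually (eventually_gt_nhds hp1)).exists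
      obtain ⟨y₂, hy₂⟩ := (Q_tendsto_atTop.eventually (eventually_lt_nhds hp0)).exists
      have h12 : y₁ ≤ y₂ := by
        by_contra h
        push_neg at h
        have := Q_strictAnti h
        linarith
      obtain ⟨y₀, -, h⟩ := intermediate_value_Icc' h12 Q_continuous.continuousOn
        ⟨hy₂.le, hy₁.le⟩
      exact ⟨y₀, h⟩
    have hset : {y : ℝ | t ≤ 1 / (1 - stdNormalCDF y)} = Set.Ici y₀ := by
      ext y
      simp only [Set.mem_setOf_eq, Set.mem_Ici]
      have hQy := Q_pos y
      have h1 : (1:ℝ) - stdNormalCDF y = Q y := rfl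
      rw [h1, le_div_iff₀ hQy]
      constructor
      · intro h
        by_contra hlt
        push_neg at hlt
        have h2 := Q_strictAnti hlt
        have h3 : Q y₀ = 1/t := hy₀
        rw [h3] at h2
        have : t * Q y > t * (1/t) := by
          apply mul_lt_mul_of_pos_left _ ht0
          linarith
        rw [mul_one_div, div_self (ne_of_gt ht0)] at this
        linarith
      · intro h
        have h2 : Q y ≤ Q y₀ := Q_strictAnti.antitone h
        rw [hy₀] at h2
        calc t * Q y ≤ t * (1/t) := by
              apply mul_le_mul_of_nonneg_left h2 ht0.le
          _ = 1 := by rw [mul_one_div, div_self (ne_of_gt ht0)]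
    rw [hb t, hset, csInf_Ici, hy₀]
  have hbtop : Tendsto b atTop atTop := by
    rw [tendsto_atTop]
    intro M
    have hQM := Q_pos M
    filter_upwards [eventually_gt_atTop (max 1 (1/Q M))] with t ht
    have ht1 : 1 < t := lt_of_le_of_lt (le_max_left _ _) ht
    have ht2 : 1/Q M < t := lt_of_le_of_lt (le_max_right _ _) ht
    have ht0 : (0:ℝ) < t := by linarith
    have hlt : Q (b t) < Q M := by
      rw [hQb t ht1]
      rw [div_lt_iff₀ ht0]
      rw [div_lt_iff₀ hQM] at ht2
      linarith [mul_comm (Q M) t ▸ ht2]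
    by_contra h
    push_neg at h
    have := Q_strictAnti h
    linarith
  have hab : Tendsto (fun t => a t * b t) atTop (nhds 1) := by
    have hcomp := F_tendsto.comp hbtop
    apply hcomp.congr'
    filter_upwards [eventually_gt_atTop (1:ℝ)] with t ht
    have hlog : Real.log t = -Real.log (Q (b t)) := by
      rw [hQb t ht, one_div, Real.log_inv, neg_neg]
    simp only [Function.comp_apply]
    rw [← hlog, ha t ht, one_div, div_eq_mul_inv]
    exact mul_comm _ _
  intro x
  set c : ℝ → ℝ := fun t => a t * b t * x with hc_def
  have hc : Tendsto c atTop (nhds x) := by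
    have := hab.mul_const x
    rw [one_mul] at this
    exact this
  have hb2 : Tendsto (fun t => 1/(b t)^2) atTop (nhds 0) :=
    Tendsto.div_atTop tendsto_const_nhds ((tendsto_pow_atTop two_ne_zero).comp hbtop)
  have hcu : Tendsto (fun t => c t * (1/(b t)^2)) atTop (nhds 0) := by
    have := hc.mul hb2
    rw [mul_zero] at this
    exact this
  -- limit of the exponential factor
  have hexp : Tendsto (fun t => Real.exp (-(c t) - (c t)^2/(2*(b t)^2))) atTop
      (nhds (Real.exp (-x))) := by
    have harg : Tendsto (fun t => -(c t) - (c t)^2/(2*(b t)^2)) atTop (nhds (-x)) := by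
      have h1 : Tendsto (fun t => (c t) * (c t * (1/(b t)^2)) / 2) atTop (nhds 0) := by
        have := (hc.mul hcu).div_const (2:ℝ)
        rw [mul_zero, zero_div] at this
        exact this
      have h2 := hc.neg.sub h1
      rw [sub_zero] at h2
      apply h2.congr
      intro t
      rcases eq_or_ne (b t) 0 with h | h
      · simp [h]
      · congr 1
        field_simp
    exact (Real.continuous_exp.tendsto (-x)).comp harg
  -- limit of the two rational factors
  have hratioG : Tendsto (fun t => ((b t)^2+1)/((b t)^2 + c t)) atTop (nhds 1) := by
    have hnum : Tendsto (fun t => 1 + 1/(b t)^2) atTop (nhds 1) := by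
      have := (tendsto_const_nhds (x := (1:ℝ)) (f := atTop)).add hb2
      rwa [add_zero] at this
    have hden : Tendsto (fun t => 1 + c t * (1/(b t)^2)) atTop (nhds 1) := by
      have := (tendsto_const_nhds (x := (1:ℝ)) (f := atTop)).add hcu
      rwa [add_zero] at this
    have hdiv := hnum.div hden one_ne_zero
    rw [div_one] at hdiv
    apply hdiv.congr'
    filter_upwards [hbtop.eventually (eventually_gt_atTop (|x|+2)),
      hc.abs.eventually (eventually_lt_nhds (by linarith [abs_nonneg x] : |x| < |x|+1))]
      with t hB hC
    simp only [Pi.div_apply]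
    have hB1 : 1 < b t := by have := abs_nonneg x; linarith
    have hB0 : 0 < b t := by linarith
    have hBC : 0 < (b t)^2 + c t := by
      have := neg_abs_le (c t)
      nlinarith
    have hden2 : 0 < 1 + c t * (1/(b t)^2) := by
      have heq2 : 1 + c t * (1/(b t)^2) = ((b t)^2 + c t) * (1/(b t)^2) := by
        field_simp
      rw [heq2]
      positivity
    rw [div_eq_div_iff (ne_of_gt hden2) (ne_of_gt hBC)]
    field_simp
    try ring
  have hratioH : Tendsto (fun t => ((b t)^2 + c t)/((b t)^2+2*(c t)+(c t)^2/(b t)^2+1))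
      atTop (nhds 1) := by
    have hnum : Tendsto (fun t => 1 + c t * (1/(b t)^2)) atTop (nhds 1) := by
      have := (tendsto_const_nhds (x := (1:ℝ)) (f := atTop)).add hcu
      rwa [add_zero] at this
    have hden : Tendsto (fun t => 1 + 2*(c t * (1/(b t)^2)) + (c t * (1/(b t)^2))^2 + 1/(b t)^2)
        atTop (nhds 1) := by
      have h1 := ((tendsto_const_nhds (x := (1:ℝ)) (f := atTop)).add
        ((hcu.const_mul 2).add (hcu.pow 2))).add hb2
      norm_num at h1
      convert h1 using 2
      ring
    have hdiv := hnum.div hden one_ne_zero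
    rw [div_one] at hdiv
    apply hdiv.congr'
    filter_upwards [hbtop.eventually (eventually_gt_atTop (|x|+2)),
      hc.abs.eventually (eventually_lt_nhds (by linarith [abs_nonneg x] : |x| < |x|+1))]
      with t hB hC
    simp only [Pi.div_apply]
    have hB1 : 1 < b t := by have := abs_nonneg x; linarith
    have hB0 : 0 < b t := by linarith
    have hC' : |c t| < b t - 1 := by have := abs_nonneg x; linarith
    have hBC : 0 < (b t)^2 + c t := by
      have := neg_abs_le (c t)
      nlinarith
    have hD : (b t)^2+2*(c t)+(c t)^2/(b t)^2+1 = (b t + c t/(b t))^2+1 := by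
      field_simp
      ring
    have hDpos : 0 < (b t)^2+2*(c t)+(c t)^2/(b t)^2+1 := by rw [hD]; positivity
    have hnum2 : 0 < 1 + c t * (1/(b t)^2) := by
      have heq2 : 1 + c t * (1/(b t)^2) = ((b t)^2 + c t) * (1/(b t)^2) := by
        field_simp
      rw [heq2]
      positivity
    have hden2 : 0 < 1 + 2*(c t * (1/(b t)^2)) + (c t * (1/(b t)^2))^2 + 1/(b t)^2 := by
      have heq2 : 1 + 2*(c t * (1/(b t)^2)) + (c t * (1/(b t)^2))^2 + 1/(b t)^2
          = ((b t)^2+2*(c t)+(c t)^2/(b t)^2+1) * (1/(b t)^2) := by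
        field_simp
      rw [heq2]
      positivity
    rw [div_eq_div_iff (ne_of_gt hden2) (ne_of_gt hDpos)]
    field_simp
    try ring
  -- squeeze
  have hG : Tendsto (fun t => Real.exp (-(c t) - (c t)^2/(2*(b t)^2)) *
      (((b t)^2+1)/((b t)^2 + c t))) atTop (nhds (Real.exp (-x))) := by
    have := hexp.mul hratioG
    rwa [mul_one] at this
  have hH : Tendsto (fun t => Real.exp (-(c t) - (c t)^2/(2*(b t)^2)) *
      (((b t)^2 + c t)/((b t)^2+2*(c t)+(c t)^2/(b t)^2+1))) atTop (nhds (Real.exp (-x))) := by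
    have := hexp.mul hratioH
    rwa [mul_one] at this
  apply tendsto_of_tendsto_of_tendsto_of_le_of_le' hH hG
  · filter_upwards [eventually_gt_atTop (1:ℝ),
      hbtop.eventually (eventually_gt_atTop (|x|+2)),
      hc.abs.eventually (eventually_lt_nhds (by linarith [abs_nonneg x] : |x| < |x|+1))]
      with t ht1 hB hC
    have hB1 : 1 < b t := by have := abs_nonneg x; linarith
    have hB0 : 0 < b t := by linarith
    have hC' : |c t| < b t - 1 := by have := abs_nonneg x; linarith
    have heq : a t * x + b t = b t + c t / (b t) := by
      rw [hc_def]
      field_simp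
      ring
    have e1 : t * (1 - stdNormalCDF (a t * x + b t)) = Q (b t + c t/(b t)) / Q (b t) := by
      have h1 : (1 : ℝ) - stdNormalCDF (a t * x + b t) = Q (b t + c t/(b t)) := by
        rw [← heq]; rfl
      rw [h1, hQb t ht1, one_div, div_inv_eq_mul, mul_comm]
    rw [e1]
    exact ratio_lower hB1 hC'
  · filter_upwards [eventually_gt_atTop (1:ℝ),
      hbtop.eventually (eventually_gt_atTop (|x|+2)),
      hc.abs.eventually (eventually_lt_nhds (by linarith [abs_nonneg x] : |x| < |x|+1))]
      with t ht1 hB hC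
    have hB1 : 1 < b t := by have := abs_nonneg x; linarith
    have hB0 : 0 < b t := by linarith
    have hC' : |c t| < b t - 1 := by have := abs_nonneg x; linarith
    have heq : a t * x + b t = b t + c t / (b t) := by
      rw [hc_def]
      field_simp
      ring
    have e1 : t * (1 - stdNormalCDF (a t * x + b t)) = Q (b t + c t/(b t)) / Q (b t) := by
      have h1 : (1 : ℝ) - stdNormalCDF (a t * x + b t) = Q (b t + c t/(b t)) := by
        rw [← heq]; rfl
      rw [h1, hQb t ht1, one_div, div_inv_eq_mul, mul_comm]
    rw [e1]
    exact ratio_upper hB1 hC'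
end
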